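/- arXiv:1510.00060 — 6 statements merged into one kernel-verified Lean document; each statement's English description precedes it below -/
import Mathlib

section
/- Let H be a complete bipartite graph whose edges are coloured with 2 colours. Then either there is a monochromatic connected component whose vertex set is all of V(H), or there exist two monochromatic connected components R and B of distinct colours such that R and B are each non-trivial (each meets both biparts), R ∪ B covers all vertices of H, and the intersection R ∩ B contains one entire bipart of H, or the colouring is split (every monochromatic component meets both biparts and each colour has exactly two components). -/
open SimpleGraph

/-- The simple graph on `α ⊕ β` whose edges are the colour-`c` edges of the
(not necessarily proper) edge-colouring `χ` of the complete bipartite graph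
with biparts `α` and `β`. -/
def colourGraph {α β : Type} {r : ℕ} (χ : α → β → Fin r) (c : Fin r) :
    SimpleGraph (α ⊕ β) where
  Adj x y := ∃ a b, χ a b = c ∧
    ((x = Sum.inl a ∧ y = Sum.inr b) ∨ (x = Sum.inr b ∧ y = Sum.inl a))
  symm := by
    constructor
    rintro x y ⟨a, b, hc, h | h⟩
    · exact ⟨a, b, hc, Or.inr ⟨h.2, h.1⟩⟩
    · exact ⟨a, b, hc, Or.inl ⟨h.2, h.1⟩⟩
  loopless := by
    constructor
    rintro x ⟨a, b, hc, ⟨h1, h2⟩ | ⟨h1, h2⟩⟩ <;> simp_all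

/-- A monochromatic component is non-trivial if it meets both biparts. -/
def Nontriv {α β : Type} {r : ℕ} (χ : α → β → Fin r) (c : Fin r)
    (K : (colourGraph χ c).ConnectedComponent) : Prop :=
  (∃ a : α, Sum.inl a ∈ K.supp) ∧ (∃ b : β, Sum.inr b ∈ K.supp)

/-- A 2-edge-colouring of a complete bipartite graph is split if all
monochromatic components are non-trivial and each colour has exactly two
monochromatic components. -/
def IsSplit {α β : Type} (χ : α → β → Fin 2) : Prop :=
  (∀ (c : Fin 2) (K : (colourGraph χ c).ConnectedComponent), Nontriv χ c K) ∧
  (∀ c : Fin 2, Nat.card ((colourGraph χ c).ConnectedComponent) = 2)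

section aux
variable {α β : Type} {χ : α → β → Fin 2}

lemma cg_mk_eq {c : Fin 2} {a : α} {b : β} (h : χ a b = c) :
    (colourGraph χ c).connectedComponentMk (Sum.inl a) =
    (colourGraph χ c).connectedComponentMk (Sum.inr b) :=
  ConnectedComponent.sound (Adj.reachable ⟨a, b, h, Or.inl ⟨rfl, rfl⟩⟩)

lemma fin2_other : ∀ x c : Fin 2, x ≠ c → x = 1 - c := by decide

lemma fin2_ne : ∀ c : Fin 2, c ≠ 1 - c := by decide

lemma colour_of_ne {c : Fin 2} {a : α} {b : β}
    (h : (colourGraph χ c).connectedComponentMk (Sum.inl a) ≠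
         (colourGraph χ c).connectedComponentMk (Sum.inr b)) :
    χ a b = 1 - c :=
  fin2_other _ _ (fun hc => h (cg_mk_eq hc))

/-- The "some component contains a whole bipart" condition. -/
def HasBig (χ : α → β → Fin 2) : Prop :=
  ∃ (c : Fin 2) (K : (colourGraph χ c).ConnectedComponent),
    (∀ b, Sum.inr b ∈ K.supp) ∨ (∀ a, Sum.inl a ∈ K.supp)

lemma nontriv_of (hP : ¬ HasBig χ) (c : Fin 2)
    (K : (colourGraph χ c).ConnectedComponent) : Nontriv χ c K := by
  obtain ⟨v, rfl⟩ := K.exists_rep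
  cases v with
  | inl a =>
    refine ⟨⟨a, rfl⟩, ?_⟩
    by_contra hb
    push_neg at hb
    refine hP ⟨1 - c, (colourGraph χ (1 - c)).connectedComponentMk (Sum.inl a),
      Or.inl fun b => ?_⟩
    have hne : (colourGraph χ c).connectedComponentMk (Sum.inl a) ≠
        (colourGraph χ c).connectedComponentMk (Sum.inr b) := by
      intro h
      exact hb b ((ConnectedComponent.mem_supp_iff _ _).mpr h.symm)
    exact (ConnectedComponent.mem_supp_iff _ _).mpr (cg_mk_eq (colour_of_ne hne)).symm
  | inr b =>
    refine ⟨?_, ⟨b, rfl⟩⟩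
    by_contra ha
    push_neg at ha
    refine hP ⟨1 - c, (colourGraph χ (1 - c)).connectedComponentMk (Sum.inr b),
      Or.inr fun a => ?_⟩
    have hne : (colourGraph χ c).connectedComponentMk (Sum.inl a) ≠
        (colourGraph χ c).connectedComponentMk (Sum.inr b) := by
      intro h
      exact ha a ((ConnectedComponent.mem_supp_iff _ _).mpr h)
    exact (ConnectedComponent.mem_supp_iff _ _).mpr (cg_mk_eq (colour_of_ne hne))

lemma no_three (hP : ¬ HasBig χ) {c : Fin 2}
    {K₁ K₂ K₃ : (colourGraph χ c).ConnectedComponent}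
    (h12 : K₁ ≠ K₂) (h13 : K₁ ≠ K₃) (h23 : K₂ ≠ K₃) : False := by
  obtain ⟨⟨a₂, ha₂⟩, _⟩ := nontriv_of hP c K₂
  obtain ⟨⟨a₃, ha₃⟩, _⟩ := nontriv_of hP c K₃
  obtain ⟨_, ⟨b₁, hb₁⟩⟩ := nontriv_of hP c K₁
  rw [ConnectedComponent.mem_supp_iff] at ha₂ ha₃ hb₁
  refine hP ⟨1 - c, (colourGraph χ (1 - c)).connectedComponentMk (Sum.inr b₁),
    Or.inl fun b => ?_⟩
  rw [ConnectedComponent.mem_supp_iff]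
  by_cases hb : (colourGraph χ c).connectedComponentMk (Sum.inr b) = K₂
  · -- use a₃ : its component K₃ differs from K₂ and K₁
    have e1 : χ a₃ b = 1 - c := colour_of_ne (by rw [ha₃, hb]; exact h23.symm)
    have e2 : χ a₃ b₁ = 1 - c := colour_of_ne (by rw [ha₃, hb₁]; exact h13.symm)
    rw [← cg_mk_eq e1, cg_mk_eq e2]
  · have e1 : χ a₂ b = 1 - c := colour_of_ne (by rw [ha₂]; exact fun h => hb h.symm)
    have e2 : χ a₂ b₁ = 1 - c := colour_of_ne (by rw [ha₂, hb₁]; exact h12.symm)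
    rw [← cg_mk_eq e1, cg_mk_eq e2]

lemma card_two (hP : ¬ HasBig χ) [Nonempty α] [Nonempty β] (c : Fin 2) :
    Nat.card ((colourGraph χ c).ConnectedComponent) = 2 := by
  obtain ⟨b₀⟩ := ‹Nonempty β›
  set K₁ := (colourGraph χ c).connectedComponentMk (Sum.inr b₀) with hK₁
  have h1 : ¬ ∀ a, Sum.inl a ∈ K₁.supp := fun h => hP ⟨c, K₁, Or.inr h⟩
  push_neg at h1
  obtain ⟨a₀, ha₀⟩ := h1
  set K₂ := (colourGraph χ c).connectedComponentMk (Sum.inl a₀) with hK₂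
  have hne : K₁ ≠ K₂ := by
    intro h
    exact ha₀ ((ConnectedComponent.mem_supp_iff _ _).mpr (hK₂ ▸ h.symm))
  rw [Nat.card_eq_two_iff]
  refine ⟨K₁, K₂, hne, ?_⟩
  apply Set.eq_univ_of_forall
  intro K
  by_contra hK
  simp only [Set.mem_insert_iff, Set.mem_singleton_iff] at hK
  push_neg at hK
  exact no_three hP hK.1 hK.2 hne

end aux

/-- For any 2-edge-colouring of a complete bipartite graph: either some
monochromatic component is spanning, or there is a V-colouring (two
non-trivial components of distinct colours covering everything whose
intersection contains a whole bipart), or the colouring is split. -/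
theorem components_of_two_coloured_complete_bipartite
    {α β : Type} [Fintype α] [Fintype β] [Nonempty α] [Nonempty β]
    (χ : α → β → Fin 2) :
    (∃ (c : Fin 2) (K : (colourGraph χ c).ConnectedComponent), K.supp = Set.univ) ∨
    (∃ (c₁ c₂ : Fin 2) (K₁ : (colourGraph χ c₁).ConnectedComponent)
        (K₂ : (colourGraph χ c₂).ConnectedComponent), c₁ ≠ c₂ ∧
        Nontriv χ c₁ K₁ ∧ Nontriv χ c₂ K₂ ∧
        K₁.supp ∪ K₂.supp = Set.univ ∧
        ((∀ a : α, Sum.inl a ∈ K₁.supp ∩ K₂.supp) ∨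
         (∀ b : β, Sum.inr b ∈ K₁.supp ∩ K₂.supp))) ∨
    IsSplit χ := by
  by_cases hP : HasBig χ
  · obtain ⟨c, K, hK | hK⟩ := hP
    · -- K contains all of the β side
      by_cases hA : ∀ a, Sum.inl a ∈ K.supp
      · exact Or.inl ⟨c, K, Set.eq_univ_of_forall fun v => by
          cases v with
          | inl a => exact hA a
          | inr b => exact hK b⟩
      · push_neg at hA
        obtain ⟨a₀, ha₀⟩ := hA
        have key : ∀ a, Sum.inl a ∉ K.supp → ∀ b, χ a b = 1 - c := by
          intro a ha b
          refine colour_of_ne fun h => ha ?_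
          rw [ConnectedComponent.mem_supp_iff, h,
            ← ConnectedComponent.mem_supp_iff]
          exact hK b
        set K' := (colourGraph χ (1 - c)).connectedComponentMk (Sum.inl a₀) with hK'
        have hK'b : ∀ b, Sum.inr b ∈ K'.supp := fun b =>
          (ConnectedComponent.mem_supp_iff _ _).mpr (cg_mk_eq (key a₀ ha₀ b)).symm
        obtain ⟨b₀⟩ := ‹Nonempty β›
        have hK'a : ∀ a, Sum.inl a ∉ K.supp → Sum.inl a ∈ K'.supp := by
          intro a ha
          rw [ConnectedComponent.mem_supp_iff, hK']
          rw [cg_mk_eq (key a ha b₀), cg_mk_eq (key a₀ ha₀ b₀)]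
        by_cases hEx : ∃ a, Sum.inl a ∈ K.supp
        · refine Or.inr (Or.inl ⟨c, 1 - c, K, K', fin2_ne c, ⟨hEx, ⟨b₀, hK b₀⟩⟩,
            ⟨⟨a₀, (ConnectedComponent.mem_supp_iff _ _).mpr hK'.symm⟩, ⟨b₀, hK'b b₀⟩⟩,
            ?_, Or.inr fun b => ⟨hK b, hK'b b⟩⟩)
          apply Set.eq_univ_of_forall
          intro v
          cases v with
          | inl a =>
            by_cases h : Sum.inl a ∈ K.supp
            · exact Or.inl h
            · exact Or.inr (hK'a a h)
          | inr b => exact Or.inl (hK b)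
        · push_neg at hEx
          refine Or.inl ⟨1 - c, K', Set.eq_univ_of_forall fun v => ?_⟩
          cases v with
          | inl a => exact hK'a a (hEx a)
          | inr b => exact hK'b b
    · -- K contains all of the α side
      by_cases hB : ∀ b, Sum.inr b ∈ K.supp
      · exact Or.inl ⟨c, K, Set.eq_univ_of_forall fun v => by
          cases v with
          | inl a => exact hK a
          | inr b => exact hB b⟩
      · push_neg at hB
        obtain ⟨b₀, hb₀⟩ := hB
        have key : ∀ b, Sum.inr b ∉ K.supp → ∀ a, χ a b = 1 - c := by
          intro b hb a
          refine colour_of_ne fun h => hb ?_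
          rw [ConnectedComponent.mem_supp_iff, ← h,
            ← ConnectedComponent.mem_supp_iff]
          exact hK a
        set K' := (colourGraph χ (1 - c)).connectedComponentMk (Sum.inr b₀) with hK'
        have hK'a : ∀ a, Sum.inl a ∈ K'.supp := fun a =>
          (ConnectedComponent.mem_supp_iff _ _).mpr (cg_mk_eq (key b₀ hb₀ a))
        obtain ⟨a₀⟩ := ‹Nonempty α›
        have hK'b : ∀ b, Sum.inr b ∉ K.supp → Sum.inr b ∈ K'.supp := by
          intro b hb
          rw [ConnectedComponent.mem_supp_iff, hK']
          rw [← cg_mk_eq (key b hb a₀), cg_mk_eq (key b₀ hb₀ a₀)]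
        by_cases hEx : ∃ b, Sum.inr b ∈ K.supp
        · refine Or.inr (Or.inl ⟨c, 1 - c, K, K', fin2_ne c, ⟨⟨a₀, hK a₀⟩, hEx⟩,
            ⟨⟨a₀, hK'a a₀⟩, ⟨b₀, (ConnectedComponent.mem_supp_iff _ _).mpr hK'.symm⟩⟩,
            ?_, Or.inl fun a => ⟨hK a, hK'a a⟩⟩)
          apply Set.eq_univ_of_forall
          intro v
          cases v with
          | inl a => exact Or.inl (hK a)
          | inr b =>
            by_cases h : Sum.inr b ∈ K.supp
            · exact Or.inl h
            · exact Or.inr (hK'b b h)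
        · push_neg at hEx
          refine Or.inl ⟨1 - c, K', Set.eq_univ_of_forall fun v => ?_⟩
          cases v with
          | inl a => exact hK'a a
          | inr b => exact hK'b b (hEx b)
  · exact Or.inr (Or.inr ⟨nontriv_of hP, card_two hP⟩)
end

section
/- For any 2-edge-colouring of a complete bipartite graph H there exist one or two non-trivial monochromatic components that together cover all vertices of H. -/
open SimpleGraph

lemma cg_adj {α β : Type} {r : ℕ} (χ : α → β → Fin r) (c : Fin r)
    {a : α} {b : β} (h : χ a b = c) :
    (colourGraph χ c).Adj (Sum.inl a) (Sum.inr b) :=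
  ⟨a, b, h, Or.inl ⟨rfl, rfl⟩⟩

lemma mem_comp {V : Type} {G : SimpleGraph V} {u v : V} (h : G.Reachable v u) :
    v ∈ (G.connectedComponentMk u).supp := by
  rw [SimpleGraph.ConnectedComponent.mem_supp_iff]
  exact SimpleGraph.ConnectedComponent.sound h

lemma not_mem_comp {V : Type} {G : SimpleGraph V} {u v : V}
    (h : v ∉ (G.connectedComponentMk u).supp) : ¬ G.Reachable v u :=
  fun hr => h (mem_comp hr)

/-- For any 2-edge-colouring of a complete bipartite graph there are one or two
non-trivial monochromatic components that together cover all vertices. -/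
theorem one_or_two_nontrivial_components_cover
    {α β : Type} [Fintype α] [Fintype β] [Nonempty α] [Nonempty β]
    (χ : α → β → Fin 2) :
    ∃ (c₁ c₂ : Fin 2) (K₁ : (colourGraph χ c₁).ConnectedComponent)
      (K₂ : (colourGraph χ c₂).ConnectedComponent),
      Nontriv χ c₁ K₁ ∧ Nontriv χ c₂ K₂ ∧ K₁.supp ∪ K₂.supp = Set.univ := by
  classical
  obtain ⟨a⟩ := ‹Nonempty α›
  obtain ⟨b⟩ := ‹Nonempty β›
  set c : Fin 2 := χ a b with hcdef
  set c' : Fin 2 := 1 - c with hc'def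
  have hswap : ∀ x : Fin 2, x ≠ c → x = c' := by
    have h2 : ∀ x y : Fin 2, x ≠ y → x = 1 - y := by decide
    intro x hx; exact h2 x c hx
  have hswap' : ∀ x : Fin 2, x ≠ c' → x = c := by
    have h2 : ∀ x y : Fin 2, x ≠ 1 - y → x = y := by decide
    intro x hx; exact h2 x c hx
  set K : (colourGraph χ c).ConnectedComponent :=
    (colourGraph χ c).connectedComponentMk (Sum.inl a) with hKdef
  have haK : Sum.inl a ∈ K.supp := mem_comp (Reachable.refl _)
  have hab : χ a b = c := hcdef.symm
  have hbK : Sum.inr b ∈ K.supp := mem_comp (cg_adj χ c hab).symm.reachable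
  -- vertices outside K
  have memK_inl : ∀ a', χ a' b = c → Sum.inl a' ∈ K.supp := fun a' h =>
    mem_comp ((cg_adj χ c h).reachable.trans (cg_adj χ c hab).symm.reachable)
  have memK_inr : ∀ b', χ a b' = c → Sum.inr b' ∈ K.supp := fun b' h =>
    mem_comp (cg_adj χ c h).symm.reachable
  have hA : ∀ a', Sum.inl a' ∉ K.supp → χ a' b = c' := fun a' h =>
    hswap _ (fun hc => h (memK_inl a' hc))
  have hB : ∀ b', Sum.inr b' ∉ K.supp → χ a b' = c' := fun b' h =>
    hswap _ (fun hc => h (memK_inr b' hc))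
  by_cases hEA : ∃ a', Sum.inl a' ∉ K.supp
  · obtain ⟨a₀, ha₀⟩ := hEA
    by_cases hEB : ∃ b', Sum.inr b' ∉ K.supp
    · obtain ⟨b₀, hb₀⟩ := hEB
      by_cases hcross : ∃ a' b', Sum.inl a' ∉ K.supp ∧ Sum.inr b' ∉ K.supp ∧ χ a' b' = c'
      · -- some c'-edge between the two outside sets: one big c'-component
        obtain ⟨a₁, b₁, ha₁, hb₁, hc₁⟩ := hcross
        set K₂ : (colourGraph χ c').ConnectedComponent :=
          (colourGraph χ c').connectedComponentMk (Sum.inl a) with hK₂def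
        have hreach_b : (colourGraph χ c').Reachable (Sum.inr b) (Sum.inl a) :=
          ((cg_adj χ c' (hA a₁ ha₁)).symm.reachable.trans
            ((cg_adj χ c' hc₁).reachable.trans
              (cg_adj χ c' (hB b₁ hb₁)).symm.reachable))
        have hbK₂ : Sum.inr b ∈ K₂.supp := mem_comp hreach_b
        have haK₂ : Sum.inl a ∈ K₂.supp := mem_comp (Reachable.refl _)
        refine ⟨c, c', K, K₂, ⟨⟨a, haK⟩, ⟨b, hbK⟩⟩, ⟨⟨a, haK₂⟩, ⟨b, hbK₂⟩⟩, ?_⟩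
        ext v
        simp only [Set.mem_union, Set.mem_univ, iff_true]
        rcases v with a'' | b''
        · by_cases h : Sum.inl a'' ∈ K.supp
          · exact Or.inl h
          · exact Or.inr (mem_comp
              ((cg_adj χ c' (hA a'' h)).reachable.trans hreach_b))
        · by_cases h : Sum.inr b'' ∈ K.supp
          · exact Or.inl h
          · exact Or.inr (mem_comp (cg_adj χ c' (hB b'' h)).symm.reachable)
      · -- all outside-outside edges have colour c
        push_neg at hcross
        have hout : ∀ a' b', Sum.inl a' ∉ K.supp → Sum.inr b' ∉ K.supp → χ a' b' = c :=
          fun a' b' h1 h2 => hswap' _ (hcross a' b' h1 h2)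
        set K₂ : (colourGraph χ c).ConnectedComponent :=
          (colourGraph χ c).connectedComponentMk (Sum.inl a₀) with hK₂def
        have ha₀K₂ : Sum.inl a₀ ∈ K₂.supp := mem_comp (Reachable.refl _)
        have hb₀K₂ : Sum.inr b₀ ∈ K₂.supp :=
          mem_comp (cg_adj χ c (hout a₀ b₀ ha₀ hb₀)).symm.reachable
        refine ⟨c, c, K, K₂, ⟨⟨a, haK⟩, ⟨b, hbK⟩⟩, ⟨⟨a₀, ha₀K₂⟩, ⟨b₀, hb₀K₂⟩⟩, ?_⟩
        ext v
        simp only [Set.mem_union, Set.mem_univ, iff_true]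
        rcases v with a'' | b''
        · by_cases h : Sum.inl a'' ∈ K.supp
          · exact Or.inl h
          · exact Or.inr (mem_comp
              ((cg_adj χ c (hout a'' b₀ h hb₀)).reachable.trans
                (cg_adj χ c (hout a₀ b₀ ha₀ hb₀)).symm.reachable))
        · by_cases h : Sum.inr b'' ∈ K.supp
          · exact Or.inl h
          · exact Or.inr (mem_comp (cg_adj χ c (hout a₀ b'' ha₀ h)).symm.reachable)
    · -- all of β is in K; the α-vertices outside K attach to b in colour c'
      push_neg at hEB
      set K₂ : (colourGraph χ c').ConnectedComponent :=
        (colourGraph χ c').connectedComponentMk (Sum.inr b) with hK₂def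
      have hbK₂ : Sum.inr b ∈ K₂.supp := mem_comp (Reachable.refl _)
      have ha₀K₂ : Sum.inl a₀ ∈ K₂.supp := mem_comp (cg_adj χ c' (hA a₀ ha₀)).reachable
      refine ⟨c, c', K, K₂, ⟨⟨a, haK⟩, ⟨b, hbK⟩⟩, ⟨⟨a₀, ha₀K₂⟩, ⟨b, hbK₂⟩⟩, ?_⟩
      ext v
      simp only [Set.mem_union, Set.mem_univ, iff_true]
      rcases v with a'' | b''
      · by_cases h : Sum.inl a'' ∈ K.supp
        · exact Or.inl h
        · exact Or.inr (mem_comp (cg_adj χ c' (hA a'' h)).reachable)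
      · exact Or.inl (hEB b'')
  · -- all of α in K
    push_neg at hEA
    by_cases hEB : ∃ b', Sum.inr b' ∉ K.supp
    · obtain ⟨b₀, hb₀⟩ := hEB
      set K₂ : (colourGraph χ c').ConnectedComponent :=
        (colourGraph χ c').connectedComponentMk (Sum.inl a) with hK₂def
      have haK₂ : Sum.inl a ∈ K₂.supp := mem_comp (Reachable.refl _)
      have hb₀K₂ : Sum.inr b₀ ∈ K₂.supp := mem_comp (cg_adj χ c' (hB b₀ hb₀)).symm.reachable
      refine ⟨c, c', K, K₂, ⟨⟨a, haK⟩, ⟨b, hbK⟩⟩, ⟨⟨a, haK₂⟩, ⟨b₀, hb₀K₂⟩⟩, ?_⟩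
      ext v
      simp only [Set.mem_union, Set.mem_univ, iff_true]
      rcases v with a'' | b''
      · exact Or.inl (hEA a'')
      · by_cases h : Sum.inr b'' ∈ K.supp
        · exact Or.inl h
        · exact Or.inr (mem_comp (cg_adj χ c' (hB b'' h)).symm.reachable)
    · push_neg at hEB
      refine ⟨c, c, K, K, ⟨⟨a, haK⟩, ⟨b, hbK⟩⟩, ⟨⟨a, haK⟩, ⟨b, hbK⟩⟩, ?_⟩
      ext v
      simp only [Set.mem_union, Set.mem_univ, iff_true]
      rcases v with a'' | b''
      · exact Or.inl (hEA a'')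
      · exact Or.inl (hEB b'')
end

section
/- Let the edges of a complete bipartite graph H be coloured with three colours (red, green, blue) such that each colour class has at least four non-trivial monochromatic components. Then there exist three monochromatic components whose union contains every vertex of H. -/
open SimpleGraph

namespace ThreeCover

variable {α β : Type} (χ : α → β → Fin 3)

/-- the component of a vertex in colour `c` -/
def cc (c : Fin 3) (v : α ⊕ β) : (colourGraph χ c).ConnectedComponent :=
  (colourGraph χ c).connectedComponentMk v

lemma edge_cc {a : α} {b : β} {c : Fin 3} (h : χ a b = c) :
    cc χ c (Sum.inl a) = cc χ c (Sum.inr b) :=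
  ConnectedComponent.sound (Adj.reachable ⟨a, b, h, Or.inl ⟨rfl, rfl⟩⟩)

lemma mem_supp_iff_cc {c : Fin 3} {v : α ⊕ β} {K : (colourGraph χ c).ConnectedComponent} :
    v ∈ K.supp ↔ cc χ c v = K :=
  SimpleGraph.ConnectedComponent.mem_supp_iff K v

-- decidable helpers
lemma fin3_cases : ∀ (c c' z : Fin 3), c ≠ c' → c ≠ 2 → c' ≠ 2 → z ≠ 2 → z ≠ c → z = c' := by
  decide

lemma pigeon6 : ∀ (a b c d e f : Fin 4), (a ≠ b ∧ c ≠ d ∧ e ≠ f ∧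
    a ≠ c ∧ a ≠ d ∧ b ≠ c ∧ b ≠ d ∧ a ≠ e ∧ a ≠ f ∧ b ≠ e ∧ b ≠ f ∧
    c ≠ e ∧ c ≠ f ∧ d ≠ e ∧ d ≠ f) → False := by
  decide

lemma exists3 : ∀ i₀ : Fin 4, ∃ p q r : Fin 4,
    p ≠ q ∧ p ≠ r ∧ q ≠ r ∧ p ≠ i₀ ∧ q ≠ i₀ ∧ r ≠ i₀ := by decide

lemma exists_ne3 : ∀ a b c : Fin 4, ∃ i : Fin 4, i ≠ a ∧ i ≠ b ∧ i ≠ c := by decide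

lemma exists_ne2 : ∀ a b : Fin 4, ∃ i : Fin 4, i ≠ a ∧ i ≠ b := by decide

/-- turn the hypothesis tuple into a function with injectivity -/
lemma tuple4 {γ : Type*} {P : γ → Prop}
    (hK : ∃ K₁ K₂ K₃ K₄ : γ, K₁ ≠ K₂ ∧ K₁ ≠ K₃ ∧ K₁ ≠ K₄ ∧ K₂ ≠ K₃ ∧ K₂ ≠ K₄ ∧ K₃ ≠ K₄ ∧
      P K₁ ∧ P K₂ ∧ P K₃ ∧ P K₄) :
    ∃ L : Fin 4 → γ, (∀ i j, L i = L j → i = j) ∧ ∀ i, P (L i) := by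
  obtain ⟨K₁, K₂, K₃, K₄, h12, h13, h14, h23, h24, h34, p1, p2, p3, p4⟩ := hK
  refine ⟨![K₁, K₂, K₃, K₄], ?_, ?_⟩
  · intro i j hij
    fin_cases i <;> fin_cases j <;> simp_all
  · intro i; fin_cases i <;> simp_all

lemma at_most_one {M : Fin 4 → (colourGraph χ 2).ConnectedComponent}
    (hMinj : ∀ i j, M i = M j → i = j) (v : α ⊕ β) :
    ∃ i₀ : Fin 4, ∀ i, i ≠ i₀ → cc χ 2 v ≠ M i := by
  by_cases h : ∃ i, cc χ 2 v = M i
  · obtain ⟨i₀, h₀⟩ := h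
    exact ⟨i₀, fun i hi hc => hi (hMinj i i₀ (hc.symm.trans h₀))⟩
  · exact ⟨0, fun i _ hc => h ⟨i, hc⟩⟩

end ThreeCover

-- appended to draft for testing
namespace ThreeCover

variable {α β : Type} (χ : α → β → Fin 3)

/-- abbreviation for the hypothesis shape for colour `c` -/
def FourComps (c : Fin 3) : Prop :=
  ∃ K₁ K₂ K₃ K₄ : (colourGraph χ c).ConnectedComponent,
    K₁ ≠ K₂ ∧ K₁ ≠ K₃ ∧ K₁ ≠ K₄ ∧ K₂ ≠ K₃ ∧ K₂ ≠ K₄ ∧ K₃ ≠ K₄ ∧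
    Nontriv χ c K₁ ∧ Nontriv χ c K₂ ∧ Nontriv χ c K₃ ∧ Nontriv χ c K₄

/-- Key lemma: there is a nontrivial colour-`c` component avoiding all the
`x`-anchors of the base-colour (2) system. -/
lemma FX (c c' : Fin 3) (hcc' : c ≠ c') (hc2 : c ≠ 2) (hc'2 : c' ≠ 2)
    (M : Fin 4 → (colourGraph χ 2).ConnectedComponent)
    (hMinj : ∀ i j, M i = M j → i = j)
    (x : Fin 4 → α) (hx : ∀ i, Sum.inl (x i) ∈ (M i).supp)
    (hc : FourComps χ c) (hc' : FourComps χ c') :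
    ∃ (N : (colourGraph χ c).ConnectedComponent) (b : β),
      Sum.inr b ∈ N.supp ∧ ∀ i, Sum.inl (x i) ∉ N.supp := by
  by_contra H
  push_neg at H
  -- H : ∀ N b, Sum.inr b ∈ N.supp → ∃ i, Sum.inl (x i) ∈ N.supp
  obtain ⟨L, hLinj, hLnt⟩ := tuple4 hc
  -- each L t contains an anchor
  have hg : ∀ t, ∃ i, Sum.inl (x i) ∈ (L t).supp := by
    intro t
    obtain ⟨b, hb⟩ := (hLnt t).2
    exact H (L t) b hb
  choose g hg using hg
  have hginj : Function.Injective g := by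
    intro t u htu
    apply hLinj
    have h1 : cc χ c (Sum.inl (x (g t))) = L t := (mem_supp_iff_cc χ).mp (hg t)
    have h2 : cc χ c (Sum.inl (x (g u))) = L u := (mem_supp_iff_cc χ).mp (hg u)
    rw [← h1, ← h2, htu]
  have hgsurj : Function.Surjective g := Finite.surjective_of_injective hginj
  -- distinct anchors lie in distinct colour-c components
  have xdist : ∀ i j, i ≠ j → cc χ c (Sum.inl (x i)) ≠ cc χ c (Sum.inl (x j)) := by
    intro i j hij
    obtain ⟨t, rfl⟩ := hgsurj i
    obtain ⟨u, rfl⟩ := hgsurj j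
    have h1 : cc χ c (Sum.inl (x (g t))) = L t := (mem_supp_iff_cc χ).mp (hg t)
    have h2 : cc χ c (Sum.inl (x (g u))) = L u := (mem_supp_iff_cc χ).mp (hg u)
    rw [h1, h2]
    intro hLtu
    exact hij (congrArg g (hLinj _ _ hLtu))
  -- now colour c' components: each contains two anchors in colour c'
  obtain ⟨Q, hQinj, hQnt⟩ := tuple4 hc'
  have getpair : ∀ t, ∃ i j, i ≠ j ∧
      cc χ c' (Sum.inl (x i)) = Q t ∧ cc χ c' (Sum.inl (x j)) = Q t := by
    intro t
    obtain ⟨b, hb⟩ := (hQnt t).2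
    have hbQ : cc χ c' (Sum.inr b) = Q t := (mem_supp_iff_cc χ).mp hb
    obtain ⟨i₀, hi₀⟩ := at_most_one χ hMinj (Sum.inr b)
    obtain ⟨p, q, r, hpq, hpr, hqr, hp0, hq0, hr0⟩ := exists3 i₀
    -- values of χ (x i) b for i ≠ i₀ : not 2, and at most one equals c
    have hval : ∀ i, i ≠ i₀ → χ (x i) b = c ∨ χ (x i) b = c' := by
      intro i hi
      have hne2 : χ (x i) b ≠ 2 := by
        intro h2'
        have : cc χ 2 (Sum.inl (x i)) = cc χ 2 (Sum.inr b) := edge_cc χ h2'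
        have hxi : cc χ 2 (Sum.inl (x i)) = M i := (mem_supp_iff_cc χ).mp (hx i)
        exact hi₀ i hi (by rw [← this, hxi])
      by_cases hcase : χ (x i) b = c
      · exact Or.inl hcase
      · exact Or.inr (fin3_cases c c' _ hcc' hc2 hc'2 hne2 hcase)
    have hnotc : ∀ i j, i ≠ j → ¬(χ (x i) b = c ∧ χ (x j) b = c) := by
      rintro i j hij ⟨hi, hj⟩
      have h1 : cc χ c (Sum.inl (x i)) = cc χ c (Sum.inr b) := edge_cc χ hi
      have h2 : cc χ c (Sum.inl (x j)) = cc χ c (Sum.inr b) := edge_cc χ hj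
      exact xdist i j hij (h1.trans h2.symm)
    have mk : ∀ i, χ (x i) b = c' → cc χ c' (Sum.inl (x i)) = Q t := by
      intro i hi
      rw [← hbQ]; exact edge_cc χ hi
    rcases hval p hp0 with hp | hp <;> rcases hval q hq0 with hq | hq <;>
      rcases hval r hr0 with hr | hr
    · exact absurd ⟨hp, hq⟩ (hnotc p q hpq)
    · exact absurd ⟨hp, hq⟩ (hnotc p q hpq)
    · exact absurd ⟨hp, hr⟩ (hnotc p r hpr)
    · exact ⟨q, r, hqr, mk q hq, mk r hr⟩
    · exact absurd ⟨hq, hr⟩ (hnotc q r hqr)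
    · exact ⟨p, r, hpr, mk p hp, mk r hr⟩
    · exact ⟨p, q, hpq, mk p hp, mk q hq⟩
    · exact ⟨p, q, hpq, mk p hp, mk q hq⟩
  obtain ⟨a1, b1, hab1, ha1, hb1⟩ := getpair 0
  obtain ⟨a2, b2, hab2, ha2, hb2⟩ := getpair 1
  obtain ⟨a3, b3, hab3, ha3, hb3⟩ := getpair 2
  have hdiff : ∀ {i j : Fin 4} {t u : Fin 4},
      cc χ c' (Sum.inl (x i)) = Q t → cc χ c' (Sum.inl (x j)) = Q u → t ≠ u → i ≠ j := by
    intro i j t u h1 h2 htu heq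
    subst heq
    exact htu (hQinj t u (h1.symm.trans h2))
  have h01 : (0 : Fin 4) ≠ 1 := by decide
  have h02 : (0 : Fin 4) ≠ 2 := by decide
  have h12 : (1 : Fin 4) ≠ 2 := by decide
  exact pigeon6 a1 b1 a2 b2 a3 b3
    ⟨hab1, hab2, hab3,
     hdiff ha1 ha2 h01, hdiff ha1 hb2 h01, hdiff hb1 ha2 h01, hdiff hb1 hb2 h01,
     hdiff ha1 ha3 h02, hdiff ha1 hb3 h02, hdiff hb1 ha3 h02, hdiff hb1 hb3 h02,
     hdiff ha2 ha3 h12, hdiff ha2 hb3 h12, hdiff hb2 ha3 h12, hdiff hb2 hb3 h12⟩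

end ThreeCover

namespace ThreeCover

variable {α β : Type} (χ : α → β → Fin 3)

lemma FY (c c' : Fin 3) (hcc' : c ≠ c') (hc2 : c ≠ 2) (hc'2 : c' ≠ 2)
    (M : Fin 4 → (colourGraph χ 2).ConnectedComponent)
    (hMinj : ∀ i j, M i = M j → i = j)
    (y : Fin 4 → β) (hy : ∀ j, Sum.inr (y j) ∈ (M j).supp)
    (hc : FourComps χ c) (hc' : FourComps χ c') :
    ∃ (N : (colourGraph χ c).ConnectedComponent) (a : α),
      Sum.inl a ∈ N.supp ∧ ∀ j, Sum.inr (y j) ∉ N.supp := by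
  by_contra H
  push_neg at H
  obtain ⟨L, hLinj, hLnt⟩ := tuple4 hc
  have hg : ∀ t, ∃ j, Sum.inr (y j) ∈ (L t).supp := by
    intro t
    obtain ⟨a, ha⟩ := (hLnt t).1
    exact H (L t) a ha
  choose g hg using hg
  have hginj : Function.Injective g := by
    intro t u htu
    apply hLinj
    have h1 : cc χ c (Sum.inr (y (g t))) = L t := (mem_supp_iff_cc χ).mp (hg t)
    have h2 : cc χ c (Sum.inr (y (g u))) = L u := (mem_supp_iff_cc χ).mp (hg u)
    rw [← h1, ← h2, htu]
  have hgsurj : Function.Surjective g := Finite.surjective_of_injective hginj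
  have ydist : ∀ i j, i ≠ j → cc χ c (Sum.inr (y i)) ≠ cc χ c (Sum.inr (y j)) := by
    intro i j hij
    obtain ⟨t, rfl⟩ := hgsurj i
    obtain ⟨u, rfl⟩ := hgsurj j
    have h1 : cc χ c (Sum.inr (y (g t))) = L t := (mem_supp_iff_cc χ).mp (hg t)
    have h2 : cc χ c (Sum.inr (y (g u))) = L u := (mem_supp_iff_cc χ).mp (hg u)
    rw [h1, h2]
    intro hLtu
    exact hij (congrArg g (hLinj _ _ hLtu))
  obtain ⟨Q, hQinj, hQnt⟩ := tuple4 hc'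
  have getpair : ∀ t, ∃ i j, i ≠ j ∧
      cc χ c' (Sum.inr (y i)) = Q t ∧ cc χ c' (Sum.inr (y j)) = Q t := by
    intro t
    obtain ⟨a, ha⟩ := (hQnt t).1
    have haQ : cc χ c' (Sum.inl a) = Q t := (mem_supp_iff_cc χ).mp ha
    obtain ⟨i₀, hi₀⟩ := at_most_one χ hMinj (Sum.inl a)
    obtain ⟨p, q, r, hpq, hpr, hqr, hp0, hq0, hr0⟩ := exists3 i₀
    have hval : ∀ i, i ≠ i₀ → χ a (y i) = c ∨ χ a (y i) = c' := by
      intro i hi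
      have hne2 : χ a (y i) ≠ 2 := by
        intro h2'
        have h3 : cc χ 2 (Sum.inl a) = cc χ 2 (Sum.inr (y i)) := edge_cc χ h2'
        have hyi : cc χ 2 (Sum.inr (y i)) = M i := (mem_supp_iff_cc χ).mp (hy i)
        exact hi₀ i hi (by rw [h3, hyi])
      by_cases hcase : χ a (y i) = c
      · exact Or.inl hcase
      · exact Or.inr (fin3_cases c c' _ hcc' hc2 hc'2 hne2 hcase)
    have hnotc : ∀ i j, i ≠ j → ¬(χ a (y i) = c ∧ χ a (y j) = c) := by
      rintro i j hij ⟨hi, hj⟩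
      have h1 : cc χ c (Sum.inl a) = cc χ c (Sum.inr (y i)) := edge_cc χ hi
      have h2 : cc χ c (Sum.inl a) = cc χ c (Sum.inr (y j)) := edge_cc χ hj
      exact ydist i j hij (h1.symm.trans h2)
    have mk : ∀ i, χ a (y i) = c' → cc χ c' (Sum.inr (y i)) = Q t := by
      intro i hi
      rw [← haQ]; exact (edge_cc χ hi).symm
    rcases hval p hp0 with hp | hp <;> rcases hval q hq0 with hq | hq <;>
      rcases hval r hr0 with hr | hr
    · exact absurd ⟨hp, hq⟩ (hnotc p q hpq)
    · exact absurd ⟨hp, hq⟩ (hnotc p q hpq)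
    · exact absurd ⟨hp, hr⟩ (hnotc p r hpr)
    · exact ⟨q, r, hqr, mk q hq, mk r hr⟩
    · exact absurd ⟨hq, hr⟩ (hnotc q r hqr)
    · exact ⟨p, r, hpr, mk p hp, mk r hr⟩
    · exact ⟨p, q, hpq, mk p hp, mk q hq⟩
    · exact ⟨p, q, hpq, mk p hp, mk q hq⟩
  obtain ⟨a1, b1, hab1, ha1, hb1⟩ := getpair 0
  obtain ⟨a2, b2, hab2, ha2, hb2⟩ := getpair 1
  obtain ⟨a3, b3, hab3, ha3, hb3⟩ := getpair 2
  have hdiff : ∀ {i j : Fin 4} {t u : Fin 4},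
      cc χ c' (Sum.inr (y i)) = Q t → cc χ c' (Sum.inr (y j)) = Q u → t ≠ u → i ≠ j := by
    intro i j t u h1 h2 htu heq
    subst heq
    exact htu (hQinj t u (h1.symm.trans h2))
  have h01 : (0 : Fin 4) ≠ 1 := by decide
  have h02 : (0 : Fin 4) ≠ 2 := by decide
  have h12 : (1 : Fin 4) ≠ 2 := by decide
  exact pigeon6 a1 b1 a2 b2 a3 b3
    ⟨hab1, hab2, hab3,
     hdiff ha1 ha2 h01, hdiff ha1 hb2 h01, hdiff hb1 ha2 h01, hdiff hb1 hb2 h01,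
     hdiff ha1 ha3 h02, hdiff ha1 hb3 h02, hdiff hb1 ha3 h02, hdiff hb1 hb3 h02,
     hdiff ha2 ha3 h12, hdiff ha2 hb3 h12, hdiff hb2 ha3 h12, hdiff hb2 hb3 h12⟩

end ThreeCover

open ThreeCover

/-- If every colour of a 3-edge-coloured complete bipartite graph has at least
four non-trivial monochromatic components, then three monochromatic components
together cover all vertices. -/
theorem three_components_cover_of_four_nontrivial
    {α β : Type} [Fintype α] [Fintype β] (χ : α → β → Fin 3)
    (h : ∀ c : Fin 3, ∃ K₁ K₂ K₃ K₄ : (colourGraph χ c).ConnectedComponent,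
      K₁ ≠ K₂ ∧ K₁ ≠ K₃ ∧ K₁ ≠ K₄ ∧ K₂ ≠ K₃ ∧ K₂ ≠ K₄ ∧ K₃ ≠ K₄ ∧
      Nontriv χ c K₁ ∧ Nontriv χ c K₂ ∧ Nontriv χ c K₃ ∧ Nontriv χ c K₄) :
    ∃ (c₁ c₂ c₃ : Fin 3) (K₁ : (colourGraph χ c₁).ConnectedComponent)
      (K₂ : (colourGraph χ c₂).ConnectedComponent)
      (K₃ : (colourGraph χ c₃).ConnectedComponent),
      K₁.supp ∪ K₂.supp ∪ K₃.supp = Set.univ := by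
  classical
  obtain ⟨M, hMinj, hMnt⟩ := tuple4 (h 2)
  choose x hx using fun i => (hMnt i).1
  choose y hy using fun i => (hMnt i).2
  obtain ⟨N₀, b₀, hb₀, hN₀x⟩ :=
    FX χ 0 1 (by decide) (by decide) (by decide) M hMinj x hx (h 0) (h 1)
  obtain ⟨P₀, β₀, hβ₀, hP₀x⟩ :=
    FX χ 1 0 (by decide) (by decide) (by decide) M hMinj x hx (h 1) (h 0)
  obtain ⟨Nt₀, a₀, ha₀, hNt₀y⟩ :=
    FY χ 0 1 (by decide) (by decide) (by decide) M hMinj y hy (h 0) (h 1)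
  obtain ⟨P'₀, α₀, hα₀, hP'₀y⟩ :=
    FY χ 1 0 (by decide) (by decide) (by decide) M hMinj y hy (h 1) (h 0)
  -- the four big classes
  obtain ⟨iE, hiE⟩ := at_most_one χ hMinj (Sum.inr b₀)
  have hE : ∀ i, i ≠ iE → cc χ 1 (Sum.inl (x i)) = cc χ 1 (Sum.inr b₀) := by
    intro i hi
    have hne2 : χ (x i) b₀ ≠ 2 := by
      intro h2'
      have he := edge_cc χ h2'
      have hxi : cc χ 2 (Sum.inl (x i)) = M i := (mem_supp_iff_cc χ).mp (hx i)
      exact hiE i hi (by rw [← he, hxi])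
    have hne0 : χ (x i) b₀ ≠ 0 := by
      intro h0'
      have he := edge_cc χ h0'
      have hb : cc χ 0 (Sum.inr b₀) = N₀ := (mem_supp_iff_cc χ).mp hb₀
      exact hN₀x i ((mem_supp_iff_cc χ).mpr (he.trans hb))
    exact edge_cc χ (fin3_cases 0 1 _ (by decide) (by decide) (by decide) hne2 hne0)
  obtain ⟨i1, hi1⟩ := at_most_one χ hMinj (Sum.inr β₀)
  have hNstar : ∀ i, i ≠ i1 → cc χ 0 (Sum.inl (x i)) = cc χ 0 (Sum.inr β₀) := by
    intro i hi
    have hne2 : χ (x i) β₀ ≠ 2 := by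
      intro h2'
      have he := edge_cc χ h2'
      have hxi : cc χ 2 (Sum.inl (x i)) = M i := (mem_supp_iff_cc χ).mp (hx i)
      exact hi1 i hi (by rw [← he, hxi])
    have hne1 : χ (x i) β₀ ≠ 1 := by
      intro h1'
      have he := edge_cc χ h1'
      have hb : cc χ 1 (Sum.inr β₀) = P₀ := (mem_supp_iff_cc χ).mp hβ₀
      exact hP₀x i ((mem_supp_iff_cc χ).mpr (he.trans hb))
    exact edge_cc χ (fin3_cases 1 0 _ (by decide) (by decide) (by decide) hne2 hne1)
  obtain ⟨jE, hjE⟩ := at_most_one χ hMinj (Sum.inl a₀)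
  have hEtil : ∀ j, j ≠ jE → cc χ 1 (Sum.inr (y j)) = cc χ 1 (Sum.inl a₀) := by
    intro j hj
    have hne2 : χ a₀ (y j) ≠ 2 := by
      intro h2'
      have he := edge_cc χ h2'
      have hyj : cc χ 2 (Sum.inr (y j)) = M j := (mem_supp_iff_cc χ).mp (hy j)
      exact hjE j hj (by rw [he, hyj])
    have hne0 : χ a₀ (y j) ≠ 0 := by
      intro h0'
      have he := edge_cc χ h0'
      have ha : cc χ 0 (Sum.inl a₀) = Nt₀ := (mem_supp_iff_cc χ).mp ha₀
      exact hNt₀y j ((mem_supp_iff_cc χ).mpr (he.symm.trans ha))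
    exact (edge_cc χ (fin3_cases 0 1 _ (by decide) (by decide) (by decide) hne2 hne0)).symm
  obtain ⟨j1, hj1⟩ := at_most_one χ hMinj (Sum.inl α₀)
  have hNtil : ∀ j, j ≠ j1 → cc χ 0 (Sum.inr (y j)) = cc χ 0 (Sum.inl α₀) := by
    intro j hj
    have hne2 : χ α₀ (y j) ≠ 2 := by
      intro h2'
      have he := edge_cc χ h2'
      have hyj : cc χ 2 (Sum.inr (y j)) = M j := (mem_supp_iff_cc χ).mp (hy j)
      exact hj1 j hj (by rw [he, hyj])
    have hne1 : χ α₀ (y j) ≠ 1 := by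
      intro h1'
      have he := edge_cc χ h1'
      have ha : cc χ 1 (Sum.inl α₀) = P'₀ := (mem_supp_iff_cc χ).mp hα₀
      exact hP'₀y j ((mem_supp_iff_cc χ).mpr (he.symm.trans ha))
    exact (edge_cc χ (fin3_cases 1 0 _ (by decide) (by decide) (by decide) hne2 hne1)).symm
  -- coverage of B-vertices
  have covB : ∀ v : β, cc χ 0 (Sum.inr v) = cc χ 0 (Sum.inr β₀) ∨
      cc χ 1 (Sum.inr v) = cc χ 1 (Sum.inr b₀) := by
    intro v
    obtain ⟨i₀, hi₀⟩ := at_most_one χ hMinj (Sum.inr v)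
    obtain ⟨p, q, r, hpq, hpr, hqr, hp0, hq0, hr0⟩ := exists3 i₀
    have hval : ∀ i, i ≠ i₀ → χ (x i) v = 0 ∨ χ (x i) v = 1 := by
      intro i hi
      have hne2 : χ (x i) v ≠ 2 := by
        intro h2'
        have he := edge_cc χ h2'
        have hxi : cc χ 2 (Sum.inl (x i)) = M i := (mem_supp_iff_cc χ).mp (hx i)
        exact hi₀ i hi (by rw [← he, hxi])
      by_cases hcase : χ (x i) v = 0
      · exact Or.inl hcase
      · exact Or.inr (fin3_cases 0 1 _ (by decide) (by decide) (by decide) hne2 hcase)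
    have useN : ∀ i j, i ≠ j → χ (x i) v = 0 → χ (x j) v = 0 →
        cc χ 0 (Sum.inr v) = cc χ 0 (Sum.inr β₀) := by
      intro i j hij hiv hjv
      by_cases hii : i = i1
      · have : j ≠ i1 := fun hjj => hij (hii.trans hjj.symm)
        rw [← edge_cc χ hjv]
        exact hNstar j this
      · rw [← edge_cc χ hiv]
        exact hNstar i hii
    have useE : ∀ i j, i ≠ j → χ (x i) v = 1 → χ (x j) v = 1 →
        cc χ 1 (Sum.inr v) = cc χ 1 (Sum.inr b₀) := by
      intro i j hij hiv hjv
      by_cases hii : i = iE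
      · have : j ≠ iE := fun hjj => hij (hii.trans hjj.symm)
        rw [← edge_cc χ hjv]
        exact hE j this
      · rw [← edge_cc χ hiv]
        exact hE i hii
    rcases hval p hp0 with hp | hp <;> rcases hval q hq0 with hq | hq <;>
      rcases hval r hr0 with hr | hr
    · exact Or.inl (useN p q hpq hp hq)
    · exact Or.inl (useN p q hpq hp hq)
    · exact Or.inl (useN p r hpr hp hr)
    · exact Or.inr (useE q r hqr hq hr)
    · exact Or.inl (useN q r hqr hq hr)
    · exact Or.inr (useE p r hpr hp hr)
    · exact Or.inr (useE p q hpq hp hq)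
    · exact Or.inr (useE p q hpq hp hq)
  -- coverage of A-vertices
  have covA : ∀ u : α, cc χ 0 (Sum.inl u) = cc χ 0 (Sum.inl α₀) ∨
      cc χ 1 (Sum.inl u) = cc χ 1 (Sum.inl a₀) := by
    intro u
    obtain ⟨j₀, hj₀⟩ := at_most_one χ hMinj (Sum.inl u)
    obtain ⟨p, q, r, hpq, hpr, hqr, hp0, hq0, hr0⟩ := exists3 j₀
    have hval : ∀ j, j ≠ j₀ → χ u (y j) = 0 ∨ χ u (y j) = 1 := by
      intro j hj
      have hne2 : χ u (y j) ≠ 2 := by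
        intro h2'
        have he := edge_cc χ h2'
        have hyj : cc χ 2 (Sum.inr (y j)) = M j := (mem_supp_iff_cc χ).mp (hy j)
        exact hj₀ j hj (by rw [he, hyj])
      by_cases hcase : χ u (y j) = 0
      · exact Or.inl hcase
      · exact Or.inr (fin3_cases 0 1 _ (by decide) (by decide) (by decide) hne2 hcase)
    have useN : ∀ i j, i ≠ j → χ u (y i) = 0 → χ u (y j) = 0 →
        cc χ 0 (Sum.inl u) = cc χ 0 (Sum.inl α₀) := by
      intro i j hij hiv hjv
      by_cases hii : i = j1
      · have : j ≠ j1 := fun hjj => hij (hii.trans hjj.symm)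
        rw [edge_cc χ hjv]
        exact hNtil j this
      · rw [edge_cc χ hiv]
        exact hNtil i hii
    have useE : ∀ i j, i ≠ j → χ u (y i) = 1 → χ u (y j) = 1 →
        cc χ 1 (Sum.inl u) = cc χ 1 (Sum.inl a₀) := by
      intro i j hij hiv hjv
      by_cases hii : i = jE
      · have : j ≠ jE := fun hjj => hij (hii.trans hjj.symm)
        rw [edge_cc χ hjv]
        exact hEtil j this
      · rw [edge_cc χ hiv]
        exact hEtil i hii
    rcases hval p hp0 with hp | hp <;> rcases hval q hq0 with hq | hq <;>
      rcases hval r hr0 with hr | hr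
    · exact Or.inl (useN p q hpq hp hq)
    · exact Or.inl (useN p q hpq hp hq)
    · exact Or.inl (useN p r hpr hp hr)
    · exact Or.inr (useE q r hqr hq hr)
    · exact Or.inl (useN q r hqr hq hr)
    · exact Or.inr (useE p r hpr hp hr)
    · exact Or.inr (useE p q hpq hp hq)
    · exact Or.inr (useE p q hpq hp hq)
  by_cases hNN : cc χ 0 (Sum.inr β₀) = cc χ 0 (Sum.inl α₀)
  · refine ⟨0, 1, 1, cc χ 0 (Sum.inr β₀), cc χ 1 (Sum.inr b₀), cc χ 1 (Sum.inl a₀), ?_⟩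
    refine Set.eq_univ_iff_forall.mpr ?_
    rintro (u | v)
    · rcases covA u with h' | h'
      · exact Or.inl (Or.inl ((mem_supp_iff_cc χ).mpr (h'.trans hNN.symm)))
      · exact Or.inr ((mem_supp_iff_cc χ).mpr h')
    · rcases covB v with h' | h'
      · exact Or.inl (Or.inl ((mem_supp_iff_cc χ).mpr h'))
      · exact Or.inl (Or.inr ((mem_supp_iff_cc χ).mpr h'))
  · -- then E = Etil
    obtain ⟨j, hjjE, hjj1⟩ := exists_ne2 jE j1
    obtain ⟨i, hii1, hiiE, hiij⟩ := exists_ne3 i1 iE j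
    have hEE : cc χ 1 (Sum.inr b₀) = cc χ 1 (Sum.inl a₀) := by
      have hne2 : χ (x i) (y j) ≠ 2 := by
        intro h2'
        have he := edge_cc χ h2'
        have hxi : cc χ 2 (Sum.inl (x i)) = M i := (mem_supp_iff_cc χ).mp (hx i)
        have hyj : cc χ 2 (Sum.inr (y j)) = M j := (mem_supp_iff_cc χ).mp (hy j)
        exact hiij (hMinj i j (by rw [← hxi, ← hyj, he]))
      have hne0 : χ (x i) (y j) ≠ 0 := by
        intro h0'
        have he := edge_cc χ h0'
        exact hNN (by rw [← hNstar i hii1, he, hNtil j hjj1])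
      have h1' : χ (x i) (y j) = 1 :=
        fin3_cases 0 1 _ (by decide) (by decide) (by decide) hne2 hne0
      have he := edge_cc χ h1'
      rw [← hE i hiiE, he, hEtil j hjjE]
    refine ⟨0, 0, 1, cc χ 0 (Sum.inr β₀), cc χ 0 (Sum.inl α₀), cc χ 1 (Sum.inr b₀), ?_⟩
    refine Set.eq_univ_iff_forall.mpr ?_
    rintro (u | v)
    · rcases covA u with h' | h'
      · exact Or.inl (Or.inr ((mem_supp_iff_cc χ).mpr h'))
      · exact Or.inr ((mem_supp_iff_cc χ).mpr (h'.trans hEE.symm))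
    · rcases covB v with h' | h'
      · exact Or.inl (Or.inl ((mem_supp_iff_cc χ).mpr h'))
      · exact Or.inr ((mem_supp_iff_cc χ).mpr h')
end

section
/- Suppose the edges of a balanced complete bipartite graph H are 3-coloured, V(H) cannot be partitioned into at most five monochromatic connected matchings, and some colour has at most two non-trivial monochromatic components. Then a contradiction follows; equivalently: if H cannot be covered by five disjoint monochromatic connected matchings, then every colour has at least three non-trivial monochromatic components. -/
open SimpleGraph

/-- A monochromatic connected matching in an `r`-edge-coloured `K_{n,n}`:
a matching all of whose edges have colour `colour` and lie in a single
monochromatic component. A single vertex (field `single`, allowed only when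
there are no edges) and the empty graph count as degenerate matchings. -/
structure CMatching (n r : ℕ) (χ : Fin n → Fin n → Fin r) where
  colour : Fin r
  pairs : Finset (Fin n × Fin n)
  mono : ∀ p ∈ pairs, χ p.1 p.2 = colour
  inj1 : ∀ p ∈ pairs, ∀ q ∈ pairs, p.1 = q.1 → p = q
  inj2 : ∀ p ∈ pairs, ∀ q ∈ pairs, p.2 = q.2 → p = q
  conn : ∀ p ∈ pairs, ∀ q ∈ pairs,
    (colourGraph χ colour).Reachable (Sum.inl p.1) (Sum.inl q.1)
  single : Option (Fin n ⊕ Fin n)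
  hsingle : single = none ∨ pairs = ∅

/-- The vertex set covered by a monochromatic connected matching. -/
def CMatching.verts {n r : ℕ} {χ : Fin n → Fin n → Fin r} (M : CMatching n r χ) :
    Set (Fin n ⊕ Fin n) :=
  {x | (∃ p ∈ M.pairs, x = Sum.inl p.1 ∨ x = Sum.inr p.2) ∨ x ∈ M.single}

/-- `V(K_{n,n})` can be partitioned into at most five monochromatic connected
matchings. -/
def FiveMatchingPartition {n r : ℕ} (χ : Fin n → Fin n → Fin r) : Prop :=
  ∃ M : Fin 5 → CMatching n r χ,
    (∀ i j, i ≠ j → Disjoint (M i).verts (M j).verts) ∧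
    (⋃ i, (M i).verts) = Set.univ


namespace NoFive
open Sum Finset

variable {n : ℕ}

def Lefts (P : Finset (Fin n × Fin n)) : Finset (Fin n) := P.image Prod.fst
def Rights (P : Finset (Fin n × Fin n)) : Finset (Fin n) := P.image Prod.snd

lemma mem_Lefts {P : Finset (Fin n × Fin n)} {a : Fin n} :
    a ∈ Lefts P ↔ ∃ p ∈ P, p.1 = a := by simp [Lefts]

lemma mem_Rights {P : Finset (Fin n × Fin n)} {b : Fin n} :
    b ∈ Rights P ↔ ∃ p ∈ P, p.2 = b := by simp [Rights]

structure IsPM (χ : Fin n → Fin n → Fin 3) (d : Fin 3) (A B : Finset (Fin n))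
    (P : Finset (Fin n × Fin n)) : Prop where
  mono : ∀ p ∈ P, χ p.1 p.2 = d
  memA : ∀ p ∈ P, p.1 ∈ A
  memB : ∀ p ∈ P, p.2 ∈ B
  inj1 : ∀ p ∈ P, ∀ q ∈ P, p.1 = q.1 → p = q
  inj2 : ∀ p ∈ P, ∀ q ∈ P, p.2 = q.2 → p = q

lemma IsPM.empty {χ : Fin n → Fin n → Fin 3} {d A B} : IsPM χ d A B (∅ : Finset (Fin n × Fin n)) :=
  ⟨by simp, by simp, by simp, by simp, by simp⟩

lemma IsPM.subset {χ : Fin n → Fin n → Fin 3} {d A B P Q} (hQ : Q ⊆ P)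
    (h : IsPM χ d A B P) : IsPM χ d A B Q :=
  ⟨fun p hp => h.mono p (hQ hp), fun p hp => h.memA p (hQ hp), fun p hp => h.memB p (hQ hp),
   fun p hp q hq => h.inj1 p (hQ hp) q (hQ hq), fun p hp q hq => h.inj2 p (hQ hp) q (hQ hq)⟩

lemma card_Lefts {χ : Fin n → Fin n → Fin 3} {d A B P} (h : IsPM χ d A B P) :
    (Lefts P).card = P.card :=
  Finset.card_image_of_injOn (fun p hp q hq hpq => h.inj1 p hp q hq hpq)

lemma card_Rights {χ : Fin n → Fin n → Fin 3} {d A B P} (h : IsPM χ d A B P) :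
    (Rights P).card = P.card :=
  Finset.card_image_of_injOn (fun p hp q hq hpq => h.inj2 p hp q hq hpq)

lemma cg_adj {χ : Fin n → Fin n → Fin 3} {d : Fin 3} {x y : Fin n} :
    (colourGraph χ d).Adj (inl x) (inr y) ↔ χ x y = d := by
  constructor
  · rintro ⟨a, b, hab, ⟨h1, h2⟩ | ⟨h1, h2⟩⟩ <;> simp_all
  · intro hxy; exact ⟨x, y, hxy, Or.inl ⟨rfl, rfl⟩⟩

/-- The `d`-coloured graph restricted to available vertex sets `A`, `B`. -/
def RG (χ : Fin n → Fin n → Fin 3) (d : Fin 3) (A B : Finset (Fin n)) :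
    SimpleGraph (Fin n ⊕ Fin n) where
  Adj x y := ∃ a b, a ∈ A ∧ b ∈ B ∧ χ a b = d ∧
    ((x = Sum.inl a ∧ y = Sum.inr b) ∨ (x = Sum.inr b ∧ y = Sum.inl a))
  symm := by
    constructor
    rintro x y ⟨a, b, ha, hb, hc, h | h⟩
    · exact ⟨a, b, ha, hb, hc, Or.inr ⟨h.2, h.1⟩⟩
    · exact ⟨a, b, ha, hb, hc, Or.inl ⟨h.2, h.1⟩⟩
  loopless := by
    constructor
    rintro x ⟨a, b, ha, hb, hc, ⟨h1, h2⟩ | ⟨h1, h2⟩⟩ <;> simp_all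

lemma RG_adj {χ : Fin n → Fin n → Fin 3} {d : Fin 3} {A B : Finset (Fin n)} {x y : Fin n} :
    (RG χ d A B).Adj (inl x) (inr y) ↔ x ∈ A ∧ y ∈ B ∧ χ x y = d := by
  constructor
  · rintro ⟨a, b, ha, hb, hab, ⟨h1, h2⟩ | ⟨h1, h2⟩⟩ <;> simp_all
  · rintro ⟨hx, hy, hxy⟩; exact ⟨x, y, hx, hy, hxy, Or.inl ⟨rfl, rfl⟩⟩

lemma RG_le {χ : Fin n → Fin n → Fin 3} {d : Fin 3} {A B : Finset (Fin n)} :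
    RG χ d A B ≤ colourGraph χ d := by
  rintro x y ⟨a, b, _, _, hc, hor⟩
  exact ⟨a, b, hc, hor⟩

lemma RG_mono {χ : Fin n → Fin n → Fin 3} {d : Fin 3} {A B A' B' : Finset (Fin n)}
    (hA : A ⊆ A') (hB : B ⊆ B') : RG χ d A B ≤ RG χ d A' B' := by
  rintro x y ⟨a, b, ha, hb, hc, hor⟩
  exact ⟨a, b, hA ha, hB hb, hc, hor⟩

/-- All left endpoints of `P` lie in one component of `colourGraph χ d`. -/
def ConnP (χ : Fin n → Fin n → Fin 3) (d : Fin 3) (P : Finset (Fin n × Fin n)) : Prop :=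
  ∀ p ∈ P, ∀ q ∈ P, (colourGraph χ d).Reachable (Sum.inl p.1) (Sum.inl q.1)

lemma exists_maxPM (χ : Fin n → Fin n → Fin 3) (d : Fin 3) (A B : Finset (Fin n))
    (Q : Fin n × Fin n → Prop) :
    ∃ P, (IsPM χ d A B P ∧ ∀ p ∈ P, Q p) ∧
      ∀ P', (IsPM χ d A B P' ∧ ∀ p ∈ P', Q p) → P'.card ≤ P.card := by
  classical
  set S := (Finset.univ : Finset (Finset (Fin n × Fin n))).filter
    (fun P => IsPM χ d A B P ∧ ∀ p ∈ P, Q p) with hS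
  have hne : S.Nonempty :=
    ⟨∅, Finset.mem_filter.2 ⟨Finset.mem_univ _, IsPM.empty, by simp⟩⟩
  obtain ⟨P, hP, hmax⟩ := S.exists_max_image Finset.card hne
  rw [hS, Finset.mem_filter] at hP
  refine ⟨P, hP.2, fun P' hP' => hmax P' ?_⟩
  rw [hS, Finset.mem_filter]
  exact ⟨Finset.mem_univ _, hP'⟩

lemma maxPM_no_edge {χ : Fin n → Fin n → Fin 3} {d : Fin 3} {A B : Finset (Fin n)}
    {Q : Fin n × Fin n → Prop} {P : Finset (Fin n × Fin n)}
    (hP : IsPM χ d A B P ∧ ∀ p ∈ P, Q p)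
    (hmax : ∀ P', (IsPM χ d A B P' ∧ ∀ p ∈ P', Q p) → P'.card ≤ P.card)
    {x y : Fin n} (hx : x ∈ A) (hy : y ∈ B) (hx' : x ∉ Lefts P) (hy' : y ∉ Rights P)
    (hc : χ x y = d) (hQ : Q (x, y)) : False := by
  classical
  have hnotmem : (x, y) ∉ P := fun hmem => hx' (mem_Lefts.2 ⟨(x, y), hmem, rfl⟩)
  have hPM : IsPM χ d A B (insert (x, y) P) ∧ ∀ p ∈ insert (x, y) P, Q p := by
    obtain ⟨h1, h2⟩ := hP
    refine ⟨⟨?_, ?_, ?_, ?_, ?_⟩, ?_⟩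
    · rintro p hp
      rcases Finset.mem_insert.1 hp with rfl | hp
      · exact hc
      · exact h1.mono p hp
    · rintro p hp
      rcases Finset.mem_insert.1 hp with rfl | hp
      · exact hx
      · exact h1.memA p hp
    · rintro p hp
      rcases Finset.mem_insert.1 hp with rfl | hp
      · exact hy
      · exact h1.memB p hp
    · rintro p hp q hq hpq
      rcases Finset.mem_insert.1 hp with rfl | hp <;> rcases Finset.mem_insert.1 hq with rfl | hq
      · rfl
      · exact absurd (mem_Lefts.2 ⟨q, hq, hpq.symm⟩) hx'
      · exact absurd (mem_Lefts.2 ⟨p, hp, hpq⟩) hx'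
      · exact h1.inj1 p hp q hq hpq
    · rintro p hp q hq hpq
      rcases Finset.mem_insert.1 hp with rfl | hp <;> rcases Finset.mem_insert.1 hq with rfl | hq
      · rfl
      · exact absurd (mem_Rights.2 ⟨q, hq, hpq.symm⟩) hy'
      · exact absurd (mem_Rights.2 ⟨p, hp, hpq⟩) hy'
      · exact h1.inj2 p hp q hq hpq
    · rintro p hp
      rcases Finset.mem_insert.1 hp with rfl | hp
      · exact hQ
      · exact h2 p hp
  have := hmax _ hPM
  rw [Finset.card_insert_of_notMem hnotmem] at this
  omega






@[simp] lemma Lefts_empty : Lefts (∅ : Finset (Fin n × Fin n)) = ∅ := rfl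
@[simp] lemma Rights_empty : Rights (∅ : Finset (Fin n × Fin n)) = ∅ := rfl

lemma nontriv_of_pair {χ : Fin n → Fin n → Fin 3} {c : Fin 3} {p : Fin n × Fin n}
    (hp : χ p.1 p.2 = c) :
    Nontriv χ c ((colourGraph χ c).connectedComponentMk (inl p.1)) := by
  constructor
  · exact ⟨p.1, ConnectedComponent.mem_supp_iff _ _ |>.2 rfl⟩
  · refine ⟨p.2, ConnectedComponent.mem_supp_iff _ _ |>.2 ?_⟩
    exact (ConnectedComponent.sound (SimpleGraph.Adj.reachable (cg_adj.2 hp))).symm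

lemma stage_c (χ : Fin n → Fin n → Fin 3) (c : Fin 3)
    (hc : ¬ ∃ K₁ K₂ K₃ : (colourGraph χ c).ConnectedComponent,
      K₁ ≠ K₂ ∧ K₁ ≠ K₃ ∧ K₂ ≠ K₃ ∧ Nontriv χ c K₁ ∧ Nontriv χ c K₂ ∧ Nontriv χ c K₃) :
    ∃ P₁ P₂ : Finset (Fin n × Fin n),
      IsPM χ c Finset.univ Finset.univ P₁ ∧ IsPM χ c Finset.univ Finset.univ P₂ ∧
      ConnP χ c P₁ ∧ ConnP χ c P₂ ∧
      Disjoint (Lefts P₁) (Lefts P₂) ∧ Disjoint (Rights P₁) (Rights P₂) ∧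
      ∀ x y : Fin n, x ∉ Lefts P₁ ∪ Lefts P₂ → y ∉ Rights P₁ ∪ Rights P₂ → χ x y ≠ c := by
  classical
  obtain ⟨P, hP, hmax⟩ := exists_maxPM χ c Finset.univ Finset.univ (fun _ => True)
  set K : Fin n × Fin n → (colourGraph χ c).ConnectedComponent :=
    fun p => (colourGraph χ c).connectedComponentMk (inl p.1) with hK
  rcases P.eq_empty_or_nonempty with rfl | ⟨p₀, hp₀⟩
  · refine ⟨∅, ∅, IsPM.empty, IsPM.empty, by simp [ConnP], by simp [ConnP], by simp, by simp,
      fun x y hx hy hxy => ?_⟩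
    exact maxPM_no_edge hP hmax (Finset.mem_univ x) (Finset.mem_univ y)
      (by simp only [Lefts_empty, Finset.union_empty] at hx; exact hx)
      (by simp only [Rights_empty, Finset.union_empty] at hy; exact hy) hxy trivial
  · set P₁ := P.filter (fun p => K p = K p₀) with hP₁
    set P₂ := P \ P₁ with hP₂
    have hsub1 : P₁ ⊆ P := Finset.filter_subset _ _
    have hsub2 : P₂ ⊆ P := Finset.sdiff_subset
    have hdisj : Disjoint P₁ P₂ := Finset.disjoint_sdiff
    have hunion : P₁ ∪ P₂ = P := Finset.union_sdiff_of_subset hsub1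
    -- all pairs of P₂ lie in one component
    have hP₂K : ∀ p ∈ P₂, ∀ q ∈ P₂, K p = K q := by
      intro p hp q hq
      by_contra hne
      have hpK : K p ≠ K p₀ := by
        have := Finset.mem_sdiff.1 hp
        simpa [hP₁, Finset.mem_filter, this.1] using this.2
      have hqK : K q ≠ K p₀ := by
        have := Finset.mem_sdiff.1 hq
        simpa [hP₁, Finset.mem_filter, this.1] using this.2
      exact hc ⟨K p₀, K p, K q, Ne.symm hpK, Ne.symm hqK, hne,
        nontriv_of_pair (hP.1.mono p₀ hp₀),
        nontriv_of_pair (hP.1.mono p (hsub2 hp)),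
        nontriv_of_pair (hP.1.mono q (hsub2 hq))⟩
    have hdisjL : Disjoint (Lefts P₁) (Lefts P₂) := by
      rw [Finset.disjoint_left]
      intro a ha1 ha2
      obtain ⟨p, hp, hpa⟩ := mem_Lefts.1 ha1
      obtain ⟨q, hq, hqa⟩ := mem_Lefts.1 ha2
      have : p = q := hP.1.inj1 p (hsub1 hp) q (hsub2 hq) (hpa.trans hqa.symm)
      subst this
      exact Finset.disjoint_left.1 hdisj hp hq
    have hdisjR : Disjoint (Rights P₁) (Rights P₂) := by
      rw [Finset.disjoint_left]
      intro a ha1 ha2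
      obtain ⟨p, hp, hpa⟩ := mem_Rights.1 ha1
      obtain ⟨q, hq, hqa⟩ := mem_Rights.1 ha2
      have : p = q := hP.1.inj2 p (hsub1 hp) q (hsub2 hq) (hpa.trans hqa.symm)
      subst this
      exact Finset.disjoint_left.1 hdisj hp hq
    refine ⟨P₁, P₂, hP.1.subset hsub1, hP.1.subset hsub2, ?_, ?_, hdisjL, hdisjR, ?_⟩
    · intro p hp q hq
      have h1 : K p = K p₀ := (Finset.mem_filter.1 hp).2
      have h2 : K q = K p₀ := (Finset.mem_filter.1 hq).2
      exact ConnectedComponent.exact (h1.trans h2.symm)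
    · intro p hp q hq
      exact ConnectedComponent.exact (hP₂K p hp q hq)
    · intro x y hx hy hxy
      have hxL : x ∉ Lefts P := by
        intro hmem
        obtain ⟨p, hp, hpa⟩ := mem_Lefts.1 hmem
        rcases (Finset.mem_union.1 (hunion ▸ hp) : p ∈ P₁ ∨ p ∈ P₂) with h | h
        · exact hx (Finset.mem_union.2 (Or.inl (mem_Lefts.2 ⟨p, h, hpa⟩)))
        · exact hx (Finset.mem_union.2 (Or.inr (mem_Lefts.2 ⟨p, h, hpa⟩)))
      have hyR : y ∉ Rights P := by
        intro hmem
        obtain ⟨p, hp, hpa⟩ := mem_Rights.1 hmem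
        rcases (Finset.mem_union.1 (hunion ▸ hp) : p ∈ P₁ ∨ p ∈ P₂) with h | h
        · exact hy (Finset.mem_union.2 (Or.inl (mem_Rights.2 ⟨p, h, hpa⟩)))
        · exact hy (Finset.mem_union.2 (Or.inr (mem_Rights.2 ⟨p, h, hpa⟩)))
      exact maxPM_no_edge hP hmax (Finset.mem_univ x) (Finset.mem_univ y) hxL hyR hxy trivial

open scoped Classical in
noncomputable def XC (χ : Fin n → Fin n → Fin 3) (d : Fin 3) (A B : Finset (Fin n))
    (x : Fin n) : Finset (Fin n) :=
  A.filter (fun z => (RG χ d A B).Reachable (Sum.inl z) (Sum.inl x))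

open scoped Classical in
noncomputable def YC (χ : Fin n → Fin n → Fin 3) (d : Fin 3) (A B : Finset (Fin n))
    (x : Fin n) : Finset (Fin n) :=
  B.filter (fun z => (RG χ d A B).Reachable (Sum.inr z) (Sum.inl x))

open scoped Classical

lemma mem_XC {χ : Fin n → Fin n → Fin 3} {d : Fin 3} {A B : Finset (Fin n)} {x z : Fin n} :
    z ∈ XC χ d A B x ↔ z ∈ A ∧ (RG χ d A B).Reachable (Sum.inl z) (Sum.inl x) := by
  simp [XC]

lemma mem_YC {χ : Fin n → Fin n → Fin 3} {d : Fin 3} {A B : Finset (Fin n)} {x z : Fin n} :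
    z ∈ YC χ d A B x ↔ z ∈ B ∧ (RG χ d A B).Reachable (Sum.inr z) (Sum.inl x) := by
  simp [YC]

lemma stage_red (χ : Fin n → Fin n → Fin 3) (d : Fin 3) (A B : Finset (Fin n))
    (hcard : A.card = B.card) :
    ∃ M : Finset (Fin n × Fin n), IsPM χ d A B M ∧ ConnP χ d M ∧
      ∀ x ∈ A \ Lefts M, ∀ y ∈ B \ Rights M, χ x y = d →
        (XC χ d (A \ Lefts M) (B \ Rights M) x).card
          + (YC χ d (A \ Lefts M) (B \ Rights M) x).card ≤ (A \ Lefts M).card := by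
  classical
  set G := RG χ d A B with hG
  obtain ⟨E, hE⟩ : ∃ E, E = (Finset.univ : Finset (Fin n × Fin n)).filter
    (fun p => p.1 ∈ A ∧ p.2 ∈ B ∧ χ p.1 p.2 = d) := ⟨_, rfl⟩
  rcases E.eq_empty_or_nonempty with hEe | hne
  · refine ⟨∅, IsPM.empty, by simp [ConnP], fun x hx y hy hxy => ?_⟩
    exfalso
    have : (x, y) ∈ E := by
      rw [hE]
      refine Finset.mem_filter.2 ⟨Finset.mem_univ _, ?_, ?_, hxy⟩
      · exact (Finset.mem_sdiff.1 hx).1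
      · exact (Finset.mem_sdiff.1 hy).1
    rw [hEe] at this
    exact absurd this (Finset.notMem_empty _)
  · obtain ⟨pa, hpaE, hpamax⟩ := E.exists_max_image
      (fun p => (XC χ d A B p.1).card + (YC χ d A B p.1).card) hne
    obtain ⟨xa, hxa⟩ : ∃ z, z = pa.1 := ⟨_, rfl⟩
    obtain ⟨E2, hE2⟩ : ∃ S, S = E.filter (fun p => ¬ G.Reachable (Sum.inl p.1) (Sum.inl xa)) :=
      ⟨_, rfl⟩
    obtain ⟨s₂, hs₂⟩ : ∃ k, k = E2.sup (fun p => (XC χ d A B p.1).card + (YC χ d A B p.1).card) :=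
      ⟨_, rfl⟩
    have hXle : ∀ z, (XC χ d A B z).card ≤ A.card := fun z =>
      Finset.card_le_card (Finset.filter_subset _ _)
    have hYle : ∀ z, (YC χ d A B z).card ≤ A.card := fun z =>
      le_trans (Finset.card_le_card (Finset.filter_subset _ _)) (le_of_eq hcard.symm)
    -- key size fact
    have hK3 : ((XC χ d A B xa).card + (YC χ d A B xa).card) + s₂ ≤ 2 * A.card := by
      rcases E2.eq_empty_or_nonempty with hE2e | hne2
      · have : s₂ = 0 := by rw [hs₂, hE2e]; simp
        have := hXle xa; have := hYle xa
        omega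
      · obtain ⟨pb, hpb, hpbsup⟩ := Finset.exists_mem_eq_sup E2 hne2
          (fun p => (XC χ d A B p.1).card + (YC χ d A B p.1).card)
        have hnr : ¬ G.Reachable (Sum.inl pb.1) (Sum.inl xa) := by
          rw [hE2] at hpb
          exact (Finset.mem_filter.1 hpb).2
        have hdX : Disjoint (XC χ d A B xa) (XC χ d A B pb.1) := by
          rw [Finset.disjoint_left]
          intro z hz1 hz2
          exact hnr (((mem_XC.1 hz2).2).symm.trans (mem_XC.1 hz1).2)
        have hdY : Disjoint (YC χ d A B xa) (YC χ d A B pb.1) := by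
          rw [Finset.disjoint_left]
          intro z hz1 hz2
          exact hnr (((mem_YC.1 hz2).2).symm.trans (mem_YC.1 hz1).2)
        have hX : (XC χ d A B xa).card + (XC χ d A B pb.1).card ≤ A.card := by
          rw [← Finset.card_union_of_disjoint hdX]
          exact Finset.card_le_card (Finset.union_subset (Finset.filter_subset _ _)
            (Finset.filter_subset _ _))
        have hY : (YC χ d A B xa).card + (YC χ d A B pb.1).card ≤ A.card := by
          rw [← Finset.card_union_of_disjoint hdY, hcard]
          exact Finset.card_le_card (Finset.union_subset (Finset.filter_subset _ _)
            (Finset.filter_subset _ _))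
        rw [hs₂, hpbsup]
        omega
    have hs2le : s₂ ≤ (XC χ d A B xa).card + (YC χ d A B xa).card := by
      rw [hs₂]
      refine Finset.sup_le fun p hp => ?_
      rw [hxa]
      have := hpamax p (by rw [hE2] at hp; exact (Finset.mem_filter.1 hp).1)
      simpa using this
    -- maximum matching within the component of xa
    obtain ⟨Pm, hPm, hPmax⟩ := exists_maxPM χ d A B
      (fun p => G.Reachable (Sum.inl p.1) (Sum.inl xa))
    obtain ⟨M, hMsub, hMcard, hMeq⟩ : ∃ M, M ⊆ Pm ∧ M.card = min Pm.card (A.card - s₂) ∧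
        (Pm.card ≤ A.card - s₂ → M = Pm) := by
      by_cases hcase : Pm.card ≤ A.card - s₂
      · exact ⟨Pm, Finset.Subset.refl _, by rw [min_eq_left hcase], fun _ => rfl⟩
      · obtain ⟨M, hsub, hcardM⟩ := Finset.exists_subset_card_eq (s := Pm) (n := A.card - s₂) (by omega)
        exact ⟨M, hsub, by rw [hcardM, min_eq_right (by omega)], fun hc => absurd hc hcase⟩
    have hIsPM : IsPM χ d A B M := hPm.1.subset hMsub
    have hQM : ∀ p ∈ M, G.Reachable (Sum.inl p.1) (Sum.inl xa) :=
      fun p hp => hPm.2 p (hMsub hp)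
    have hLsub : Lefts M ⊆ A := by
      intro a ha
      obtain ⟨p, hp, hpa⟩ := mem_Lefts.1 ha
      exact hpa ▸ hIsPM.memA p hp
    have hRsub : Rights M ⊆ B := by
      intro b hb
      obtain ⟨p, hp, hpb⟩ := mem_Rights.1 hb
      exact hpb ▸ hIsPM.memB p hp
    have hA'card : (A \ Lefts M).card = A.card - M.card := by
      rw [Finset.card_sdiff_of_subset hLsub, card_Lefts hIsPM]
    have ht2 : M.card ≤ A.card - s₂ := by rw [hMcard]; exact min_le_right _ _
    refine ⟨M, hIsPM, ?_, ?_⟩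
    · intro p hp q hq
      exact Reachable.mono RG_le ((hQM p hp).trans (hQM q hq).symm)
    · intro x hx y hy hxy
      have hxA : x ∈ A := (Finset.mem_sdiff.1 hx).1
      have hxL : x ∉ Lefts M := (Finset.mem_sdiff.1 hx).2
      have hyB : y ∈ B := (Finset.mem_sdiff.1 hy).1
      have hyR : y ∉ Rights M := (Finset.mem_sdiff.1 hy).2
      have hedge : (x, y) ∈ E := by
        rw [hE]; exact Finset.mem_filter.2 ⟨Finset.mem_univ _, hxA, hyB, hxy⟩
      have hXsub' : XC χ d (A \ Lefts M) (B \ Rights M) x ⊆ XC χ d A B x := by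
        intro z hz
        obtain ⟨hz1, hz2⟩ := mem_XC.1 hz
        exact mem_XC.2 ⟨(Finset.mem_sdiff.1 hz1).1,
          Reachable.mono (RG_mono Finset.sdiff_subset Finset.sdiff_subset) hz2⟩
      have hYsub' : YC χ d (A \ Lefts M) (B \ Rights M) x ⊆ YC χ d A B x := by
        intro z hz
        obtain ⟨hz1, hz2⟩ := mem_YC.1 hz
        exact mem_YC.2 ⟨(Finset.mem_sdiff.1 hz1).1,
          Reachable.mono (RG_mono Finset.sdiff_subset Finset.sdiff_subset) hz2⟩
      rw [hA'card]
      by_cases hreach : G.Reachable (Sum.inl x) (Sum.inl xa)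
      · by_cases hcase : Pm.card ≤ A.card - s₂
        · exact absurd (maxPM_no_edge hPm hPmax hxA hyB (hMeq hcase ▸ hxL)
            (hMeq hcase ▸ hyR) hxy hreach) not_false
        · have hts : M.card = A.card - s₂ := by rw [hMcard]; exact min_eq_right (by omega)
          have hLM : Lefts M ⊆ XC χ d A B x := by
            intro a ha
            obtain ⟨p, hp, hpa⟩ := mem_Lefts.1 ha
            exact mem_XC.2 ⟨hpa ▸ hIsPM.memA p hp,
              hpa ▸ ((hQM p hp).trans hreach.symm)⟩
          have hRM : Rights M ⊆ YC χ d A B x := by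
            intro b hb
            obtain ⟨p, hp, hpb⟩ := mem_Rights.1 hb
            have hadj : G.Adj (Sum.inl p.1) (Sum.inr p.2) := by
              rw [hG]
              exact RG_adj.2 ⟨hIsPM.memA p hp, hIsPM.memB p hp, hIsPM.mono p hp⟩
            exact mem_YC.2 ⟨hpb ▸ hIsPM.memB p hp,
              hpb ▸ (hadj.reachable.symm.trans ((hQM p hp).trans hreach.symm))⟩
          have hdX : Disjoint (XC χ d (A \ Lefts M) (B \ Rights M) x) (Lefts M) := by
            rw [Finset.disjoint_left]
            intro z hz1 hz2
            exact (Finset.mem_sdiff.1 (mem_XC.1 hz1).1).2 hz2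
          have hdY : Disjoint (YC χ d (A \ Lefts M) (B \ Rights M) x) (Rights M) := by
            rw [Finset.disjoint_left]
            intro z hz1 hz2
            exact (Finset.mem_sdiff.1 (mem_YC.1 hz1).1).2 hz2
          have h1 : (XC χ d (A \ Lefts M) (B \ Rights M) x).card + M.card
              ≤ (XC χ d A B x).card := by
            rw [← card_Lefts hIsPM, ← Finset.card_union_of_disjoint hdX]
            exact Finset.card_le_card (Finset.union_subset hXsub' hLM)
          have h2 : (YC χ d (A \ Lefts M) (B \ Rights M) x).card + M.card
              ≤ (YC χ d A B x).card := by
            rw [← card_Rights hIsPM, ← Finset.card_union_of_disjoint hdY]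
            exact Finset.card_le_card (Finset.union_subset hYsub' hRM)
          have hsax : (XC χ d A B x).card + (YC χ d A B x).card
              ≤ (XC χ d A B xa).card + (YC χ d A B xa).card := by
            rw [hxa]
            have := hpamax (x, y) hedge
            simpa using this
          omega
      · have hE2m : (x, y) ∈ E2 := by
          rw [hE2]; exact Finset.mem_filter.2 ⟨hedge, hreach⟩
        have hsx2 : (XC χ d A B x).card + (YC χ d A B x).card ≤ s₂ := by
          rw [hs₂]
          have := Finset.le_sup (f := fun p => (XC χ d A B p.1).card + (YC χ d A B p.1).card) hE2m
          simpa using this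
        have h1 := Finset.card_le_card hXsub'
        have h2 := Finset.card_le_card hYsub'
        omega

/-- A complete `e`-coloured bipartite "blob" between two equinumerous sets
yields a connected matching covering exactly those sets. -/
lemma blob (χ : Fin n → Fin n → Fin 3) (e : Fin 3) (X Y A B : Finset (Fin n))
    (hXA : X ⊆ A) (hYB : Y ⊆ B)
    (hcardXY : X.card = Y.card)
    (hcross : ∀ x ∈ X, ∀ y ∈ Y, χ x y = e) :
    ∃ P : Finset (Fin n × Fin n), IsPM χ e A B P ∧ ConnP χ e P ∧
      Lefts P = X ∧ Rights P = Y := by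
  classical
  have hequiv : {x // x ∈ X} ≃ {y // y ∈ Y} := Finset.equivOfCardEq hcardXY
  set P := X.attach.image (fun z => (z.1, (hequiv z).1)) with hP
  have hmemP : ∀ p ∈ P, ∃ z : {z // z ∈ X}, p = (z.1, (hequiv z).1) := by
    intro p hp
    rw [hP] at hp
    obtain ⟨z, _, rfl⟩ := Finset.mem_image.1 hp
    exact ⟨z, rfl⟩
  have hPM : IsPM χ e A B P := by
    refine ⟨?_, ?_, ?_, ?_, ?_⟩
    · intro p hp; obtain ⟨z, rfl⟩ := hmemP p hp; exact hcross z.1 z.2 _ (hequiv z).2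
    · intro p hp; obtain ⟨z, rfl⟩ := hmemP p hp; exact hXA z.2
    · intro p hp; obtain ⟨z, rfl⟩ := hmemP p hp; exact hYB (hequiv z).2
    · intro p hp q hq hpq
      obtain ⟨z, rfl⟩ := hmemP p hp; obtain ⟨w, rfl⟩ := hmemP q hq
      have : z = w := Subtype.ext hpq
      rw [this]
    · intro p hp q hq hpq
      obtain ⟨z, rfl⟩ := hmemP p hp; obtain ⟨w, rfl⟩ := hmemP q hq
      have : z = w := hequiv.injective (Subtype.ext hpq)
      rw [this]
  have hLP : Lefts P = X := by
    ext a
    constructor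
    · intro ha
      obtain ⟨p, hp, hpa⟩ := mem_Lefts.1 ha
      obtain ⟨z, rfl⟩ := hmemP p hp
      exact hpa ▸ z.2
    · intro ha
      exact mem_Lefts.2 ⟨(a, (hequiv ⟨a, ha⟩).1), by
        rw [hP]
        exact Finset.mem_image.2 ⟨⟨a, ha⟩, Finset.mem_attach _ _, rfl⟩, rfl⟩
  have hRP : Rights P = Y := by
    have hsub : Rights P ⊆ Y := by
      intro b hb
      obtain ⟨p, hp, hpb⟩ := mem_Rights.1 hb
      obtain ⟨z, rfl⟩ := hmemP p hp
      exact hpb ▸ (hequiv z).2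
    have hcardP : P.card = X.card := by
      rw [hP, Finset.card_image_of_injective _ (fun z w hzw => ?_), Finset.card_attach]
      exact hequiv.injective (Subtype.ext (congrArg Prod.snd hzw))
    have : (Rights P).card = Y.card := by
      rw [card_Rights hPM, hcardP, hcardXY]
    exact Finset.eq_of_subset_of_card_le hsub (le_of_eq this.symm)
  refine ⟨P, hPM, ?_, hLP, hRP⟩
  intro p hp q hq
  obtain ⟨z, rfl⟩ := hmemP p hp; obtain ⟨w, rfl⟩ := hmemP q hq
  have h1 : χ z.1 (hequiv z).1 = e := hcross z.1 z.2 _ (hequiv z).2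
  have h2 : χ w.1 (hequiv z).1 = e := hcross w.1 w.2 _ (hequiv z).2
  exact (SimpleGraph.Adj.reachable (cg_adj.2 h1)).trans
    (SimpleGraph.Adj.reachable (cg_adj.2 h2)).symm

lemma stage_blue (χ : Fin n → Fin n → Fin 3) (c d e : Fin 3)
    (hall3 : ∀ f : Fin 3, f = c ∨ f = d ∨ f = e)
    (A B : Finset (Fin n)) (hcard : A.card = B.card)
    (hnc : ∀ x ∈ A, ∀ y ∈ B, χ x y ≠ c)
    (hF1 : ∀ x ∈ A, ∀ y ∈ B, χ x y = d →
      (XC χ d A B x).card + (YC χ d A B x).card ≤ A.card) :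
    ∃ P₁ P₂ : Finset (Fin n × Fin n),
      IsPM χ e A B P₁ ∧ IsPM χ e A B P₂ ∧ ConnP χ e P₁ ∧ ConnP χ e P₂ ∧
      Disjoint (Lefts P₁) (Lefts P₂) ∧ Disjoint (Rights P₁) (Rights P₂) ∧
      Lefts P₁ ∪ Lefts P₂ = A ∧ Rights P₁ ∪ Rights P₂ = B := by
  classical
  set G := RG χ d A B with hG
  have KE : ∀ x ∈ A, ∀ y ∈ B, χ x y ≠ d → χ x y = e := by
    intro x hx y hy hnd
    rcases hall3 (χ x y) with h | h | h
    · exact absurd h (hnc x hx y hy)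
    · exact absurd h hnd
    · exact h
  have hblue : ∀ x ∈ A, ∀ y ∈ B, ¬ G.Reachable (Sum.inr y) (Sum.inl x) → χ x y = e := by
    intro x hx y hy hnr
    refine KE x hx y hy (fun hd => hnr ?_)
    exact (SimpleGraph.Adj.reachable (RG_adj.2 ⟨hx, hy, hd⟩)).symm
  have hXsubA : ∀ z, XC χ d A B z ⊆ A := fun z => Finset.filter_subset _ _
  have hYsubB : ∀ z, YC χ d A B z ⊆ B := fun z => Finset.filter_subset _ _
  have hYCne : ∀ x ∈ A, ∀ y ∈ B, χ x y = d → ∃ y' ∈ B, ¬ G.Reachable (Sum.inr y') (Sum.inl x) := by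
    intro x hx y hy hd
    have h1 : 1 ≤ (XC χ d A B x).card :=
      Finset.card_pos.2 ⟨x, mem_XC.2 ⟨hx, Reachable.refl _⟩⟩
    have h2 := hF1 x hx y hy hd
    have h4 : (B \ YC χ d A B x).card = B.card - (YC χ d A B x).card :=
      Finset.card_sdiff_of_subset (hYsubB x)
    have h5 : 0 < (B \ YC χ d A B x).card := by omega
    obtain ⟨y', hy'⟩ := Finset.card_pos.1 h5
    have h6 := Finset.mem_sdiff.1 hy'
    exact ⟨y', h6.1, fun hr => h6.2 (mem_YC.2 ⟨h6.1, hr⟩)⟩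
  -- if all of `A` lies in one `e`-coloured component, one matching suffices
  have buildOne : (∀ x ∈ A, ∀ x' ∈ A, (colourGraph χ e).Reachable (Sum.inl x) (Sum.inl x')) →
      ∃ P₁ P₂ : Finset (Fin n × Fin n),
      IsPM χ e A B P₁ ∧ IsPM χ e A B P₂ ∧ ConnP χ e P₁ ∧ ConnP χ e P₂ ∧
      Disjoint (Lefts P₁) (Lefts P₂) ∧ Disjoint (Rights P₁) (Rights P₂) ∧
      Lefts P₁ ∪ Lefts P₂ = A ∧ Rights P₁ ∪ Rights P₂ = B := by
    intro hconn
    set T : {z // z ∈ A} → Finset (Fin n) := fun x => B.filter (fun y => χ x.1 y = e) with hT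
    have hTB : ∀ z, T z ⊆ B := fun z => Finset.filter_subset _ _
    have hHall : ∀ S : Finset {z // z ∈ A}, S.card ≤ (S.biUnion T).card := by
      intro S
      rcases S.eq_empty_or_nonempty with rfl | ⟨x₀, hx₀⟩
      · simp
      have hSle : S.card ≤ A.card := by
        have := Finset.card_le_univ S
        rwa [Fintype.card_coe] at this
      by_cases hf : ∀ y ∈ B, χ x₀.1 y ≠ d
      · have hTx : B ⊆ T x₀ := fun y hy =>
          Finset.mem_filter.2 ⟨hy, KE x₀.1 x₀.2 y hy (hf y hy)⟩
        calc S.card ≤ A.card := hSle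
          _ = B.card := hcard
          _ ≤ (T x₀).card := Finset.card_le_card hTx
          _ ≤ (S.biUnion T).card :=
            Finset.card_le_card (Finset.subset_biUnion_of_mem T hx₀)
      · push_neg at hf
        obtain ⟨y₀, hy₀B, hy₀d⟩ := hf
        have hsub0 : B \ YC χ d A B x₀.1 ⊆ T x₀ := by
          intro y hy
          have h6 := Finset.mem_sdiff.1 hy
          exact Finset.mem_filter.2 ⟨h6.1,
            hblue x₀.1 x₀.2 y h6.1 (fun hr => h6.2 (mem_YC.2 ⟨h6.1, hr⟩))⟩
        by_cases hall2 : ∀ x ∈ S, G.Reachable (Sum.inl x.1) (Sum.inl x₀.1)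
        · have hSX : S.image Subtype.val ⊆ XC χ d A B x₀.1 := by
            intro a ha
            obtain ⟨z, hz, rfl⟩ := Finset.mem_image.1 ha
            exact mem_XC.2 ⟨z.2, hall2 z hz⟩
          have hcardS : S.card = (S.image Subtype.val).card :=
            (Finset.card_image_of_injective S Subtype.val_injective).symm
          have h2 := hF1 x₀.1 x₀.2 y₀ hy₀B hy₀d
          have h3 : (B \ YC χ d A B x₀.1).card = B.card - (YC χ d A B x₀.1).card :=
            Finset.card_sdiff_of_subset (hYsubB _)
          have h7 := Finset.card_le_card hSX
          have h8 := Finset.card_le_card hsub0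
          have h9 := Finset.card_le_card (Finset.subset_biUnion_of_mem T hx₀)
          omega
        · push_neg at hall2
          obtain ⟨x₁, hx₁S, hnr⟩ := hall2
          have hBsub : B ⊆ T x₀ ∪ T x₁ := by
            intro y hy
            by_cases hry : G.Reachable (Sum.inr y) (Sum.inl x₀.1)
            · refine Finset.mem_union.2 (Or.inr (Finset.mem_filter.2 ⟨hy, ?_⟩))
              refine hblue x₁.1 x₁.2 y hy (fun hr => hnr (hr.symm.trans hry))
            · exact Finset.mem_union.2 (Or.inl (Finset.mem_filter.2
                ⟨hy, hblue x₀.1 x₀.2 y hy hry⟩))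
          have h10 : T x₀ ∪ T x₁ ⊆ S.biUnion T :=
            Finset.union_subset (Finset.subset_biUnion_of_mem T hx₀)
              (Finset.subset_biUnion_of_mem T hx₁S)
          calc S.card ≤ A.card := hSle
            _ = B.card := hcard
            _ ≤ (T x₀ ∪ T x₁).card := Finset.card_le_card hBsub
            _ ≤ (S.biUnion T).card := Finset.card_le_card h10
    obtain ⟨f, hinj, hmem⟩ := (Finset.all_card_le_biUnion_card_iff_existsInjective' T).1 hHall
    set P := A.attach.image (fun z => (z.1, f z)) with hP
    have hmemP : ∀ p ∈ P, ∃ z : {z // z ∈ A}, p = (z.1, f z) := by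
      intro p hp
      rw [hP] at hp
      obtain ⟨z, _, rfl⟩ := Finset.mem_image.1 hp
      exact ⟨z, rfl⟩
    have hfB : ∀ z, f z ∈ B := fun z => hTB z (hmem z)
    have hfe : ∀ z : {z // z ∈ A}, χ z.1 (f z) = e := fun z =>
      (Finset.mem_filter.1 (hmem z)).2
    have hPM : IsPM χ e A B P := by
      refine ⟨?_, ?_, ?_, ?_, ?_⟩
      · intro p hp; obtain ⟨z, rfl⟩ := hmemP p hp; exact hfe z
      · intro p hp; obtain ⟨z, rfl⟩ := hmemP p hp; exact z.2
      · intro p hp; obtain ⟨z, rfl⟩ := hmemP p hp; exact hfB z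
      · intro p hp q hq hpq
        obtain ⟨z, rfl⟩ := hmemP p hp; obtain ⟨w, rfl⟩ := hmemP q hq
        have : z = w := Subtype.ext hpq
        rw [this]
      · intro p hp q hq hpq
        obtain ⟨z, rfl⟩ := hmemP p hp; obtain ⟨w, rfl⟩ := hmemP q hq
        have : z = w := hinj hpq
        rw [this]
    have hLP : Lefts P = A := by
      ext a
      constructor
      · intro ha
        obtain ⟨p, hp, hpa⟩ := mem_Lefts.1 ha
        obtain ⟨z, rfl⟩ := hmemP p hp
        exact hpa ▸ z.2
      · intro ha
        exact mem_Lefts.2 ⟨(a, f ⟨a, ha⟩), by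
          rw [hP]
          exact Finset.mem_image.2 ⟨⟨a, ha⟩, Finset.mem_attach _ _, rfl⟩, rfl⟩
    have hRP : Rights P = B := by
      have hsub : Rights P ⊆ B := by
        intro b hb
        obtain ⟨p, hp, hpb⟩ := mem_Rights.1 hb
        obtain ⟨z, rfl⟩ := hmemP p hp
        exact hpb ▸ hfB z
      have hcardP : P.card = A.card := by
        rw [hP, Finset.card_image_of_injective _ (fun z w hzw => ?_), Finset.card_attach]
        have : f z = f w := congrArg Prod.snd hzw
        exact hinj this
      have : (Rights P).card = B.card := by
        rw [card_Rights hPM, hcardP, hcard]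
      exact Finset.eq_of_subset_of_card_le hsub (le_of_eq this.symm)
    refine ⟨P, ∅, hPM, IsPM.empty, ?_, by simp [ConnP], by simp, by simp, by simp [hLP],
      by simp [hRP]⟩
    · intro p hp q hq
      obtain ⟨z, rfl⟩ := hmemP p hp; obtain ⟨w, rfl⟩ := hmemP q hq
      exact hconn z.1 z.2 w.1 w.2
  by_cases hm : A.card = 0
  · have hA : A = ∅ := Finset.card_eq_zero.1 hm
    have hB : B = ∅ := Finset.card_eq_zero.1 (by omega)
    exact ⟨∅, ∅, IsPM.empty, IsPM.empty, by simp [ConnP], by simp [ConnP], by simp, by simp,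
      by simp [hA], by simp [hB]⟩
  · have hAne : A.Nonempty := Finset.card_pos.1 (by omega)
    have hBne : B.Nonempty := Finset.card_pos.1 (by omega)
    by_cases hfx : ∃ x ∈ A, ∀ y ∈ B, χ x y ≠ d
    · obtain ⟨xs, hxs, hfree⟩ := hfx
      apply buildOne
      have step : ∀ z ∈ A, (colourGraph χ e).Reachable (Sum.inl z) (Sum.inl xs) := by
        intro z hz
        by_cases hzf : ∀ y ∈ B, χ z y ≠ d
        · obtain ⟨y, hy⟩ := hBne
          exact (SimpleGraph.Adj.reachable (cg_adj.2 (KE z hz y hy (hzf y hy)))).trans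
            (SimpleGraph.Adj.reachable (cg_adj.2 (KE xs hxs y hy (hfree y hy)))).symm
        · push_neg at hzf
          obtain ⟨y₀, hy₀, hd⟩ := hzf
          obtain ⟨y', hy', hnr⟩ := hYCne z hz y₀ hy₀ hd
          exact (SimpleGraph.Adj.reachable (cg_adj.2 (hblue z hz y' hy' hnr))).trans
            (SimpleGraph.Adj.reachable (cg_adj.2 (KE xs hxs y' hy' (hfree y' hy')))).symm
      intro x hx x' hx'
      exact (step x hx).trans (step x' hx').symm
    · push_neg at hfx
      by_cases hfy : ∃ y ∈ B, ∀ x ∈ A, χ x y ≠ d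
      · obtain ⟨ys, hys, hfree⟩ := hfy
        apply buildOne
        intro x hx x' hx'
        exact (SimpleGraph.Adj.reachable (cg_adj.2 (KE x hx ys hys (hfree x hx)))).trans
          (SimpleGraph.Adj.reachable (cg_adj.2 (KE x' hx' ys hys (hfree x' hx')))).symm
      · push_neg at hfy
        obtain ⟨x₀, hx₀⟩ := hAne
        by_cases hone : ∀ x ∈ A, G.Reachable (Sum.inl x) (Sum.inl x₀)
        · exfalso
          obtain ⟨y₀, hy₀, hy₀d⟩ := hfx x₀ hx₀
          have h2 := hF1 x₀ hx₀ y₀ hy₀ hy₀d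
          have h3 : A.card ≤ (XC χ d A B x₀).card :=
            Finset.card_le_card (fun z hz => mem_XC.2 ⟨hz, hone z hz⟩)
          have h4 : (XC χ d A B x₀).card ≤ A.card := Finset.card_le_card (hXsubA _)
          have hYe : (YC χ d A B x₀).card = 0 := by omega
          have hymem : y₀ ∈ YC χ d A B x₀ := mem_YC.2 ⟨hy₀,
            (SimpleGraph.Adj.reachable (RG_adj.2 ⟨hx₀, hy₀, hy₀d⟩)).symm⟩
          rw [Finset.card_eq_zero.1 hYe] at hymem
          exact absurd hymem (Finset.notMem_empty _)
        · push_neg at hone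
          obtain ⟨x₁, hx₁, hnr10⟩ := hone
          by_cases htwo : ∀ x ∈ A, G.Reachable (Sum.inl x) (Sum.inl x₀) ∨
              G.Reachable (Sum.inl x) (Sum.inl x₁)
          · -- two components: two complete `e`-coloured "blobs"
            obtain ⟨ya, hya, hyad⟩ := hfx x₀ hx₀
            obtain ⟨yb, hyb, hybd⟩ := hfx x₁ hx₁
            have hc0 := hF1 x₀ hx₀ ya hya hyad
            have hc1 := hF1 x₁ hx₁ yb hyb hybd
            have hXu : A = XC χ d A B x₀ ∪ XC χ d A B x₁ := by
              apply Finset.Subset.antisymm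
              · intro z hz
                rcases htwo z hz with h | h
                · exact Finset.mem_union.2 (Or.inl (mem_XC.2 ⟨hz, h⟩))
                · exact Finset.mem_union.2 (Or.inr (mem_XC.2 ⟨hz, h⟩))
              · exact Finset.union_subset (hXsubA _) (hXsubA _)
            have hXd : Disjoint (XC χ d A B x₀) (XC χ d A B x₁) := by
              rw [Finset.disjoint_left]
              intro z hz0 hz1
              exact hnr10 (((mem_XC.1 hz1).2).symm.trans (mem_XC.1 hz0).2)
            have hYu : B = YC χ d A B x₀ ∪ YC χ d A B x₁ := by
              apply Finset.Subset.antisymm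
              · intro y hy
                obtain ⟨x, hx, hxyd⟩ := hfy y hy
                have hry : G.Reachable (Sum.inr y) (Sum.inl x) :=
                  (SimpleGraph.Adj.reachable (RG_adj.2 ⟨hx, hy, hxyd⟩)).symm
                rcases htwo x hx with h | h
                · exact Finset.mem_union.2 (Or.inl (mem_YC.2 ⟨hy, hry.trans h⟩))
                · exact Finset.mem_union.2 (Or.inr (mem_YC.2 ⟨hy, hry.trans h⟩))
              · exact Finset.union_subset (hYsubB _) (hYsubB _)
            have hYd : Disjoint (YC χ d A B x₀) (YC χ d A B x₁) := by
              rw [Finset.disjoint_left]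
              intro z hz0 hz1
              exact hnr10 (((mem_YC.1 hz1).2).symm.trans (mem_YC.1 hz0).2)
            have hXcards : (XC χ d A B x₀).card + (XC χ d A B x₁).card = A.card := by
              rw [← Finset.card_union_of_disjoint hXd, ← hXu]
            have hYcards : (YC χ d A B x₀).card + (YC χ d A B x₁).card = B.card := by
              rw [← Finset.card_union_of_disjoint hYd, ← hYu]
            have hcard01 : (XC χ d A B x₀).card = (YC χ d A B x₁).card := by omega
            have hcard10 : (XC χ d A B x₁).card = (YC χ d A B x₀).card := by omega
            -- cross edges are all coloured e
            have hcross01 : ∀ x ∈ XC χ d A B x₀, ∀ y ∈ YC χ d A B x₁, χ x y = e := by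
              intro x hx y hy
              refine KE x (hXsubA _ hx) y (hYsubB _ hy) (fun hd => ?_)
              have hr : G.Reachable (Sum.inr y) (Sum.inl x) :=
                (SimpleGraph.Adj.reachable (RG_adj.2 ⟨hXsubA _ hx, hYsubB _ hy, hd⟩)).symm
              exact hnr10 (((mem_YC.1 hy).2).symm.trans (hr.trans (mem_XC.1 hx).2))
            have hcross10 : ∀ x ∈ XC χ d A B x₁, ∀ y ∈ YC χ d A B x₀, χ x y = e := by
              intro x hx y hy
              refine KE x (hXsubA _ hx) y (hYsubB _ hy) (fun hd => ?_)
              have hr : G.Reachable (Sum.inr y) (Sum.inl x) :=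
                (SimpleGraph.Adj.reachable (RG_adj.2 ⟨hXsubA _ hx, hYsubB _ hy, hd⟩)).symm
              exact hnr10 ((((mem_XC.1 hx).2).symm.trans hr.symm).trans (mem_YC.1 hy).2)
            obtain ⟨P₁, hPM₁, hConn₁, hL₁, hR₁⟩ := blob χ e (XC χ d A B x₀) (YC χ d A B x₁)
              A B (hXsubA _) (hYsubB _) hcard01 hcross01
            obtain ⟨P₂, hPM₂, hConn₂, hL₂, hR₂⟩ := blob χ e (XC χ d A B x₁) (YC χ d A B x₀)
              A B (hXsubA _) (hYsubB _) hcard10 hcross10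
            refine ⟨P₁, P₂, hPM₁, hPM₂, hConn₁, hConn₂, ?_, ?_, ?_, ?_⟩
            · rw [hL₁, hL₂]; exact hXd
            · rw [hR₁, hR₂]; exact hYd.symm
            · rw [hL₁, hL₂]; exact hXu.symm
            · rw [hR₁, hR₂, Finset.union_comm]; exact hYu.symm
          · push_neg at htwo
            obtain ⟨x₂, hx₂, hnr20, hnr21⟩ := htwo
            apply buildOne
            obtain ⟨y₀, hy₀, hy₀d⟩ := hfx x₀ hx₀
            obtain ⟨y₁, hy₁, hy₁d⟩ := hfx x₁ hx₁
            have hry0 : G.Reachable (Sum.inr y₀) (Sum.inl x₀) :=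
              (SimpleGraph.Adj.reachable (RG_adj.2 ⟨hx₀, hy₀, hy₀d⟩)).symm
            have hry1 : G.Reachable (Sum.inr y₁) (Sum.inl x₁) :=
              (SimpleGraph.Adj.reachable (RG_adj.2 ⟨hx₁, hy₁, hy₁d⟩)).symm
            have he21 : χ x₂ y₁ = e := KE x₂ hx₂ y₁ hy₁ (fun hd =>
              hnr21 ((SimpleGraph.Adj.reachable (RG_adj.2 ⟨hx₂, hy₁, hd⟩)).trans hry1))
            have he20 : χ x₂ y₀ = e := KE x₂ hx₂ y₀ hy₀ (fun hd =>
              hnr20 ((SimpleGraph.Adj.reachable (RG_adj.2 ⟨hx₂, hy₀, hd⟩)).trans hry0))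
            have step : ∀ z ∈ A, (colourGraph χ e).Reachable (Sum.inl z) (Sum.inr y₀) := by
              intro z hz
              by_cases hz0 : G.Reachable (Sum.inl z) (Sum.inl x₀)
              · have hzy1 : χ z y₁ = e := KE z hz y₁ hy₁ (fun hd =>
                  hnr10 ((((SimpleGraph.Adj.reachable (RG_adj.2 ⟨hz, hy₁, hd⟩)).trans
                    hry1)).symm.trans hz0))
                exact ((SimpleGraph.Adj.reachable (cg_adj.2 hzy1)).trans
                  (SimpleGraph.Adj.reachable (cg_adj.2 he21)).symm).trans
                  (SimpleGraph.Adj.reachable (cg_adj.2 he20))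
              · have hzy0 : χ z y₀ = e := KE z hz y₀ hy₀ (fun hd =>
                  hz0 ((SimpleGraph.Adj.reachable (RG_adj.2 ⟨hz, hy₀, hd⟩)).trans hry0))
                exact SimpleGraph.Adj.reachable (cg_adj.2 hzy0)
            intro x hx x' hx'
            exact (step x hx).trans (step x' hx').symm

def mkCM (χ : Fin n → Fin n → Fin 3) (d : Fin 3) (P : Finset (Fin n × Fin n))
    (hmono : ∀ p ∈ P, χ p.1 p.2 = d)
    (hinj1 : ∀ p ∈ P, ∀ q ∈ P, p.1 = q.1 → p = q)
    (hinj2 : ∀ p ∈ P, ∀ q ∈ P, p.2 = q.2 → p = q)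
    (hconn : ConnP χ d P) : CMatching n 3 χ :=
  ⟨d, P, hmono, hinj1, hinj2, hconn, none, Or.inl rfl⟩

lemma mkCM_verts (χ : Fin n → Fin n → Fin 3) (d : Fin 3) (P : Finset (Fin n × Fin n))
    (hmono : ∀ p ∈ P, χ p.1 p.2 = d)
    (hinj1 : ∀ p ∈ P, ∀ q ∈ P, p.1 = q.1 → p = q)
    (hinj2 : ∀ p ∈ P, ∀ q ∈ P, p.2 = q.2 → p = q)
    (hconn : ConnP χ d P) {v : Fin n ⊕ Fin n} :
    v ∈ (mkCM χ d P hmono hinj1 hinj2 hconn).verts ↔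
      (∃ a ∈ Lefts P, v = Sum.inl a) ∨ (∃ b ∈ Rights P, v = Sum.inr b) := by
  simp only [mkCM, CMatching.verts, Set.mem_setOf_eq, Option.mem_def]
  constructor
  · rintro (⟨p, hp, h | h⟩ | h)
    · exact Or.inl ⟨p.1, mem_Lefts.2 ⟨p, hp, rfl⟩, h⟩
    · exact Or.inr ⟨p.2, mem_Rights.2 ⟨p, hp, rfl⟩, h⟩
    · simp at h
  · rintro (⟨a, ha, rfl⟩ | ⟨b, hb, rfl⟩)
    · obtain ⟨p, hp, rfl⟩ := mem_Lefts.1 ha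
      exact Or.inl ⟨p, hp, Or.inl rfl⟩
    · obtain ⟨p, hp, rfl⟩ := mem_Rights.1 hb
      exact Or.inl ⟨p, hp, Or.inr rfl⟩

end NoFive

/-- If a 3-edge-coloured `K_{n,n}` cannot be partitioned into at most five
monochromatic connected matchings, then every colour has at least three
non-trivial monochromatic components. -/
theorem three_nontrivial_components_of_no_five_partition
    {n : ℕ} (χ : Fin n → Fin n → Fin 3) (h : ¬ FiveMatchingPartition χ)
    (c : Fin 3) :
    ∃ K₁ K₂ K₃ : (colourGraph χ c).ConnectedComponent,
      K₁ ≠ K₂ ∧ K₁ ≠ K₃ ∧ K₂ ≠ K₃ ∧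
      Nontriv χ c K₁ ∧ Nontriv χ c K₂ ∧ Nontriv χ c K₃ := by
  classical
  open NoFive in
  by_contra hcon
  apply h
  -- three distinct colours
  have hall3 : ∀ f : Fin 3, f = c ∨ f = c + 1 ∨ f = c + 2 := by
    have : ∀ c f : Fin 3, f = c ∨ f = c + 1 ∨ f = c + 2 := by decide
    exact this c
  obtain ⟨P₁, P₂, hPM₁, hPM₂, hC₁, hC₂, hdL, hdR, hnoc⟩ := NoFive.stage_c χ c hcon
  set A₁ := Finset.univ \ (Lefts P₁ ∪ Lefts P₂) with hA₁
  set B₁ := Finset.univ \ (Rights P₁ ∪ Rights P₂) with hB₁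
  have hLsub : Lefts P₁ ∪ Lefts P₂ ⊆ Finset.univ := Finset.subset_univ _
  have hRsub : Rights P₁ ∪ Rights P₂ ⊆ Finset.univ := Finset.subset_univ _
  have hcard₁ : A₁.card = B₁.card := by
    rw [hA₁, hB₁, Finset.card_sdiff_of_subset hLsub, Finset.card_sdiff_of_subset hRsub,
      Finset.card_union_of_disjoint hdL, Finset.card_union_of_disjoint hdR,
      card_Lefts hPM₁, card_Lefts hPM₂, card_Rights hPM₁, card_Rights hPM₂]
  obtain ⟨M₃, hPM₃, hC₃, hF1⟩ := NoFive.stage_red χ (c + 1) A₁ B₁ hcard₁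
  have hLM₃sub : Lefts M₃ ⊆ A₁ := by
    intro a ha
    obtain ⟨p, hp, hpa⟩ := mem_Lefts.1 ha
    exact hpa ▸ hPM₃.memA p hp
  have hRM₃sub : Rights M₃ ⊆ B₁ := by
    intro b hb
    obtain ⟨p, hp, hpb⟩ := mem_Rights.1 hb
    exact hpb ▸ hPM₃.memB p hp
  set A₂ := A₁ \ Lefts M₃ with hA₂
  set B₂ := B₁ \ Rights M₃ with hB₂
  have hcard₂ : A₂.card = B₂.card := by
    rw [hA₂, hB₂, Finset.card_sdiff_of_subset hLM₃sub, Finset.card_sdiff_of_subset hRM₃sub, hcard₁,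
      card_Lefts hPM₃, card_Rights hPM₃]
  have hnc₂ : ∀ x ∈ A₂, ∀ y ∈ B₂, χ x y ≠ c := by
    intro x hx y hy
    have hx1 : x ∈ A₁ := (Finset.mem_sdiff.1 hx).1
    have hy1 : y ∈ B₁ := (Finset.mem_sdiff.1 hy).1
    exact hnoc x y (Finset.mem_sdiff.1 hx1).2 (Finset.mem_sdiff.1 hy1).2
  obtain ⟨Pb₁, Pb₂, hPMb₁, hPMb₂, hCb₁, hCb₂, hdLb, hdRb, hLbu, hRbu⟩ :=
    NoFive.stage_blue χ c (c + 1) (c + 2) hall3 A₂ B₂ hcard₂ hnc₂ hF1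
  -- the five matchings
  set CM0 := mkCM χ c P₁ hPM₁.mono hPM₁.inj1 hPM₁.inj2 hC₁ with hCM0
  set CM1 := mkCM χ c P₂ hPM₂.mono hPM₂.inj1 hPM₂.inj2 hC₂ with hCM1
  set CM2 := mkCM χ (c + 1) M₃ hPM₃.mono hPM₃.inj1 hPM₃.inj2 hC₃ with hCM2
  set CM3 := mkCM χ (c + 2) Pb₁ hPMb₁.mono hPMb₁.inj1 hPMb₁.inj2 hCb₁ with hCM3
  set CM4 := mkCM χ (c + 2) Pb₂ hPMb₂.mono hPMb₂.inj1 hPMb₂.inj2 hCb₂ with hCM4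
  -- left/right disjointness facts
  have hLb₁A : Lefts Pb₁ ⊆ A₂ := hLbu ▸ Finset.subset_union_left
  have hLb₂A : Lefts Pb₂ ⊆ A₂ := hLbu ▸ Finset.subset_union_right
  have hRb₁B : Rights Pb₁ ⊆ B₂ := hRbu ▸ Finset.subset_union_left
  have hRb₂B : Rights Pb₂ ⊆ B₂ := hRbu ▸ Finset.subset_union_right
  have hdisjA₁L : ∀ {S : Finset (Fin n)}, S ⊆ A₁ → Disjoint (Lefts P₁) S ∧ Disjoint (Lefts P₂) S := by
    intro S hS
    constructor <;> (rw [Finset.disjoint_left]; intro a h1 h2)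
    · exact (Finset.mem_sdiff.1 (hS h2)).2 (Finset.mem_union.2 (Or.inl h1))
    · exact (Finset.mem_sdiff.1 (hS h2)).2 (Finset.mem_union.2 (Or.inr h1))
  have hdisjB₁R : ∀ {S : Finset (Fin n)}, S ⊆ B₁ → Disjoint (Rights P₁) S ∧ Disjoint (Rights P₂) S := by
    intro S hS
    constructor <;> (rw [Finset.disjoint_left]; intro a h1 h2)
    · exact (Finset.mem_sdiff.1 (hS h2)).2 (Finset.mem_union.2 (Or.inl h1))
    · exact (Finset.mem_sdiff.1 (hS h2)).2 (Finset.mem_union.2 (Or.inr h1))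
  have hA₂sub : A₂ ⊆ A₁ := Finset.sdiff_subset
  have hB₂sub : B₂ ⊆ B₁ := Finset.sdiff_subset
  have hdM₃L : ∀ {S : Finset (Fin n)}, S ⊆ A₂ → Disjoint (Lefts M₃) S := by
    intro S hS
    rw [Finset.disjoint_left]
    intro a h1 h2
    exact (Finset.mem_sdiff.1 (hS h2)).2 h1
  have hdM₃R : ∀ {S : Finset (Fin n)}, S ⊆ B₂ → Disjoint (Rights M₃) S := by
    intro S hS
    rw [Finset.disjoint_left]
    intro a h1 h2
    exact (Finset.mem_sdiff.1 (hS h2)).2 h1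
  -- named disjointness for all pairs (lefts, rights)
  have dL02 : Disjoint (Lefts P₁) (Lefts M₃) := (hdisjA₁L hLM₃sub).1
  have dL12 : Disjoint (Lefts P₂) (Lefts M₃) := (hdisjA₁L hLM₃sub).2
  have dL03 : Disjoint (Lefts P₁) (Lefts Pb₁) := (hdisjA₁L (hLb₁A.trans hA₂sub)).1
  have dL13 : Disjoint (Lefts P₂) (Lefts Pb₁) := (hdisjA₁L (hLb₁A.trans hA₂sub)).2
  have dL04 : Disjoint (Lefts P₁) (Lefts Pb₂) := (hdisjA₁L (hLb₂A.trans hA₂sub)).1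
  have dL14 : Disjoint (Lefts P₂) (Lefts Pb₂) := (hdisjA₁L (hLb₂A.trans hA₂sub)).2
  have dL23 : Disjoint (Lefts M₃) (Lefts Pb₁) := hdM₃L hLb₁A
  have dL24 : Disjoint (Lefts M₃) (Lefts Pb₂) := hdM₃L hLb₂A
  have dR02 : Disjoint (Rights P₁) (Rights M₃) := (hdisjB₁R hRM₃sub).1
  have dR12 : Disjoint (Rights P₂) (Rights M₃) := (hdisjB₁R hRM₃sub).2
  have dR03 : Disjoint (Rights P₁) (Rights Pb₁) := (hdisjB₁R (hRb₁B.trans hB₂sub)).1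
  have dR13 : Disjoint (Rights P₂) (Rights Pb₁) := (hdisjB₁R (hRb₁B.trans hB₂sub)).2
  have dR04 : Disjoint (Rights P₁) (Rights Pb₂) := (hdisjB₁R (hRb₂B.trans hB₂sub)).1
  have dR14 : Disjoint (Rights P₂) (Rights Pb₂) := (hdisjB₁R (hRb₂B.trans hB₂sub)).2
  have dR23 : Disjoint (Rights M₃) (Rights Pb₁) := hdM₃R hRb₁B
  have dR24 : Disjoint (Rights M₃) (Rights Pb₂) := hdM₃R hRb₂B
  -- verts disjointness
  have vdisj : ∀ (d₁ d₂ : Fin 3) (Q₁ Q₂ : Finset (Fin n × Fin n)) hm₁ hi₁ hj₁ hc₁ hm₂ hi₂ hj₂ hc₂,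
      Disjoint (Lefts Q₁) (Lefts Q₂) → Disjoint (Rights Q₁) (Rights Q₂) →
      Disjoint (mkCM χ d₁ Q₁ hm₁ hi₁ hj₁ hc₁).verts (mkCM χ d₂ Q₂ hm₂ hi₂ hj₂ hc₂).verts := by
    intro d₁ d₂ Q₁ Q₂ hm₁ hi₁ hj₁ hc₁ hm₂ hi₂ hj₂ hc₂ hdl hdr
    rw [Set.disjoint_left]
    intro v hv1 hv2
    rcases (mkCM_verts _ _ _ _ _ _ _).1 hv1 with ⟨a, ha, rfl⟩ | ⟨b, hb, rfl⟩
    · rcases (mkCM_verts _ _ _ _ _ _ _).1 hv2 with ⟨a', ha', he⟩ | ⟨b', hb', he⟩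
      · have haa : a = a' := Sum.inl_injective he
        subst haa
        exact Finset.disjoint_left.1 hdl ha ha'
      · exact absurd he (by simp)
    · rcases (mkCM_verts _ _ _ _ _ _ _).1 hv2 with ⟨a', ha', he⟩ | ⟨b', hb', he⟩
      · exact absurd he (by simp)
      · have hbb : b = b' := Sum.inr_injective he
        subst hbb
        exact Finset.disjoint_left.1 hdr hb hb'
  have D01 : Disjoint CM0.verts CM1.verts := by
    rw [hCM0, hCM1]; exact vdisj _ _ _ _ _ _ _ _ _ _ _ _ hdL hdR
  have D02 : Disjoint CM0.verts CM2.verts := by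
    rw [hCM0, hCM2]; exact vdisj _ _ _ _ _ _ _ _ _ _ _ _ dL02 dR02
  have D03 : Disjoint CM0.verts CM3.verts := by
    rw [hCM0, hCM3]; exact vdisj _ _ _ _ _ _ _ _ _ _ _ _ dL03 dR03
  have D04 : Disjoint CM0.verts CM4.verts := by
    rw [hCM0, hCM4]; exact vdisj _ _ _ _ _ _ _ _ _ _ _ _ dL04 dR04
  have D12 : Disjoint CM1.verts CM2.verts := by
    rw [hCM1, hCM2]; exact vdisj _ _ _ _ _ _ _ _ _ _ _ _ dL12 dR12
  have D13 : Disjoint CM1.verts CM3.verts := by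
    rw [hCM1, hCM3]; exact vdisj _ _ _ _ _ _ _ _ _ _ _ _ dL13 dR13
  have D14 : Disjoint CM1.verts CM4.verts := by
    rw [hCM1, hCM4]; exact vdisj _ _ _ _ _ _ _ _ _ _ _ _ dL14 dR14
  have D23 : Disjoint CM2.verts CM3.verts := by
    rw [hCM2, hCM3]; exact vdisj _ _ _ _ _ _ _ _ _ _ _ _ dL23 dR23
  have D24 : Disjoint CM2.verts CM4.verts := by
    rw [hCM2, hCM4]; exact vdisj _ _ _ _ _ _ _ _ _ _ _ _ dL24 dR24
  have D34 : Disjoint CM3.verts CM4.verts := by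
    rw [hCM3, hCM4]; exact vdisj _ _ _ _ _ _ _ _ _ _ _ _ hdLb hdRb
  refine ⟨![CM0, CM1, CM2, CM3, CM4], ?_, ?_⟩
  · intro i j hij
    fin_cases i <;> fin_cases j <;>
      first
        | exact absurd rfl hij
        | exact D01 | exact D01.symm | exact D02 | exact D02.symm
        | exact D03 | exact D03.symm | exact D04 | exact D04.symm
        | exact D12 | exact D12.symm | exact D13 | exact D13.symm
        | exact D14 | exact D14.symm | exact D23 | exact D23.symm
        | exact D24 | exact D24.symm | exact D34 | exact D34.symm
  · rw [Set.eq_univ_iff_forall]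
    intro v
    rw [Set.mem_iUnion]
    have cover : ∀ a : Fin n, a ∈ Lefts P₁ ∨ a ∈ Lefts P₂ ∨ a ∈ Lefts M₃ ∨
        a ∈ Lefts Pb₁ ∨ a ∈ Lefts Pb₂ := by
      intro a
      by_cases h1 : a ∈ Lefts P₁
      · exact Or.inl h1
      by_cases h2 : a ∈ Lefts P₂
      · exact Or.inr (Or.inl h2)
      by_cases h3 : a ∈ Lefts M₃
      · exact Or.inr (Or.inr (Or.inl h3))
      have ha1 : a ∈ A₁ := Finset.mem_sdiff.2 ⟨Finset.mem_univ _, fun hm =>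
        (Finset.mem_union.1 hm).elim h1 h2⟩
      have ha2 : a ∈ A₂ := Finset.mem_sdiff.2 ⟨ha1, h3⟩
      rcases Finset.mem_union.1 (hLbu ▸ ha2) with h | h
      · exact Or.inr (Or.inr (Or.inr (Or.inl h)))
      · exact Or.inr (Or.inr (Or.inr (Or.inr h)))
    have coverR : ∀ b : Fin n, b ∈ Rights P₁ ∨ b ∈ Rights P₂ ∨ b ∈ Rights M₃ ∨
        b ∈ Rights Pb₁ ∨ b ∈ Rights Pb₂ := by
      intro b
      by_cases h1 : b ∈ Rights P₁
      · exact Or.inl h1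
      by_cases h2 : b ∈ Rights P₂
      · exact Or.inr (Or.inl h2)
      by_cases h3 : b ∈ Rights M₃
      · exact Or.inr (Or.inr (Or.inl h3))
      have hb1 : b ∈ B₁ := Finset.mem_sdiff.2 ⟨Finset.mem_univ _, fun hm =>
        (Finset.mem_union.1 hm).elim h1 h2⟩
      have hb2 : b ∈ B₂ := Finset.mem_sdiff.2 ⟨hb1, h3⟩
      rcases Finset.mem_union.1 (hRbu ▸ hb2) with h | h
      · exact Or.inr (Or.inr (Or.inr (Or.inl h)))
      · exact Or.inr (Or.inr (Or.inr (Or.inr h)))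
    have hv0 : ∀ v, v ∈ CM0.verts ↔ (∃ a ∈ Lefts P₁, v = Sum.inl a) ∨
        (∃ b ∈ Rights P₁, v = Sum.inr b) := by
      intro v; rw [hCM0]; exact mkCM_verts _ _ _ _ _ _ _
    have hv1 : ∀ v, v ∈ CM1.verts ↔ (∃ a ∈ Lefts P₂, v = Sum.inl a) ∨
        (∃ b ∈ Rights P₂, v = Sum.inr b) := by
      intro v; rw [hCM1]; exact mkCM_verts _ _ _ _ _ _ _
    have hv2 : ∀ v, v ∈ CM2.verts ↔ (∃ a ∈ Lefts M₃, v = Sum.inl a) ∨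
        (∃ b ∈ Rights M₃, v = Sum.inr b) := by
      intro v; rw [hCM2]; exact mkCM_verts _ _ _ _ _ _ _
    have hv3 : ∀ v, v ∈ CM3.verts ↔ (∃ a ∈ Lefts Pb₁, v = Sum.inl a) ∨
        (∃ b ∈ Rights Pb₁, v = Sum.inr b) := by
      intro v; rw [hCM3]; exact mkCM_verts _ _ _ _ _ _ _
    have hv4 : ∀ v, v ∈ CM4.verts ↔ (∃ a ∈ Lefts Pb₂, v = Sum.inl a) ∨
        (∃ b ∈ Rights Pb₂, v = Sum.inr b) := by
      intro v; rw [hCM4]; exact mkCM_verts _ _ _ _ _ _ _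
    rcases v with a | b
    · rcases cover a with h | h | h | h | h
      · exact ⟨0, (hv0 _).2 (Or.inl ⟨a, h, rfl⟩)⟩
      · exact ⟨1, (hv1 _).2 (Or.inl ⟨a, h, rfl⟩)⟩
      · exact ⟨2, (hv2 _).2 (Or.inl ⟨a, h, rfl⟩)⟩
      · exact ⟨3, (hv3 _).2 (Or.inl ⟨a, h, rfl⟩)⟩
      · exact ⟨4, (hv4 _).2 (Or.inl ⟨a, h, rfl⟩)⟩
    · rcases coverR b with h | h | h | h | h
      · exact ⟨0, (hv0 _).2 (Or.inr ⟨b, h, rfl⟩)⟩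
      · exact ⟨1, (hv1 _).2 (Or.inr ⟨b, h, rfl⟩)⟩
      · exact ⟨2, (hv2 _).2 (Or.inr ⟨b, h, rfl⟩)⟩
      · exact ⟨3, (hv3 _).2 (Or.inr ⟨b, h, rfl⟩)⟩
      · exact ⟨4, (hv4 _).2 (Or.inr ⟨b, h, rfl⟩)⟩
end

section
/- Suppose the edges of a balanced complete bipartite graph H are 3-coloured and V(H) cannot be partitioned into at most five monochromatic connected matchings. Then no two monochromatic components together cover all vertices of H. -/
open SimpleGraph

namespace CMwork
open Finset

variable {n : ℕ} (χ : Fin n → Fin n → Fin 3)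

lemma cg_adj {a b : Fin n} {c : Fin 3} (h : χ a b = c) :
    (colourGraph χ c).Adj (Sum.inl a) (Sum.inr b) :=
  ⟨a, b, h, Or.inl ⟨rfl, rfl⟩⟩

lemma mk_eq_of_colour {a b : Fin n} {c : Fin 3} (h : χ a b = c) :
    (colourGraph χ c).connectedComponentMk (Sum.inl a) =
      (colourGraph χ c).connectedComponentMk (Sum.inr b) :=
  ConnectedComponent.sound (cg_adj χ h).reachable

/-- `Covers χ A B k`: the vertex set `inl '' A ∪ inr '' B` can be partitioned into
at most `k` monochromatic connected matchings. -/
def Covers : Finset (Fin n) → Finset (Fin n) → ℕ → Prop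
  | A, B, 0 => A = ∅ ∧ B = ∅
  | A, B, (k+1) => ∃ A' ⊆ A, ∃ B' ⊆ B,
      (∃ M : CMatching n 3 χ,
        M.verts = Sum.inl '' (↑A' : Set (Fin n)) ∪ Sum.inr '' (↑B' : Set (Fin n))) ∧
      Covers (A \ A') (B \ B') k

/-- Construct the matching given by a bijection between `X` and `Y` inside a
monochromatic complete block. -/
lemma exists_block {c : Fin 3} {X Y : Finset (Fin n)} (hcard : X.card = Y.card)
    (hmono : ∀ a ∈ X, ∀ b ∈ Y, χ a b = c) :
    ∃ M : CMatching n 3 χ,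
      M.verts = Sum.inl '' (↑X : Set (Fin n)) ∪ Sum.inr '' (↑Y : Set (Fin n)) := by
  classical
  let e := Finset.equivOfCardEq hcard
  have hmem : ∀ {p : Fin n × Fin n},
      p ∈ X.attach.image (fun (a : {x // x ∈ X}) => ((a : Fin n), (e a : Fin n))) ↔
        ∃ a : {x // x ∈ X}, p = ((a : Fin n), (e a : Fin n)) := by
    intro p
    constructor
    · intro hp
      obtain ⟨a, _, rfl⟩ := Finset.mem_image.1 hp
      exact ⟨a, rfl⟩
    · rintro ⟨a, rfl⟩
      exact Finset.mem_image.2 ⟨a, Finset.mem_attach _ _, rfl⟩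
  refine ⟨⟨c, X.attach.image (fun (a : {x // x ∈ X}) => ((a : Fin n), (e a : Fin n))), ?_, ?_, ?_, ?_,
      none, Or.inl rfl⟩, ?_⟩
  · intro p hp
    obtain ⟨a, rfl⟩ := hmem.1 hp
    exact hmono _ a.2 _ (e a).2
  · intro p hp q hq h
    obtain ⟨a, rfl⟩ := hmem.1 hp
    obtain ⟨a', rfl⟩ := hmem.1 hq
    have : a = a' := Subtype.ext h
    subst this; rfl
  · intro p hp q hq h
    obtain ⟨a, rfl⟩ := hmem.1 hp
    obtain ⟨a', rfl⟩ := hmem.1 hq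
    have : a = a' := e.injective (Subtype.ext h)
    subst this; rfl
  · intro p hp q hq
    obtain ⟨a, rfl⟩ := hmem.1 hp
    obtain ⟨a', rfl⟩ := hmem.1 hq
    exact ((cg_adj χ (hmono _ a.2 _ (e a').2)).reachable).trans
      ((cg_adj χ (hmono _ a'.2 _ (e a').2)).reachable).symm
  · ext x
    simp only [CMatching.verts, Set.mem_setOf_eq, Option.not_mem_none, or_false,
      Set.mem_union, Set.mem_image, Finset.mem_coe]
    constructor
    · rintro ⟨p, hp, h | h⟩ <;> obtain ⟨a, rfl⟩ := hmem.1 hp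
      · exact Or.inl ⟨a, a.2, h.symm⟩
      · exact Or.inr ⟨e a, (e a).2, h.symm⟩
    · rintro (⟨a, ha, rfl⟩ | ⟨b, hb, rfl⟩)
      · exact ⟨_, hmem.2 ⟨⟨a, ha⟩, rfl⟩, Or.inl rfl⟩
      · exact ⟨_, hmem.2 ⟨e.symm ⟨b, hb⟩, rfl⟩, Or.inr (by simp)⟩

open Finset SimpleGraph

variable {n : ℕ} (χ : Fin n → Fin n → Fin 3)

lemma covers_step {A B A' B' : Finset (Fin n)} {k : ℕ} (hA' : A' ⊆ A) (hB' : B' ⊆ B)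
    (hM : ∃ M : CMatching n 3 χ,
      M.verts = Sum.inl '' (↑A' : Set (Fin n)) ∪ Sum.inr '' (↑B' : Set (Fin n)))
    (h : Covers χ (A \ A') (B \ B') k) : Covers χ A B (k+1) :=
  ⟨A', hA', B', hB', hM, h⟩

lemma covers_zero : Covers χ ∅ ∅ 0 := ⟨rfl, rfl⟩

lemma covers_succ {A B : Finset (Fin n)} {k : ℕ} (h : Covers χ A B k) :
    Covers χ A B (k+1) := by
  classical
  refine covers_step χ (Finset.empty_subset A) (Finset.empty_subset B) ?_ ?_
  · obtain ⟨M, hM⟩ := exists_block χ (c := 0) (X := (∅ : Finset (Fin n)))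
      (Y := (∅ : Finset (Fin n))) rfl (by simp)
    exact ⟨M, by simpa using hM⟩
  · simpa using h

lemma covers_le {A B : Finset (Fin n)} {k m : ℕ} (hk : k ≤ m) (h : Covers χ A B k) :
    Covers χ A B m := by
  induction hk with
  | refl => exact h
  | step _ ih => exact covers_succ χ ih

/-- A monochromatic complete block with equal sides is covered by one matching. -/
lemma covers_one {A B : Finset (Fin n)} (hcard : A.card = B.card)
    (hmono : ∃ c, ∀ a ∈ A, ∀ b ∈ B, χ a b = c) : Covers χ A B 1 := by
  classical
  obtain ⟨c, hc⟩ := hmono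
  refine covers_step χ le_rfl le_rfl ⟨(exists_block χ hcard hc).choose,
    (exists_block χ hcard hc).choose_spec⟩ ?_
  simp only [Finset.sdiff_self]
  exact covers_zero χ

/-- Maximal matching extraction: there is a connected matching using `good` edges
such that no `good` edge joins two uncovered vertices. -/
lemma exists_maxmatching {A B : Finset (Fin n)} {c : Fin 3} {good : Fin n → Fin n → Prop}
    (hmono : ∀ a ∈ A, ∀ b ∈ B, good a b → χ a b = c)
    (hreach : ∀ a ∈ A, ∀ b ∈ B, ∀ a' ∈ A, ∀ b' ∈ B, good a b → good a' b' →
      (colourGraph χ c).Reachable (Sum.inl a) (Sum.inl a')) :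
    ∃ A' ⊆ A, ∃ B' ⊆ B, A'.card = B'.card ∧
      (∃ M : CMatching n 3 χ,
        M.verts = Sum.inl '' (↑A' : Set (Fin n)) ∪ Sum.inr '' (↑B' : Set (Fin n))) ∧
      ∀ a ∈ A \ A', ∀ b ∈ B \ B', ¬ good a b := by
  classical
  set Ok : Finset (Fin n × Fin n) → Prop := fun F =>
    (∀ p ∈ F, p.1 ∈ A ∧ p.2 ∈ B ∧ good p.1 p.2) ∧
    (∀ p ∈ F, ∀ q ∈ F, p.1 = q.1 → p = q) ∧
    (∀ p ∈ F, ∀ q ∈ F, p.2 = q.2 → p = q) with hOk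
  have hne : ((Finset.univ : Finset (Fin n × Fin n)).powerset.filter Ok).Nonempty := by
    refine ⟨∅, Finset.mem_filter.2 ⟨Finset.mem_powerset.2 (Finset.empty_subset _), ?_⟩⟩
    refine ⟨fun p hp => absurd hp (Finset.notMem_empty p), fun p hp => absurd hp (Finset.notMem_empty p), fun p hp => absurd hp (Finset.notMem_empty p)⟩
  obtain ⟨F, hFmem, hFmax⟩ := Finset.exists_max_image _ Finset.card hne
  obtain ⟨-, hF⟩ := Finset.mem_filter.1 hFmem
  obtain ⟨hF1, hF2, hF3⟩ := hF
  refine ⟨F.image Prod.fst, ?_, F.image Prod.snd, ?_, ?_, ⟨⟨c, F, ?_, hF2, hF3, ?_, none, Or.inl rfl⟩, ?_⟩, ?_⟩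
  · intro a ha
    obtain ⟨p, hp, rfl⟩ := Finset.mem_image.1 ha
    exact (hF1 p hp).1
  · intro b hb
    obtain ⟨p, hp, rfl⟩ := Finset.mem_image.1 hb
    exact (hF1 p hp).2.1
  · rw [Finset.card_image_of_injOn, Finset.card_image_of_injOn]
    · intro p hp q hq h; exact hF3 p hp q hq h
    · intro p hp q hq h; exact hF2 p hp q hq h
  · intro p hp; exact hmono _ (hF1 p hp).1 _ (hF1 p hp).2.1 (hF1 p hp).2.2
  · intro p hp q hq
    exact hreach _ (hF1 p hp).1 _ (hF1 p hp).2.1 _ (hF1 q hq).1 _ (hF1 q hq).2.1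
      (hF1 p hp).2.2 (hF1 q hq).2.2
  · ext x
    simp only [CMatching.verts, Set.mem_setOf_eq, Option.not_mem_none, or_false,
      Set.mem_union, Set.mem_image, Finset.mem_coe, Finset.mem_image]
    constructor
    · rintro ⟨p, hp, rfl | rfl⟩
      · exact Or.inl ⟨p.1, ⟨p, hp, rfl⟩, rfl⟩
      · exact Or.inr ⟨p.2, ⟨p, hp, rfl⟩, rfl⟩
    · rintro (⟨a, ⟨p, hp, rfl⟩, rfl⟩ | ⟨b, ⟨p, hp, rfl⟩, rfl⟩)
      · exact ⟨p, hp, Or.inl rfl⟩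
      · exact ⟨p, hp, Or.inr rfl⟩
  · intro a ha b hb hg
    rw [Finset.mem_sdiff] at ha hb
    have hnotmem : (a, b) ∉ F := fun hmem => ha.2 (Finset.mem_image.2 ⟨_, hmem, rfl⟩)
    have hOk' : Ok (insert (a, b) F) := by
      refine ⟨?_, ?_, ?_⟩
      · intro p hp
        rcases Finset.mem_insert.1 hp with rfl | hp
        · exact ⟨ha.1, hb.1, hg⟩
        · exact hF1 p hp
      · intro p hp q hq h
        rcases Finset.mem_insert.1 hp with rfl | hp <;>
          rcases Finset.mem_insert.1 hq with rfl | hq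
        · rfl
        · exact absurd (Finset.mem_image.2 ⟨q, hq, h.symm⟩) ha.2
        · exact absurd (Finset.mem_image.2 ⟨p, hp, h⟩) ha.2
        · exact hF2 p hp q hq h
      · intro p hp q hq h
        rcases Finset.mem_insert.1 hp with rfl | hp <;>
          rcases Finset.mem_insert.1 hq with rfl | hq
        · rfl
        · exact absurd (Finset.mem_image.2 ⟨q, hq, h.symm⟩) hb.2
        · exact absurd (Finset.mem_image.2 ⟨p, hp, h⟩) hb.2
        · exact hF3 p hp q hq h
    have hmem' : insert (a, b) F ∈ (Finset.univ : Finset (Fin n × Fin n)).powerset.filter Ok :=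
      Finset.mem_filter.2 ⟨Finset.mem_powerset.2 (Finset.subset_univ _), hOk'⟩
    have := hFmax _ hmem'
    rw [Finset.card_insert_of_notMem hnotmem] at this
    omega

open Finset SimpleGraph

variable {n : ℕ} (χ : Fin n → Fin n → Fin 3)

lemma covers_two_core {A B : Finset (Fin n)} (hcard : A.card = B.card) (c : Fin 3)
    (good : Fin n → Fin n → Prop)
    (hmono : ∀ a ∈ A, ∀ b ∈ B, good a b → χ a b = c)
    (hreach : ∀ a ∈ A, ∀ b ∈ B, ∀ a' ∈ A, ∀ b' ∈ B, good a b → good a' b' →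
      (colourGraph χ c).Reachable (Sum.inl a) (Sum.inl a'))
    (huni : ∀ A'' ⊆ A, ∀ B'' ⊆ B, A''.card = B''.card →
      (∀ a ∈ A'', ∀ b ∈ B'', ¬ good a b) → ∃ z, ∀ a ∈ A'', ∀ b ∈ B'', χ a b = z) :
    Covers χ A B 2 := by
  classical
  obtain ⟨A', hA', B', hB', hcard', hM, hleft⟩ := exists_maxmatching χ hmono hreach
  refine covers_step χ hA' hB' hM ?_
  have hc2 : (A \ A').card = (B \ B').card := by
    rw [Finset.card_sdiff_of_subset hA', Finset.card_sdiff_of_subset hB', hcard, hcard']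
  exact covers_one χ hc2 (huni _ (Finset.sdiff_subset) _ (Finset.sdiff_subset) hc2 hleft)

/-- If all of `A`'s left-vertices are mutually reachable in colour `y`,
and any `y`-free rectangle inside `A × B` is monochromatic, then 2 matchings suffice. -/
lemma covers_two_left {A B : Finset (Fin n)} (hcard : A.card = B.card) (y : Fin 3)
    (hconn : ∀ a ∈ A, ∀ a' ∈ A, (colourGraph χ y).Reachable (Sum.inl a) (Sum.inl a'))
    (huni : ∀ A'' ⊆ A, ∀ B'' ⊆ B, A''.card = B''.card →
      (∀ a ∈ A'', ∀ b ∈ B'', χ a b ≠ y) → ∃ z, ∀ a ∈ A'', ∀ b ∈ B'', χ a b = z) :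
    Covers χ A B 2 := by
  refine covers_two_core χ hcard y (fun a b => χ a b = y)
    (fun a _ b _ h => h) (fun a ha _ _ a' ha' _ _ _ _ => hconn a ha a' ha') huni

lemma covers_two_right {A B : Finset (Fin n)} (hcard : A.card = B.card) (y : Fin 3)
    (hconn : ∀ b ∈ B, ∀ b' ∈ B, (colourGraph χ y).Reachable (Sum.inr b) (Sum.inr b'))
    (huni : ∀ A'' ⊆ A, ∀ B'' ⊆ B, A''.card = B''.card →
      (∀ a ∈ A'', ∀ b ∈ B'', χ a b ≠ y) → ∃ z, ∀ a ∈ A'', ∀ b ∈ B'', χ a b = z) :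
    Covers χ A B 2 := by
  refine covers_two_core χ hcard y (fun a b => χ a b = y)
    (fun a _ b _ h => h) (fun a ha b hb a' ha' b' hb' h h' => ?_) huni
  exact ((cg_adj χ h).reachable).trans (((hconn b hb b' hb').trans
    ((cg_adj χ h').reachable.symm)))

/-- Four monochromatic blocks cover with three matchings. -/
lemma covers_blocks {A B A₁ A₂ B₁ B₂ : Finset (Fin n)}
    (hAu : A₁ ∪ A₂ = A) (hAd : Disjoint A₁ A₂)
    (hBu : B₁ ∪ B₂ = B) (hBd : Disjoint B₁ B₂)
    (hcard : A.card = B.card)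
    {z₁₁ z₂₂ z₁₂ z₂₁ : Fin 3}
    (h₁₁ : ∀ a ∈ A₁, ∀ b ∈ B₁, χ a b = z₁₁)
    (h₂₂ : ∀ a ∈ A₂, ∀ b ∈ B₂, χ a b = z₂₂)
    (h₁₂ : ∀ a ∈ A₁, ∀ b ∈ B₂, χ a b = z₁₂)
    (h₂₁ : ∀ a ∈ A₂, ∀ b ∈ B₁, χ a b = z₂₁) :
    Covers χ A B 3 := by
  classical
  have hAc : A₁.card + A₂.card = A.card := by
    rw [← hAu, Finset.card_union_of_disjoint hAd]
  have hBc : B₁.card + B₂.card = B.card := by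
    rw [← hBu, Finset.card_union_of_disjoint hBd]
  rcases le_or_gt B₁.card A₁.card with hle | hlt
  · obtain ⟨A₁', hA₁'s, hA₁'c⟩ := Finset.exists_subset_card_eq hle
    have st1A : A₁' ⊆ A := hA₁'s.trans (hAu ▸ Finset.subset_union_left)
    have st1B : B₁ ⊆ B := hBu ▸ Finset.subset_union_left
    refine covers_step χ st1A st1B
      (exists_block χ hA₁'c (fun a ha b hb => h₁₁ a (hA₁'s ha) b hb)) ?_
    have hA₂le : A₂.card ≤ B₂.card := by omega
    obtain ⟨B₂', hB₂'s, hB₂'c⟩ := Finset.exists_subset_card_eq hA₂le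
    have st2A : A₂ ⊆ A \ A₁' := by
      refine Finset.subset_sdiff.2 ⟨hAu ▸ Finset.subset_union_right, ?_⟩
      exact (hAd.symm.mono_right hA₁'s)
    have st2B : B₂' ⊆ B \ B₁ := by
      refine Finset.subset_sdiff.2 ⟨(hB₂'s.trans (hBu ▸ Finset.subset_union_right)), ?_⟩
      exact hBd.symm.mono_left hB₂'s
    refine covers_step χ st2A st2B
      (exists_block χ hB₂'c.symm (fun a ha b hb => h₂₂ a ha b (hB₂'s hb))) ?_
    have hset1 : (A \ A₁') \ A₂ = A₁ \ A₁' := by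
      ext a
      simp only [Finset.mem_sdiff, ← hAu, Finset.mem_union]
      constructor
      · rintro ⟨⟨h1 | h1, h2⟩, h3⟩
        · exact ⟨h1, h2⟩
        · exact absurd h1 h3
      · rintro ⟨h1, h2⟩
        exact ⟨⟨Or.inl h1, h2⟩, fun h => (Finset.disjoint_left.1 hAd) h1 h⟩
    have hset2 : (B \ B₁) \ B₂' = B₂ \ B₂' := by
      ext b
      simp only [Finset.mem_sdiff, ← hBu, Finset.mem_union]
      constructor
      · rintro ⟨⟨h1 | h1, h2⟩, h3⟩
        · exact absurd h1 h2
        · exact ⟨h1, h3⟩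
      · rintro ⟨h1, h2⟩
        exact ⟨⟨Or.inr h1, fun h => (Finset.disjoint_left.1 hBd) h h1⟩, h2⟩
    rw [hset1, hset2]
    refine covers_le χ (by norm_num) (covers_one χ ?_ ⟨z₁₂, fun a ha b hb =>
      h₁₂ a (Finset.mem_sdiff.1 ha).1 b (Finset.mem_sdiff.1 hb).1⟩)
    rw [Finset.card_sdiff_of_subset hA₁'s, Finset.card_sdiff_of_subset hB₂'s]
    omega
  · have hlt' : A₁.card ≤ B₁.card := le_of_lt hlt
    obtain ⟨B₁', hB₁'s, hB₁'c⟩ := Finset.exists_subset_card_eq hlt'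
    have st1A : A₁ ⊆ A := hAu ▸ Finset.subset_union_left
    have st1B : B₁' ⊆ B := hB₁'s.trans (hBu ▸ Finset.subset_union_left)
    refine covers_step χ st1A st1B
      (exists_block χ hB₁'c.symm (fun a ha b hb => h₁₁ a ha b (hB₁'s hb))) ?_
    have hB₂le : B₂.card ≤ A₂.card := by omega
    obtain ⟨A₂', hA₂'s, hA₂'c⟩ := Finset.exists_subset_card_eq hB₂le
    have st2A : A₂' ⊆ A \ A₁ := by
      refine Finset.subset_sdiff.2 ⟨(hA₂'s.trans (hAu ▸ Finset.subset_union_right)), ?_⟩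
      exact hAd.symm.mono_left hA₂'s
    have st2B : B₂ ⊆ B \ B₁' := by
      refine Finset.subset_sdiff.2 ⟨hBu ▸ Finset.subset_union_right, ?_⟩
      exact (hBd.symm.mono_right hB₁'s)
    refine covers_step χ st2A st2B
      (exists_block χ hA₂'c (fun a ha b hb => h₂₂ a (hA₂'s ha) b hb)) ?_
    have hset1 : (A \ A₁) \ A₂' = A₂ \ A₂' := by
      ext a
      simp only [Finset.mem_sdiff, ← hAu, Finset.mem_union]
      constructor
      · rintro ⟨⟨h1 | h1, h2⟩, h3⟩
        · exact absurd h1 h2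
        · exact ⟨h1, h3⟩
      · rintro ⟨h1, h2⟩
        exact ⟨⟨Or.inr h1, fun h => (Finset.disjoint_left.1 hAd) h h1⟩, h2⟩
    have hset2 : (B \ B₁') \ B₂ = B₁ \ B₁' := by
      ext b
      simp only [Finset.mem_sdiff, ← hBu, Finset.mem_union]
      constructor
      · rintro ⟨⟨h1 | h1, h2⟩, h3⟩
        · exact ⟨h1, h2⟩
        · exact absurd h1 h3
      · rintro ⟨h1, h2⟩
        exact ⟨⟨Or.inl h1, h2⟩, fun h => (Finset.disjoint_left.1 hBd) h1 h⟩
    rw [hset1, hset2]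
    refine covers_le χ (by norm_num) (covers_one χ ?_ ⟨z₂₁, fun a ha b hb =>
      h₂₁ a (Finset.mem_sdiff.1 ha).1 b (Finset.mem_sdiff.1 hb).1⟩)
    rw [Finset.card_sdiff_of_subset hA₂'s, Finset.card_sdiff_of_subset hB₁'s]
    omega

open Finset SimpleGraph

variable {n : ℕ} (χ : Fin n → Fin n → Fin 3)

lemma fin3_resolve : ∀ x y z : Fin 3, z ≠ x → z ≠ y → x ≠ y →
    ∀ w : Fin 3, w ≠ z → w = x ∨ w = y := by decide

/-- A complete bipartite graph using only two colours is covered by 3 matchings. -/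
lemma covers_twocolour {A B : Finset (Fin n)} (hcard : A.card = B.card) (x y : Fin 3)
    (hxy : ∀ a ∈ A, ∀ b ∈ B, χ a b = x ∨ χ a b = y) : Covers χ A B 3 := by
  classical
  by_cases hex : ∃ a ∈ A, ∃ b ∈ B, χ a b = x
  case neg =>
    -- everything is colour y
    refine covers_le χ (by norm_num) (covers_one χ hcard ⟨y, fun a ha b hb => ?_⟩)
    rcases hxy a ha b hb with h | h
    · exact absurd ⟨a, ha, b, hb, h⟩ hex
    · exact h
  case pos =>
  obtain ⟨a₀, ha₀, b₀, hb₀, hab₀⟩ := hex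
  set Gx := colourGraph χ x with hGx
  set C := Gx.connectedComponentMk (Sum.inl a₀) with hC
  set p : Fin n → Prop := fun a => Gx.connectedComponentMk (Sum.inl a) = C with hp
  set q : Fin n → Prop := fun b => Gx.connectedComponentMk (Sum.inr b) = C with hq
  set A₁ := A.filter p with hA₁
  set A₂ := A.filter (fun a => ¬ p a) with hA₂
  set B₁ := B.filter q with hB₁
  set B₂ := B.filter (fun b => ¬ q b) with hB₂
  have ha₀1 : a₀ ∈ A₁ := Finset.mem_filter.2 ⟨ha₀, rfl⟩
  have hb₀1 : b₀ ∈ B₁ := Finset.mem_filter.2 ⟨hb₀, by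
    rw [hq]; exact (mk_eq_of_colour χ hab₀).symm.trans rfl⟩
  -- edges A₁ × B₂ and A₂ × B₁ are colour y
  have hA₁B₂ : ∀ a ∈ A₁, ∀ b ∈ B₂, χ a b = y := by
    intro a ha b hb
    rcases hxy a (Finset.mem_filter.1 ha).1 b (Finset.mem_filter.1 hb).1 with h | h
    · exfalso
      exact (Finset.mem_filter.1 hb).2
        ((mk_eq_of_colour χ h).symm.trans (Finset.mem_filter.1 ha).2)
    · exact h
  have hA₂B₁ : ∀ a ∈ A₂, ∀ b ∈ B₁, χ a b = y := by
    intro a ha b hb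
    rcases hxy a (Finset.mem_filter.1 ha).1 b (Finset.mem_filter.1 hb).1 with h | h
    · exfalso
      exact (Finset.mem_filter.1 ha).2
        ((mk_eq_of_colour χ h).trans (Finset.mem_filter.1 hb).2)
    · exact h
  -- a uniform-colour extraction principle used repeatedly
  have huniX : ∀ A'' ⊆ A, ∀ B'' ⊆ B, A''.card = B''.card →
      (∀ a ∈ A'', ∀ b ∈ B'', χ a b ≠ y) → ∃ z, ∀ a ∈ A'', ∀ b ∈ B'', χ a b = z := by
    intro A'' hA'' B'' hB'' _ hno
    refine ⟨x, fun a ha b hb => ?_⟩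
    rcases hxy a (hA'' ha) b (hB'' hb) with h | h
    · exact h
    · exact absurd h (hno a ha b hb)
  have huniY : ∀ A'' ⊆ A, ∀ B'' ⊆ B, A''.card = B''.card →
      (∀ a ∈ A'', ∀ b ∈ B'', χ a b ≠ x) → ∃ z, ∀ a ∈ A'', ∀ b ∈ B'', χ a b = z := by
    intro A'' hA'' B'' hB'' _ hno
    refine ⟨y, fun a ha b hb => ?_⟩
    rcases hxy a (hA'' ha) b (hB'' hb) with h | h
    · exact absurd h (hno a ha b hb)
    · exact h
  by_cases hA₂e : A₂ = ∅
  · have hallA : ∀ a ∈ A, p a := by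
      intro a ha
      by_contra hcon
      exact Finset.notMem_empty a (hA₂e ▸ Finset.mem_filter.2 ⟨ha, hcon⟩)
    by_cases hB₂e : B₂ = ∅
    · -- everything in C : use colour x connectivity
      refine covers_le χ (by norm_num) (covers_two_left χ hcard x ?_ huniY)
      intro a ha a' ha'
      exact ConnectedComponent.exact ((hallA a ha).trans (hallA a' ha').symm)
    · -- A₂ empty, B₂ nonempty: all of A reaches b₁ in colour y
      obtain ⟨b₁, hb₁⟩ := Finset.nonempty_iff_ne_empty.2 hB₂e
      have hstar : ∀ a ∈ A, χ a b₁ = y := fun a ha =>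
        hA₁B₂ a (Finset.mem_filter.2 ⟨ha, hallA a ha⟩) b₁ hb₁
      refine covers_le χ (by norm_num) (covers_two_left χ hcard y ?_ huniX)
      intro a ha a' ha'
      exact ((cg_adj χ (hstar a ha)).reachable).trans
        ((cg_adj χ (hstar a' ha')).reachable).symm
  · obtain ⟨a₁, ha₁⟩ := Finset.nonempty_iff_ne_empty.2 hA₂e
    by_cases hB₂e : B₂ = ∅
    · -- B₂ empty, A₂ nonempty: all of B reaches a₁ in colour y
      have hallB : ∀ b ∈ B, q b := by
        intro b hb
        by_contra hcon
        exact Finset.notMem_empty b (hB₂e ▸ Finset.mem_filter.2 ⟨hb, hcon⟩)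
      have hstar : ∀ b ∈ B, χ a₁ b = y := fun b hb =>
        hA₂B₁ a₁ ha₁ b (Finset.mem_filter.2 ⟨hb, hallB b hb⟩)
      refine covers_le χ (by norm_num) (covers_two_right χ hcard y ?_ huniX)
      intro b hb b' hb'
      exact ((cg_adj χ (hstar b hb)).reachable.symm).trans
        ((cg_adj χ (hstar b' hb')).reachable)
    · obtain ⟨b₁, hb₁⟩ := Finset.nonempty_iff_ne_empty.2 hB₂e
      set Gy := colourGraph χ y with hGy
      by_cases hD : Gy.connectedComponentMk (Sum.inr b₁) = Gy.connectedComponentMk (Sum.inl a₁)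
      · -- single y-component containing everything
        have hallA : ∀ a ∈ A, Gy.connectedComponentMk (Sum.inl a) =
            Gy.connectedComponentMk (Sum.inr b₁) := by
          intro a ha
          by_cases hpa : p a
          · exact mk_eq_of_colour χ (hA₁B₂ a (Finset.mem_filter.2 ⟨ha, hpa⟩) b₁ hb₁)
          · -- a ∈ A₂ : link through b₀ ∈ B₁
            have h1 : χ a b₀ = y := hA₂B₁ a (Finset.mem_filter.2 ⟨ha, hpa⟩) b₀ hb₀1
            have h2 : χ a₁ b₀ = y := hA₂B₁ a₁ ha₁ b₀ hb₀1
            exact (mk_eq_of_colour χ h1).trans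
              (((mk_eq_of_colour χ h2).symm).trans hD.symm)
        refine covers_le χ (by norm_num) (covers_two_left χ hcard y ?_ huniX)
        intro a ha a' ha'
        exact ConnectedComponent.exact ((hallA a ha).trans (hallA a' ha').symm)
      · -- two distinct y-components: four monochromatic blocks
        have hA₁D : ∀ a ∈ A₁, Gy.connectedComponentMk (Sum.inl a) =
            Gy.connectedComponentMk (Sum.inr b₁) :=
          fun a ha => mk_eq_of_colour χ (hA₁B₂ a ha b₁ hb₁)
        have hB₁D : ∀ b ∈ B₁, Gy.connectedComponentMk (Sum.inr b) =
            Gy.connectedComponentMk (Sum.inl a₁) :=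
          fun b hb => (mk_eq_of_colour χ (hA₂B₁ a₁ ha₁ b hb)).symm
        have hA₂D : ∀ a ∈ A₂, Gy.connectedComponentMk (Sum.inl a) =
            Gy.connectedComponentMk (Sum.inl a₁) :=
          fun a ha => (mk_eq_of_colour χ (hA₂B₁ a ha b₀ hb₀1)).trans (hB₁D b₀ hb₀1)
        have hB₂D : ∀ b ∈ B₂, Gy.connectedComponentMk (Sum.inr b) =
            Gy.connectedComponentMk (Sum.inr b₁) :=
          fun b hb => ((mk_eq_of_colour χ (hA₁B₂ a₀ ha₀1 b hb)).symm).trans (hA₁D a₀ ha₀1)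
        have h₁₁ : ∀ a ∈ A₁, ∀ b ∈ B₁, χ a b = x := by
          intro a ha b hb
          rcases hxy a (Finset.mem_filter.1 ha).1 b (Finset.mem_filter.1 hb).1 with h | h
          · exact h
          · exact absurd (((hA₁D a ha).symm.trans (mk_eq_of_colour χ h)).trans (hB₁D b hb)) hD
        have h₂₂ : ∀ a ∈ A₂, ∀ b ∈ B₂, χ a b = x := by
          intro a ha b hb
          rcases hxy a (Finset.mem_filter.1 ha).1 b (Finset.mem_filter.1 hb).1 with h | h
          · exact h
          · exact absurd ((((hB₂D b hb).symm.trans ((mk_eq_of_colour χ h).symm)).trans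
              (hA₂D a ha)).symm).symm hD
        exact covers_blocks χ (Finset.filter_union_filter_not_eq p A)
          (Finset.disjoint_filter_filter_not A A p)
          (Finset.filter_union_filter_not_eq q B)
          (Finset.disjoint_filter_filter_not B B q) hcard h₁₁ h₂₂ hA₁B₂ hA₂B₁

open Finset SimpleGraph

variable {n : ℕ} (χ : Fin n → Fin n → Fin 3)

lemma fin3_other : ∀ c : Fin 3, ∃ x y : Fin 3, ∀ w, w ≠ c → w = x ∨ w = y := by decide

lemma fin3_third : ∀ c₁ c₂ : Fin 3, c₁ ≠ c₂ →
    ∃ c₃, ∀ w, w ≠ c₁ → w ≠ c₂ → w = c₃ := by decide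

lemma covers_main (c₁ c₂ : Fin 3) (K₁ : (colourGraph χ c₁).ConnectedComponent)
    (K₂ : (colourGraph χ c₂).ConnectedComponent)
    (hcov : K₁.supp ∪ K₂.supp = Set.univ) :
    Covers χ Finset.univ Finset.univ 5 := by
  classical
  have hmem : ∀ x, (colourGraph χ c₁).connectedComponentMk x = K₁ ∨
      (colourGraph χ c₂).connectedComponentMk x = K₂ := by
    intro x
    have := Set.eq_univ_iff_forall.1 hcov x
    simpa [ConnectedComponent.mem_supp_iff] using this
  -- Step 1 : maximal c₁-matching inside K₁
  obtain ⟨Aone, hAone, Bone, hBone, hc1, hM1, hleft₁⟩ := exists_maxmatching χ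
    (A := Finset.univ) (B := Finset.univ) (c := c₁)
    (good := fun a b => χ a b = c₁ ∧ (colourGraph χ c₁).connectedComponentMk (Sum.inl a) = K₁)
    (fun a _ b _ h => h.1)
    (fun a _ b _ a' _ b' _ h h' => ConnectedComponent.exact (h.2.trans h'.2.symm))
  refine covers_step χ hAone hBone hM1 ?_
  -- Step 2 : maximal c₂-matching inside K₂ on the rest
  obtain ⟨Atwo, hAtwo, Btwo, hBtwo, hc2, hM2, hleft₂⟩ := exists_maxmatching χ
    (A := Finset.univ \ Aone) (B := Finset.univ \ Bone) (c := c₂)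
    (good := fun a b => χ a b = c₂ ∧ (colourGraph χ c₂).connectedComponentMk (Sum.inl a) = K₂)
    (fun a _ b _ h => h.1)
    (fun a _ b _ a' _ b' _ h h' => ConnectedComponent.exact (h.2.trans h'.2.symm))
  refine covers_step χ hAtwo hBtwo hM2 ?_
  set RA := (Finset.univ \ Aone) \ Atwo with hRAdef
  set RB := (Finset.univ \ Bone) \ Btwo with hRBdef
  have hRA : RA.card = RB.card := by
    rw [hRAdef, hRBdef, Finset.card_sdiff_of_subset hAtwo, Finset.card_sdiff_of_subset hBtwo,
      Finset.card_sdiff_of_subset (Finset.subset_univ _), Finset.card_sdiff_of_subset (Finset.subset_univ _),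
      hc1, hc2]
  have f1 : ∀ a ∈ RA, ∀ b ∈ RB,
      ¬ (χ a b = c₁ ∧ (colourGraph χ c₁).connectedComponentMk (Sum.inl a) = K₁) := by
    intro a ha b hb
    exact hleft₁ a (Finset.sdiff_subset ha) b (Finset.sdiff_subset hb)
  have f2 : ∀ a ∈ RA, ∀ b ∈ RB,
      ¬ (χ a b = c₂ ∧ (colourGraph χ c₂).connectedComponentMk (Sum.inl a) = K₂) :=
    hleft₂
  -- basic edge restrictions
  have e1 : ∀ a ∈ RA, ∀ b ∈ RB,
      (colourGraph χ c₁).connectedComponentMk (Sum.inl a) = K₁ → χ a b ≠ c₁ :=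
    fun a ha b hb h hc => f1 a ha b hb ⟨hc, h⟩
  have e2 : ∀ a ∈ RA, ∀ b ∈ RB,
      (colourGraph χ c₁).connectedComponentMk (Sum.inr b) = K₁ → χ a b ≠ c₁ :=
    fun a ha b hb h hc => f1 a ha b hb ⟨hc, (mk_eq_of_colour χ hc).trans h⟩
  have e3 : ∀ a ∈ RA, ∀ b ∈ RB,
      (colourGraph χ c₁).connectedComponentMk (Sum.inl a) ≠ K₁ → χ a b ≠ c₂ := by
    intro a ha b hb h hc
    rcases hmem (Sum.inl a) with h' | h'
    · exact h h'
    · exact f2 a ha b hb ⟨hc, h'⟩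
  have e4 : ∀ a ∈ RA, ∀ b ∈ RB,
      (colourGraph χ c₁).connectedComponentMk (Sum.inr b) ≠ K₁ → χ a b ≠ c₂ := by
    intro a ha b hb h hc
    rcases hmem (Sum.inr b) with h' | h'
    · exact h h'
    · exact f2 a ha b hb ⟨hc, (mk_eq_of_colour χ hc).trans h'⟩
  by_cases hcc : c₁ = c₂
  · -- the two components have the same colour : the rest avoids that colour entirely
    subst hcc
    obtain ⟨x, y, hxy⟩ := fin3_other c₁
    refine covers_twocolour χ hRA x y (fun a ha b hb => hxy _ ?_)
    intro hc
    by_cases h : (colourGraph χ c₁).connectedComponentMk (Sum.inl a) = K₁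
    · exact e1 a ha b hb h hc
    · exact e3 a ha b hb h hc
  · obtain ⟨c₃, hc₃⟩ := fin3_third c₁ c₂ hcc
    set pQ : Fin n → Prop := fun a => (colourGraph χ c₁).connectedComponentMk (Sum.inl a) = K₁
      with hpQ
    set pT : Fin n → Prop := fun b => (colourGraph χ c₁).connectedComponentMk (Sum.inr b) = K₁
      with hpT
    set Q := RA.filter pQ with hQdef
    set P := RA.filter (fun a => ¬ pQ a) with hPdef
    set T := RB.filter pT with hTdef
    set S := RB.filter (fun b => ¬ pT b) with hSdef
    have hsplitA : ∀ a ∈ RA, a ∈ Q ∨ a ∈ P := by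
      intro a ha
      by_cases h : pQ a
      · exact Or.inl (Finset.mem_filter.2 ⟨ha, h⟩)
      · exact Or.inr (Finset.mem_filter.2 ⟨ha, h⟩)
    have hsplitB : ∀ b ∈ RB, b ∈ T ∨ b ∈ S := by
      intro b hb
      by_cases h : pT b
      · exact Or.inl (Finset.mem_filter.2 ⟨hb, h⟩)
      · exact Or.inr (Finset.mem_filter.2 ⟨hb, h⟩)
    -- the four block colour facts
    have g1 : ∀ a ∈ P, ∀ b ∈ T, χ a b = c₃ := by
      intro a ha b hb
      obtain ⟨haR, haP⟩ := Finset.mem_filter.1 ha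
      obtain ⟨hbR, hbT⟩ := Finset.mem_filter.1 hb
      exact hc₃ _ (e2 a haR b hbR hbT) (e3 a haR b hbR haP)
    have g2 : ∀ a ∈ Q, ∀ b ∈ S, χ a b = c₃ := by
      intro a ha b hb
      obtain ⟨haR, haQ⟩ := Finset.mem_filter.1 ha
      obtain ⟨hbR, hbS⟩ := Finset.mem_filter.1 hb
      exact hc₃ _ (e1 a haR b hbR haQ) (e4 a haR b hbR hbS)
    have g3 : ∀ a ∈ P, ∀ b ∈ S, χ a b ≠ c₂ := by
      intro a ha b hb
      exact e3 a (Finset.mem_filter.1 ha).1 b (Finset.mem_filter.1 hb).1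
        (Finset.mem_filter.1 ha).2
    have g4 : ∀ a ∈ Q, ∀ b ∈ T, χ a b ≠ c₁ := by
      intro a ha b hb
      exact e1 a (Finset.mem_filter.1 ha).1 b (Finset.mem_filter.1 hb).1
        (Finset.mem_filter.1 ha).2
    have hcardA : Q.card + P.card = RA.card :=
      Finset.card_filter_add_card_filter_not pQ
    have hcardB : T.card + S.card = RB.card :=
      Finset.card_filter_add_card_filter_not pT
    by_cases hQT : Q = ∅ ∧ T = ∅
    · -- everything avoids c₂ : two-coloured with c₁, c₃
      refine covers_twocolour χ hRA c₁ c₃ (fun a ha b hb => ?_)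
      have haP : a ∈ P := (hsplitA a ha).resolve_left (by rw [hQT.1]; exact Finset.notMem_empty a)
      have hbS : b ∈ S := (hsplitB b hb).resolve_left (by rw [hQT.2]; exact Finset.notMem_empty b)
      by_cases h : χ a b = c₁
      · exact Or.inl h
      · exact Or.inr (hc₃ _ h (g3 a haP b hbS))
    by_cases hPS : P = ∅ ∧ S = ∅
    · refine covers_twocolour χ hRA c₂ c₃ (fun a ha b hb => ?_)
      have haQ : a ∈ Q := (hsplitA a ha).resolve_right (by rw [hPS.1]; exact Finset.notMem_empty a)
      have hbT : b ∈ T := (hsplitB b hb).resolve_right (by rw [hPS.2]; exact Finset.notMem_empty b)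
      by_cases h : χ a b = c₂
      · exact Or.inl h
      · exact Or.inr (hc₃ _ (g4 a haQ b hbT) h)
    by_cases hPe : P = ∅
    · -- P empty : S nonempty, Q nonempty, left anchor via s₀, final colour c₂
      have hSne : S.Nonempty := by
        rcases Finset.eq_empty_or_nonempty S with h | h
        · exact absurd ⟨hPe, h⟩ hPS
        · exact h
      obtain ⟨s₀, hs₀⟩ := hSne
      have hallQ : ∀ a ∈ RA, a ∈ Q := by
        intro a ha
        rcases hsplitA a ha with h | h
        · exact h
        · rw [hPe] at h; exact absurd h (Finset.notMem_empty a)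
      refine covers_le χ (by norm_num) (covers_two_left χ hRA c₃ ?_ ?_)
      · intro a ha a' ha'
        exact ConnectedComponent.exact ((mk_eq_of_colour χ (g2 a (hallQ a ha) s₀ hs₀)).trans
          (mk_eq_of_colour χ (g2 a' (hallQ a' ha') s₀ hs₀)).symm)
      · intro A'' hA'' B'' hB'' _ hno
        rcases Finset.eq_empty_or_nonempty A'' with hAe | ⟨a₂, ha₂⟩
        · exact ⟨c₂, fun a ha => absurd ha (hAe ▸ Finset.notMem_empty a)⟩
        · have hBT : ∀ b ∈ B'', b ∈ T := by
            intro b hb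
            rcases hsplitB b (hB'' hb) with h | h
            · exact h
            · exact absurd (g2 a₂ (hallQ a₂ (hA'' ha₂)) b h) (hno a₂ ha₂ b hb)
          refine ⟨c₂, fun a ha b hb => ?_⟩
          by_contra hne
          exact hno a ha b hb (hc₃ _ (g4 a (hallQ a (hA'' ha)) b (hBT b hb)) hne)
    by_cases hSe : S = ∅
    · -- S empty : T nonempty, P nonempty, right anchor via p₀, final colour c₂
      have hPne : P.Nonempty := Finset.nonempty_iff_ne_empty.2 hPe
      obtain ⟨p₀, hp₀⟩ := hPne
      have hallT : ∀ b ∈ RB, b ∈ T := by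
        intro b hb
        rcases hsplitB b hb with h | h
        · exact h
        · rw [hSe] at h; exact absurd h (Finset.notMem_empty b)
      refine covers_le χ (by norm_num) (covers_two_right χ hRA c₃ ?_ ?_)
      · intro b hb b' hb'
        exact ConnectedComponent.exact ((mk_eq_of_colour χ (g1 p₀ hp₀ b (hallT b hb))).symm.trans
          (mk_eq_of_colour χ (g1 p₀ hp₀ b' (hallT b' hb'))))
      · intro A'' hA'' B'' hB'' _ hno
        rcases Finset.eq_empty_or_nonempty B'' with hBe | ⟨b₂, hb₂⟩
        · exact ⟨c₂, fun a ha b hb => absurd hb (hBe ▸ Finset.notMem_empty b)⟩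
        · have hAQ : ∀ a ∈ A'', a ∈ Q := by
            intro a ha
            rcases hsplitA a (hA'' ha) with h | h
            · exact h
            · exact absurd (g1 a h b₂ (hallT b₂ (hB'' hb₂))) (hno a ha b₂ hb₂)
          refine ⟨c₂, fun a ha b hb => ?_⟩
          by_contra hne
          exact hno a ha b hb (hc₃ _ (g4 a (hAQ a ha) b (hallT b (hB'' hb))) hne)
    by_cases hQe : Q = ∅
    · -- Q empty : T nonempty (from ¬hQT), all of RA is P, left anchor via t₀, final colour c₁
      have hTne : T.Nonempty := by
        rcases Finset.eq_empty_or_nonempty T with h | h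
        · exact absurd ⟨hQe, h⟩ hQT
        · exact h
      obtain ⟨t₀, ht₀⟩ := hTne
      have hallP : ∀ a ∈ RA, a ∈ P := by
        intro a ha
        rcases hsplitA a ha with h | h
        · rw [hQe] at h; exact absurd h (Finset.notMem_empty a)
        · exact h
      refine covers_le χ (by norm_num) (covers_two_left χ hRA c₃ ?_ ?_)
      · intro a ha a' ha'
        exact ConnectedComponent.exact ((mk_eq_of_colour χ (g1 a (hallP a ha) t₀ ht₀)).trans
          (mk_eq_of_colour χ (g1 a' (hallP a' ha') t₀ ht₀)).symm)
      · intro A'' hA'' B'' hB'' _ hno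
        rcases Finset.eq_empty_or_nonempty A'' with hAe | ⟨a₂, ha₂⟩
        · exact ⟨c₁, fun a ha => absurd ha (hAe ▸ Finset.notMem_empty a)⟩
        · have hBS : ∀ b ∈ B'', b ∈ S := by
            intro b hb
            rcases hsplitB b (hB'' hb) with h | h
            · exact absurd (g1 a₂ (hallP a₂ (hA'' ha₂)) b h) (hno a₂ ha₂ b hb)
            · exact h
          refine ⟨c₁, fun a ha b hb => ?_⟩
          by_contra hne
          exact hno a ha b hb (hc₃ _ hne (g3 a (hallP a (hA'' ha)) b (hBS b hb)))
    by_cases hTe : T = ∅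
    · -- T empty : S nonempty, Q nonempty, right anchor via q₀, final colour c₁
      have hQne : Q.Nonempty := Finset.nonempty_iff_ne_empty.2 hQe
      obtain ⟨q₀, hq₀⟩ := hQne
      have hallS : ∀ b ∈ RB, b ∈ S := by
        intro b hb
        rcases hsplitB b hb with h | h
        · rw [hTe] at h; exact absurd h (Finset.notMem_empty b)
        · exact h
      refine covers_le χ (by norm_num) (covers_two_right χ hRA c₃ ?_ ?_)
      · intro b hb b' hb'
        exact ConnectedComponent.exact ((mk_eq_of_colour χ (g2 q₀ hq₀ b (hallS b hb))).symm.trans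
          (mk_eq_of_colour χ (g2 q₀ hq₀ b' (hallS b' hb'))))
      · intro A'' hA'' B'' hB'' _ hno
        rcases Finset.eq_empty_or_nonempty B'' with hBe | ⟨b₂, hb₂⟩
        · exact ⟨c₁, fun a ha b hb => absurd hb (hBe ▸ Finset.notMem_empty b)⟩
        · have hAP : ∀ a ∈ A'', a ∈ P := by
            intro a ha
            rcases hsplitA a (hA'' ha) with h | h
            · exact absurd (g2 a h b₂ (hallS b₂ (hB'' hb₂))) (hno a ha b₂ hb₂)
            · exact h
          refine ⟨c₁, fun a ha b hb => ?_⟩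
          by_contra hne
          exact hno a ha b hb (hc₃ _ hne (g3 a (hAP a ha) b (hallS b (hB'' hb))))
    · -- all four classes nonempty
      obtain ⟨p₀, hp₀⟩ := Finset.nonempty_iff_ne_empty.2 hPe
      obtain ⟨q₀, hq₀⟩ := Finset.nonempty_iff_ne_empty.2 hQe
      obtain ⟨s₀, hs₀⟩ := Finset.nonempty_iff_ne_empty.2 hSe
      obtain ⟨t₀, ht₀⟩ := Finset.nonempty_iff_ne_empty.2 hTe
      set G₃ := colourGraph χ c₃ with hG₃
      have hCP : ∀ a ∈ P, G₃.connectedComponentMk (Sum.inl a) =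
          G₃.connectedComponentMk (Sum.inr t₀) :=
        fun a ha => mk_eq_of_colour χ (g1 a ha t₀ ht₀)
      have hCT : ∀ b ∈ T, G₃.connectedComponentMk (Sum.inr b) =
          G₃.connectedComponentMk (Sum.inr t₀) :=
        fun b hb => ((mk_eq_of_colour χ (g1 p₀ hp₀ b hb)).symm).trans (hCP p₀ hp₀)
      have hCQ : ∀ a ∈ Q, G₃.connectedComponentMk (Sum.inl a) =
          G₃.connectedComponentMk (Sum.inr s₀) :=
        fun a ha => mk_eq_of_colour χ (g2 a ha s₀ hs₀)
      have hCS : ∀ b ∈ S, G₃.connectedComponentMk (Sum.inr b) =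
          G₃.connectedComponentMk (Sum.inr s₀) :=
        fun b hb => ((mk_eq_of_colour χ (g2 q₀ hq₀ b hb)).symm).trans (hCQ q₀ hq₀)
      by_cases hCC : G₃.connectedComponentMk (Sum.inr t₀) = G₃.connectedComponentMk (Sum.inr s₀)
      · -- one c₃-component contains everything
        have hall : ∀ a ∈ RA, G₃.connectedComponentMk (Sum.inl a) =
            G₃.connectedComponentMk (Sum.inr t₀) := by
          intro a ha
          rcases hsplitA a ha with h | h
          · exact (hCQ a h).trans hCC.symm
          · exact hCP a h
        refine covers_le χ (by norm_num) (covers_two_left χ hRA c₃ ?_ ?_)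
        · intro a ha a' ha'
          exact ConnectedComponent.exact ((hall a ha).trans (hall a' ha').symm)
        · intro A'' hA'' B'' hB'' _ hno
          rcases Finset.eq_empty_or_nonempty A'' with hAe | ⟨a₂, ha₂⟩
          · exact ⟨c₁, fun a ha => absurd ha (hAe ▸ Finset.notMem_empty a)⟩
          rcases Finset.eq_empty_or_nonempty B'' with hBe | ⟨b₂, hb₂⟩
          · exact ⟨c₁, fun a ha b hb => absurd hb (hBe ▸ Finset.notMem_empty b)⟩
          rcases hsplitA a₂ (hA'' ha₂) with ha₂Q | ha₂P
          · -- a₂ ∈ Q : B'' ⊆ T, then A'' ⊆ Q, colour c₂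
            have hBT : ∀ b ∈ B'', b ∈ T := by
              intro b hb
              rcases hsplitB b (hB'' hb) with h | h
              · exact h
              · exact absurd (g2 a₂ ha₂Q b h) (hno a₂ ha₂ b hb)
            have hAQ : ∀ a ∈ A'', a ∈ Q := by
              intro a ha
              rcases hsplitA a (hA'' ha) with h | h
              · exact h
              · exact absurd (g1 a h b₂ (hBT b₂ hb₂)) (hno a ha b₂ hb₂)
            refine ⟨c₂, fun a ha b hb => ?_⟩
            by_contra hne
            exact hno a ha b hb (hc₃ _ (g4 a (hAQ a ha) b (hBT b hb)) hne)
          · -- a₂ ∈ P : B'' ⊆ S, then A'' ⊆ P, colour c₁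
            have hBS : ∀ b ∈ B'', b ∈ S := by
              intro b hb
              rcases hsplitB b (hB'' hb) with h | h
              · exact absurd (g1 a₂ ha₂P b h) (hno a₂ ha₂ b hb)
              · exact h
            have hAP : ∀ a ∈ A'', a ∈ P := by
              intro a ha
              rcases hsplitA a (hA'' ha) with h | h
              · exact absurd (g2 a h b₂ (hBS b₂ hb₂)) (hno a ha b₂ hb₂)
              · exact h
            refine ⟨c₁, fun a ha b hb => ?_⟩
            by_contra hne
            exact hno a ha b hb (hc₃ _ hne (g3 a (hAP a ha) b (hBS b hb)))
      · -- two distinct c₃-components : four monochromatic blocks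
        have h₁₁ : ∀ a ∈ Q, ∀ b ∈ T, χ a b = c₂ := by
          intro a ha b hb
          by_contra hne
          have h3 : χ a b = c₃ := hc₃ _ (g4 a ha b hb) hne
          exact hCC (((hCQ a ha).symm.trans (mk_eq_of_colour χ h3)).trans (hCT b hb)).symm
        have h₂₂ : ∀ a ∈ P, ∀ b ∈ S, χ a b = c₁ := by
          intro a ha b hb
          by_contra hne
          have h3 : χ a b = c₃ := hc₃ _ hne (g3 a ha b hb)
          exact hCC (((hCP a ha).symm.trans (mk_eq_of_colour χ h3)).trans (hCS b hb))
        exact covers_blocks χ (Finset.filter_union_filter_not_eq pQ RA)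
          (Finset.disjoint_filter_filter_not RA RA pQ)
          (Finset.filter_union_filter_not_eq pT RB)
          (Finset.disjoint_filter_filter_not RB RB pT) hRA h₁₁ h₂₂ g2 g1

open Finset SimpleGraph

variable {n : ℕ} (χ : Fin n → Fin n → Fin 3)

lemma covers_to_family {A B : Finset (Fin n)} {k : ℕ} (h : Covers χ A B k) :
    ∃ M : Fin k → CMatching n 3 χ,
      (∀ i j, i ≠ j → Disjoint (M i).verts (M j).verts) ∧
      (⋃ i, (M i).verts) =
        Sum.inl '' (↑A : Set (Fin n)) ∪ Sum.inr '' (↑B : Set (Fin n)) := by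
  induction k generalizing A B with
  | zero =>
    obtain ⟨hA, hB⟩ := h
    refine ⟨Fin.elim0, fun i => i.elim0, ?_⟩
    subst hA hB
    simp
  | succ k ih =>
    obtain ⟨A', hA', B', hB', ⟨M₀, hM₀⟩, hrest⟩ := h
    obtain ⟨M', hdis, hun⟩ := ih hrest
    have hd : Disjoint (Sum.inl '' (↑A' : Set (Fin n)) ∪ Sum.inr '' (↑B' : Set (Fin n)))
        (Sum.inl '' (↑(A \ A') : Set (Fin n)) ∪ Sum.inr '' (↑(B \ B') : Set (Fin n))) := by
      rw [Set.disjoint_left]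
      rintro x (⟨a, ha, rfl⟩ | ⟨b, hb, rfl⟩) (⟨a', ha', h⟩ | ⟨b', hb', h⟩) <;>
        first
        | (cases h; exact (Finset.mem_sdiff.1 ha').2 ha)
        | (cases h; exact (Finset.mem_sdiff.1 hb').2 hb)
        | exact nomatch h
    have hsub : ∀ l, (M' l).verts ⊆
        Sum.inl '' (↑(A \ A') : Set (Fin n)) ∪ Sum.inr '' (↑(B \ B') : Set (Fin n)) :=
      fun l => hun ▸ Set.subset_iUnion (fun l => (M' l).verts) l
    refine ⟨Fin.cons M₀ M', ?_, ?_⟩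
    · intro i j hij
      induction i using Fin.cases with
      | zero =>
        induction j using Fin.cases with
        | zero => exact absurd rfl hij
        | succ j' =>
          rw [Fin.cons_zero, Fin.cons_succ, hM₀]
          exact hd.mono_right (hsub j')
      | succ i' =>
        induction j using Fin.cases with
        | zero =>
          rw [Fin.cons_zero, Fin.cons_succ, hM₀]
          exact (hd.mono_right (hsub i')).symm
        | succ j' =>
          rw [Fin.cons_succ, Fin.cons_succ]
          exact hdis i' j' (fun e => hij (congrArg Fin.succ e))
    · have hU : (⋃ i, ((Fin.cons M₀ M' : Fin (k+1) → CMatching n 3 χ) i).verts) =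
          M₀.verts ∪ ⋃ l, (M' l).verts := by
        apply Set.Subset.antisymm
        · refine Set.iUnion_subset fun i => ?_
          induction i using Fin.cases with
          | zero => rw [Fin.cons_zero]; exact Set.subset_union_left
          | succ l =>
            rw [Fin.cons_succ]
            exact (Set.subset_iUnion (fun l => (M' l).verts) l).trans Set.subset_union_right
        · refine Set.union_subset ?_ (Set.iUnion_subset fun l => ?_)
          · have := Set.subset_iUnion
              (fun i => ((Fin.cons M₀ M' : Fin (k+1) → CMatching n 3 χ) i).verts) 0
            rwa [Fin.cons_zero] at this
          · have := Set.subset_iUnion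
              (fun i => ((Fin.cons M₀ M' : Fin (k+1) → CMatching n 3 χ) i).verts) l.succ
            rwa [Fin.cons_succ] at this
      rw [hU, hM₀, hun]
      have e1 : ((↑A' : Set (Fin n)) ∪ ↑(A \ A')) = (↑A : Set (Fin n)) := by
        rw [← Finset.coe_union, Finset.union_sdiff_of_subset hA']
      have e2 : ((↑B' : Set (Fin n)) ∪ ↑(B \ B')) = (↑B : Set (Fin n)) := by
        rw [← Finset.coe_union, Finset.union_sdiff_of_subset hB']
      rw [Set.union_union_union_comm, ← Set.image_union, ← Set.image_union, e1, e2]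

end CMwork


/-- If a 3-edge-coloured `K_{n,n}` cannot be partitioned into at most five
monochromatic connected matchings, then no two monochromatic components
together cover all vertices. -/
theorem no_two_components_cover_of_no_five_partition
    {n : ℕ} (χ : Fin n → Fin n → Fin 3) (h : ¬ FiveMatchingPartition χ) :
    ¬ ∃ (c₁ c₂ : Fin 3) (K₁ : (colourGraph χ c₁).ConnectedComponent)
        (K₂ : (colourGraph χ c₂).ConnectedComponent),
        K₁.supp ∪ K₂.supp = Set.univ := by
  rintro ⟨c₁, c₂, K₁, K₂, hcov⟩
  apply h
  obtain ⟨M, hdis, hun⟩ := CMwork.covers_to_family χ (CMwork.covers_main χ c₁ c₂ K₁ K₂ hcov)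
  refine ⟨M, hdis, ?_⟩
  rw [hun]
  ext x
  simp only [Set.mem_union, Set.mem_image, Finset.coe_univ, Set.mem_univ, iff_true]
  cases x with
  | inl a => exact Or.inl ⟨a, trivial, rfl⟩
  | inr b => exact Or.inr ⟨b, trivial, rfl⟩
end

section
/- In any r-edge-colouring of a properly defined blow-up construction, at least 2r−1 cycles are needed: explicitly, there exists an r-edge-colouring of K_{n,n} (for suitable n) that cannot be partitioned into fewer than 2r−1 vertex-disjoint monochromatic cycles. Concretely, one starts from a properly r-edge-coloured K_{r,r}, blows up each vertex in one class to a set of size r, and in the other class blows up one vertex to a set of size r(r−1)+1; the resulting colouring of K_{r·r, r·r} admits no partition into fewer than 2r−1 disjoint monochromatic cycles. -/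
open SimpleGraph

/-- A monochromatic cycle in an `r`-edge-coloured `K_{n,n}`: an injective
cyclic sequence of vertices (of length `len ≥ 1`) whose consecutive vertices
are joined by edges of colour `colour` whenever `len ≥ 2`.  Single vertices
(`len = 1`) and single edges (`len = 2`) count as degenerate cycles. -/
structure MonoCycle (n r : ℕ) (χ : Fin n → Fin n → Fin r) where
  colour : Fin r
  len : ℕ
  pos : 0 < len
  f : ZMod len → Fin n ⊕ Fin n
  inj : Function.Injective f
  adj : 2 ≤ len → ∀ i : ZMod len, (colourGraph χ colour).Adj (f i) (f (i + 1))

namespace LBAux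

open Finset

/-- class of a right vertex -/
def bcl (r : ℕ) (y : Fin (r * r)) : ℕ :=
  if y.val ≤ r * (r - 1) then 0 else y.val - r * (r - 1)

/-- class of a left vertex -/
def acl (r : ℕ) (x : Fin (r * r)) : ℕ := x.val / r

lemma rr_aux {r : ℕ} (hr : 1 ≤ r) : r * (r - 1) + r = r * r := by
  cases r with
  | zero => omega
  | succ m => simp [Nat.succ_sub_one]; ring

lemma bcl_lt {r : ℕ} (hr : 1 ≤ r) (y : Fin (r * r)) : bcl r y < r := by
  have h := y.isLt
  have h2 := rr_aux hr
  unfold bcl; split <;> omega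

lemma acl_lt {r : ℕ} (hr : 1 ≤ r) (x : Fin (r * r)) : acl r x < r := by
  have h := x.isLt
  exact Nat.div_lt_of_lt_mul h

/-- The colouring: blow-up of the proper colouring `(a, b) ↦ a + b` of `K_{r,r}`. -/
def chi (r : ℕ) : Fin (r * r) → Fin (r * r) → Fin r := fun x y =>
  ⟨(acl r x + bcl r y) % r, by
    have := x.isLt
    rcases Nat.eq_zero_or_pos r with h | h
    · subst h; simp at this
    · exact Nat.mod_lt _ h⟩

lemma adj_cases {r : ℕ} {c : Fin r} {u v : Fin (r * r) ⊕ Fin (r * r)}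
    (h : (colourGraph (chi r) c).Adj u v) :
    (∃ x y, u = Sum.inl x ∧ v = Sum.inr y ∧ (acl r x + bcl r y) % r = c.val) ∨
    (∃ x y, u = Sum.inr y ∧ v = Sum.inl x ∧ (acl r x + bcl r y) % r = c.val) := by
  obtain ⟨a, b, hc, hor⟩ := h
  have hv : (acl r a + bcl r b) % r = c.val := congrArg Fin.val hc
  rcases hor with ⟨h1, h2⟩ | ⟨h1, h2⟩
  · exact Or.inl ⟨a, b, h1, h2, hv⟩
  · exact Or.inr ⟨a, b, h1, h2, hv⟩

lemma mod_rec {r a b c : ℕ} (ha : a < r) (hb : b < r) (hc : c < r)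
    (h : (a + b) % r = c) : a = (c + r - b) % r := by
  rcases Nat.lt_or_ge (a + b) r with h' | h'
  · rw [Nat.mod_eq_of_lt h'] at h
    have he : c + r - b = a + r := by omega
    rw [he, Nat.add_mod_right, Nat.mod_eq_of_lt ha]
  · have h2 : a + b - r < r := by omega
    rw [Nat.mod_eq_sub_mod h', Nat.mod_eq_of_lt h2] at h
    have he : c + r - b = a := by omega
    rw [he, Nat.mod_eq_of_lt ha]

lemma zmod_const {len : ℕ} [NeZero len] {α : Type*} (g : ZMod len → α)
    (h : ∀ i, g (i + 1) = g i) (i : ZMod len) : g i = g 0 := by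
  have key : ∀ m : ℕ, g (m : ZMod len) = g 0 := by
    intro m
    induction m with
    | zero => simp
    | succ p ih => rw [Nat.cast_succ, h]; exact ih
  have := key i.val
  rwa [ZMod.natCast_val, ZMod.cast_id] at this

section Cycle

variable {r : ℕ} (hr : 2 ≤ r) (C : MonoCycle (r * r) r (chi r))

include hr in
/-- All left vertices of a nondegenerate monochromatic cycle lie in one left
class, and all right vertices in one right class. -/
lemma cycle_struct (hlen : 2 ≤ C.len) :
    ∃ A B : ℕ, A < r ∧ B < r ∧
      (∀ i x, C.f i = Sum.inl x → acl r x = A) ∧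
      (∀ i y, C.f i = Sum.inr y → bcl r y = B) := by
  haveI : NeZero C.len := ⟨C.pos.ne'⟩
  have hr1 : 1 ≤ r := by omega
  set c := C.colour with hc
  set g : ZMod C.len → ℕ :=
    fun i => Sum.elim (fun x => acl r x) (fun y => (c.val + r - bcl r y) % r) (C.f i) with hg
  have hstep : ∀ i, g (i + 1) = g i := by
    intro i
    rcases adj_cases (C.adj hlen i) with ⟨x, y, h1, h2, h3⟩ | ⟨x, y, h1, h2, h3⟩
    · simp only [hg, h1, h2, Sum.elim_inl, Sum.elim_inr]
      exact (mod_rec (acl_lt hr1 x) (bcl_lt hr1 y) c.isLt h3).symm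
    · simp only [hg, h1, h2, Sum.elim_inl, Sum.elim_inr]
      exact mod_rec (acl_lt hr1 x) (bcl_lt hr1 y) c.isLt h3
  have hconst := zmod_const g hstep
  set A := g 0 with hA
  have hAlt : A < r := by
    rcases h0 : C.f 0 with x | y
    · have : g 0 = acl r x := by simp [hg, h0]
      rw [hA, this]; exact acl_lt hr1 x
    · have : g 0 = (c.val + r - bcl r y) % r := by simp [hg, h0]
      rw [hA, this]; exact Nat.mod_lt _ (by omega)
  have hleft : ∀ i x, C.f i = Sum.inl x → acl r x = A := by
    intro i x hix
    have := hconst i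
    simp only [hg, hix, Sum.elim_inl] at this
    exact this
  refine ⟨A, (c.val + r - A) % r, hAlt, Nat.mod_lt _ (by omega), hleft, ?_⟩
  intro i y hiy
  rcases adj_cases (C.adj hlen i) with ⟨x, y', h1, h2, h3⟩ | ⟨x, y', h1, h2, h3⟩
  · rw [hiy] at h1; exact absurd h1 (by simp)
  · rw [hiy] at h1
    have hyy : y' = y := by injection h1.symm
    have hax : acl r x = A := hleft _ x h2
    rw [← hyy, ← hax]
    rw [Nat.add_comm] at h3
    exact mod_rec (bcl_lt hr1 y') (acl_lt hr1 x) c.isLt h3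

/-- indices of left vertices -/
noncomputable def TL : Finset (ZMod C.len) :=
  haveI : NeZero C.len := ⟨C.pos.ne'⟩
  (univ : Finset (ZMod C.len)).filter (fun i => (C.f i).isLeft)

/-- indices of right vertices -/
noncomputable def TR : Finset (ZMod C.len) :=
  haveI : NeZero C.len := ⟨C.pos.ne'⟩
  (univ : Finset (ZMod C.len)).filter (fun i => (C.f i).isRight)

lemma card_TL_TR (hlen : 2 ≤ C.len) : (TL C).card = (TR C).card := by
  haveI : NeZero C.len := ⟨C.pos.ne'⟩
  have h1 : (TL C).card ≤ (TR C).card := by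
    apply card_le_card_of_injOn (fun i => i + 1)
    · intro i hi
      simp only [TL, mem_coe, mem_filter, mem_univ, true_and] at hi
      simp only [TR, mem_coe, mem_filter, mem_univ, true_and]
      rcases adj_cases (C.adj hlen i) with ⟨x, y, h1, h2, _⟩ | ⟨x, y, h1, h2, _⟩
      · rw [h2]; rfl
      · rw [h1] at hi; simp at hi
    · intro a _ b _ h
      exact add_left_injective 1 h
  have h2 : (TR C).card ≤ (TL C).card := by
    apply card_le_card_of_injOn (fun i => i + 1)
    · intro i hi
      simp only [TR, mem_coe, mem_filter, mem_univ, true_and] at hi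
      simp only [TL, mem_coe, mem_filter, mem_univ, true_and]
      rcases adj_cases (C.adj hlen i) with ⟨x, y, h1, h2, _⟩ | ⟨x, y, h1, h2, _⟩
      · rw [h1] at hi; simp at hi
      · rw [h2]; rfl
    · intro a _ b _ h
      exact add_left_injective 1 h
  omega

/-- vertex set of a cycle as a finset -/
noncomputable def FS : Finset (Fin (r * r) ⊕ Fin (r * r)) :=
  haveI : NeZero C.len := ⟨C.pos.ne'⟩
  (univ : Finset (ZMod C.len)).image C.f

lemma mem_FS {v : Fin (r * r) ⊕ Fin (r * r)} : v ∈ FS C ↔ ∃ i, C.f i = v := by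
  haveI : NeZero C.len := ⟨C.pos.ne'⟩
  simp [FS]

end Cycle

/-- the big right blob -/
def B0 (r : ℕ) : Finset (Fin (r * r) ⊕ Fin (r * r)) :=
  ((univ : Finset (Fin (r * r))).filter (fun y => bcl r y = 0)).image Sum.inr

/-- left side -/
def Lefts (r : ℕ) : Finset (Fin (r * r) ⊕ Fin (r * r)) :=
  (univ : Finset (Fin (r * r))).image Sum.inl

lemma mem_B0 {r : ℕ} {v : Fin (r * r) ⊕ Fin (r * r)} :
    v ∈ B0 r ↔ ∃ y, bcl r y = 0 ∧ Sum.inr y = v := by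
  simp [B0, and_comm]

lemma mem_Lefts {r : ℕ} {v : Fin (r * r) ⊕ Fin (r * r)} :
    v ∈ Lefts r ↔ ∃ x, Sum.inl x = v := by
  simp [Lefts]

section Cycle2

variable {r : ℕ} (hr : 2 ≤ r) (C : MonoCycle (r * r) r (chi r))

lemma FS_lefts_card (hlen : 2 ≤ C.len) :
    (FS C ∩ Lefts r).card = (TL C).card := by
  haveI : NeZero C.len := ⟨C.pos.ne'⟩
  have : FS C ∩ Lefts r = (TL C).image C.f := by
    ext v
    simp only [mem_inter, mem_FS, mem_Lefts, mem_image]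
    constructor
    · rintro ⟨⟨i, hi⟩, x, hx⟩
      refine ⟨i, ?_, hi⟩
      simp only [TL, mem_filter, mem_univ, true_and]
      rw [hi, ← hx]; rfl
    · rintro ⟨i, hi, hv⟩
      simp only [TL, mem_filter, mem_univ, true_and] at hi
      refine ⟨⟨i, hv⟩, ?_⟩
      rcases h : C.f i with x | y
      · exact ⟨x, by rw [← hv, h]⟩
      · rw [h] at hi; simp at hi
  rw [this, card_image_of_injective _ C.inj]

lemma FS_rights_eq (hlen : 2 ≤ C.len) :
    (FS C).filter (fun v => v.isRight) = (TR C).image C.f := by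
  haveI : NeZero C.len := ⟨C.pos.ne'⟩
  ext v
  simp only [mem_filter, mem_FS, mem_image]
  constructor
  · rintro ⟨⟨i, hi⟩, hright⟩
    refine ⟨i, ?_, hi⟩
    simp only [TR, mem_filter, mem_univ, true_and]
    rw [hi]; exact hright
  · rintro ⟨i, hi, hv⟩
    simp only [TR, mem_filter, mem_univ, true_and] at hi
    exact ⟨⟨i, hv⟩, hv ▸ hi⟩

lemma FS_rights_card (hlen : 2 ≤ C.len) :
    ((FS C).filter (fun v => v.isRight)).card = (TR C).card := by
  rw [FS_rights_eq C hlen, card_image_of_injective _ C.inj]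

lemma left_right_balance (hlen : 2 ≤ C.len) :
    (FS C ∩ Lefts r).card = ((FS C).filter (fun v => v.isRight)).card := by
  rw [FS_lefts_card C hlen, FS_rights_card C hlen, card_TL_TR C hlen]

/-- a degenerate cycle has one vertex -/
lemma FS_card_one (hlen : C.len < 2) : (FS C).card ≤ 1 := by
  haveI : NeZero C.len := ⟨C.pos.ne'⟩
  have hpos := C.pos
  calc (FS C).card ≤ (univ : Finset (ZMod C.len)).card := card_image_le
    _ = C.len := by rw [card_univ, ZMod.card]
    _ ≤ 1 := by omega

include hr in
/-- left vertices of a nondegenerate cycle all in one class of size ≤ r -/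
lemma lefts_le_r (hlen : 2 ≤ C.len) : (FS C ∩ Lefts r).card ≤ r := by
  have hr1 : 1 ≤ r := by omega
  obtain ⟨A, B, hAlt, hBlt, hleft, _⟩ := cycle_struct hr C hlen
  have hsub : FS C ∩ Lefts r ⊆
      ((univ : Finset (Fin (r * r))).filter (fun x => acl r x = A)).image Sum.inl := by
    intro v hv
    rw [mem_inter, mem_FS, mem_Lefts] at hv
    obtain ⟨⟨i, hi⟩, x, hx⟩ := hv
    rw [mem_image]
    exact ⟨x, by rw [mem_filter]; exact ⟨mem_univ _, hleft i x (by rw [hi, ← hx])⟩, hx⟩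
  calc (FS C ∩ Lefts r).card
      ≤ (((univ : Finset (Fin (r * r))).filter (fun x => acl r x = A)).image Sum.inl).card :=
        card_le_card hsub
    _ = ((univ : Finset (Fin (r * r))).filter (fun x => acl r x = A)).card :=
        card_image_of_injective _ Sum.inl_injective
    _ ≤ (univ : Finset (Fin r)).card := by
        apply card_le_card_of_injOn
          (fun x => (⟨x.val % r, Nat.mod_lt _ (by omega)⟩ : Fin r))
        · intro x _; exact mem_univ _
        · intro x hx y hy hxy
          simp only [coe_filter, Set.mem_setOf_eq, mem_univ, true_and] at hx hy
          have hm : x.val % r = y.val % r := by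
            have := congrArg Fin.val hxy
            simpa using this
          have hxv : x.val = r * A + x.val % r := by
            conv_lhs => rw [← Nat.div_add_mod x.val r]
            rw [show x.val / r = A from hx]
          have hyv : y.val = r * A + y.val % r := by
            conv_lhs => rw [← Nat.div_add_mod y.val r]
            rw [show y.val / r = A from hy]
          exact Fin.ext (by rw [hxv, hyv, hm])
    _ = r := by simp

include hr in
/-- key fact 1: a cycle covers at most `r` vertices of the big blob. -/
lemma cyc1 : (FS C ∩ B0 r).card ≤ r := by
  rcases Nat.lt_or_ge C.len 2 with hlen | hlen
  · calc (FS C ∩ B0 r).card ≤ (FS C).card := card_le_card inter_subset_left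
      _ ≤ 1 := FS_card_one C hlen
      _ ≤ r := by omega
  · have hsub : FS C ∩ B0 r ⊆ (FS C).filter (fun v => v.isRight) := by
      intro v hv
      rw [mem_inter, mem_B0] at hv
      rw [mem_filter]
      obtain ⟨hF, y, _, hy⟩ := hv
      exact ⟨hF, by rw [← hy]; rfl⟩
    calc (FS C ∩ B0 r).card ≤ ((FS C).filter (fun v => v.isRight)).card := card_le_card hsub
      _ = (FS C ∩ Lefts r).card := (left_right_balance C hlen).symm
      _ ≤ r := lefts_le_r hr C hlen

include hr in
/-- key fact 2: a cycle meeting the blob covers no more left vertices than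
blob vertices. -/
lemma cyc2 (hne : (FS C ∩ B0 r).Nonempty) :
    (FS C ∩ Lefts r).card ≤ (FS C ∩ B0 r).card := by
  rcases Nat.lt_or_ge C.len 2 with hlen | hlen
  · have hcard := FS_card_one C hlen
    obtain ⟨v, hv⟩ := hne
    have h0 : (FS C ∩ Lefts r).card = 0 := by
      rw [card_eq_zero, eq_empty_iff_forall_notMem]
      intro w hw
      rw [mem_inter, mem_B0] at hv
      rw [mem_inter, mem_Lefts] at hw
      have : w = v := by
        rw [card_le_one] at hcard
        exact hcard _ hw.1 _ hv.1
      obtain ⟨y, _, hy⟩ := hv.2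
      obtain ⟨x, hx⟩ := hw.2
      rw [this, ← hy] at hx
      exact absurd hx (by simp)
    omega
  · obtain ⟨A, B, hAlt, hBlt, hleft, hright⟩ := cycle_struct hr C hlen
    have hB0 : B = 0 := by
      obtain ⟨v, hv⟩ := hne
      rw [mem_inter, mem_B0] at hv
      obtain ⟨hF, y, hy0, hy⟩ := hv
      rw [mem_FS] at hF
      obtain ⟨i, hi⟩ := hF
      rw [← hright i y (by rw [hi, ← hy])]
      exact hy0
    have heq : FS C ∩ B0 r = (FS C).filter (fun v => v.isRight) := by
      ext v
      rw [mem_inter, mem_B0, mem_filter]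
      constructor
      · rintro ⟨hF, y, _, hy⟩
        exact ⟨hF, by rw [← hy]; rfl⟩
      · rintro ⟨hF, hright'⟩
        refine ⟨hF, ?_⟩
        rcases h : v with x | y
        · rw [h] at hright'; simp at hright'
        · refine ⟨y, ?_, rfl⟩
          rw [mem_FS] at hF
          obtain ⟨i, hi⟩ := hF
          rw [hright i y (by rw [hi, h]), hB0]
    rw [heq, ← left_right_balance C hlen]

include hr in
/-- key fact 3: a cycle missing the blob covers at most one left vertex. -/
lemma cyc3 (hemp : FS C ∩ B0 r = ∅) : (FS C ∩ Lefts r).card ≤ 1 := by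
  rcases Nat.lt_or_ge C.len 2 with hlen | hlen
  · calc (FS C ∩ Lefts r).card ≤ (FS C).card := card_le_card inter_subset_left
      _ ≤ 1 := FS_card_one C hlen
  · obtain ⟨A, B, hAlt, hBlt, hleft, hright⟩ := cycle_struct hr C hlen
    have hBne : B ≠ 0 := by
      intro hB0
      -- there is a right vertex
      obtain ⟨i0, y0, hi0⟩ : ∃ i y, C.f i = Sum.inr y := by
        rcases adj_cases (C.adj hlen 0) with ⟨x, y, h1, h2, _⟩ | ⟨x, y, h1, h2, _⟩
        · exact ⟨0 + 1, y, h2⟩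
        · exact ⟨0, y, h1⟩
      have : Sum.inr y0 ∈ FS C ∩ B0 r := by
        rw [mem_inter, mem_FS, mem_B0]
        exact ⟨⟨i0, hi0⟩, y0, by rw [hright i0 y0 hi0, hB0], rfl⟩
      rw [hemp] at this
      exact absurd this (notMem_empty _)
    have hrcard : ((FS C).filter (fun v => v.isRight)).card ≤ 1 := by
      rw [card_le_one]
      intro u hu v hv
      rw [mem_filter, mem_FS] at hu hv
      obtain ⟨⟨i, hi⟩, hur⟩ := hu
      obtain ⟨⟨j, hj⟩, hvr⟩ := hv
      obtain ⟨y, rfl⟩ := Sum.isRight_iff.mp hur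
      obtain ⟨y', rfl⟩ := Sum.isRight_iff.mp hvr
      have hy : bcl r y = B := hright i y hi
      have hy' : bcl r y' = B := hright j y' hj
      have hyy : y = y' := by
        have hb := y.isLt
        have hb' := y'.isLt
        have hrr := rr_aux (show 1 ≤ r by omega)
        apply Fin.ext
        unfold bcl at hy hy'
        split at hy <;> split at hy' <;> omega
      rw [hyy]
    calc (FS C ∩ Lefts r).card = ((FS C).filter (fun v => v.isRight)).card :=
        left_right_balance C hlen
      _ ≤ 1 := hrcard

end Cycle2

lemma card_B0 {r : ℕ} (hr : 2 ≤ r) : (B0 r).card = r * r - r + 1 := by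
  have hrr := rr_aux (show 1 ≤ r by omega)
  rw [B0, card_image_of_injective _ Sum.inr_injective]
  have : (univ : Finset (Fin (r * r))).filter (fun y => bcl r y = 0)
      = (univ : Finset (Fin (r * r))).filter (fun y => y.val < r * (r - 1) + 1) := by
    apply filter_congr
    intro y _
    unfold bcl
    constructor
    · intro h; split at h <;> [omega; (exfalso; have := y.isLt; omega)]
    · intro h; split <;> omega
  rw [this]
  have hcard : ((univ : Finset (Fin (r * r))).filter
      (fun y => y.val < r * (r - 1) + 1)).card = r * (r - 1) + 1 := by
    have hcard2 : ((univ : Finset (Fin (r * r))).filter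
        (fun y => y.val < r * (r - 1) + 1)).card = (Finset.range (r * (r - 1) + 1)).card := by
      apply card_bij (fun y _ => y.val)
      · intro y hy; rw [mem_filter] at hy; rw [mem_range]; exact hy.2
      · intro a _ b _ h; exact Fin.ext h
      · intro v hv
        rw [mem_range] at hv
        exact ⟨⟨v, by omega⟩, by rw [mem_filter]; exact ⟨mem_univ _, hv⟩, rfl⟩
    rw [hcard2, card_range]
  rw [hcard]
  omega

lemma card_Lefts {r : ℕ} : (Lefts r).card = r * r := by
  rw [Lefts, card_image_of_injective _ Sum.inl_injective, card_univ, Fintype.card_fin]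

end LBAux

open LBAux Finset in
/-- Lower bound construction: for every `r ≥ 2` there is an `r`-edge-colouring
of `K_{r·r, r·r}` which cannot be partitioned into fewer than `2r - 1`
vertex-disjoint monochromatic cycles. -/
theorem lower_bound_construction (r : ℕ) (hr : 2 ≤ r) :
    ∃ χ : Fin (r * r) → Fin (r * r) → Fin r,
      ∀ (k : ℕ) (C : Fin k → MonoCycle (r * r) r χ),
        (∀ i j, i ≠ j → Disjoint (Set.range (C i).f) (Set.range (C j).f)) →
        (⋃ i, Set.range (C i).f) = Set.univ →
        2 * r - 1 ≤ k := by
  classical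
  refine ⟨chi r, fun k C hdisj hcover => ?_⟩
  have hrr := rr_aux (show 1 ≤ r by omega)
  -- the finsets of the cycles partition everything
  have hmemrange : ∀ i v, v ∈ FS (C i) ↔ v ∈ Set.range (C i).f := by
    intro i v
    rw [mem_FS, Set.mem_range]
  have hFdisj : ∀ i j, i ≠ j → Disjoint (FS (C i)) (FS (C j)) := by
    intro i j hij
    rw [Finset.disjoint_left]
    intro v hvi hvj
    exact Set.disjoint_left.mp (hdisj i j hij) ((hmemrange i v).mp hvi) ((hmemrange j v).mp hvj)
  have hsum : ∀ T : Finset (Fin (r * r) ⊕ Fin (r * r)),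
      ∑ i, (FS (C i) ∩ T).card = T.card := by
    intro T
    have hT : T = (univ : Finset (Fin k)).biUnion (fun i => FS (C i) ∩ T) := by
      ext v
      simp only [mem_biUnion, mem_univ, true_and, mem_inter]
      constructor
      · intro hv
        have : v ∈ ⋃ i, Set.range (C i).f := by rw [hcover]; trivial
        obtain ⟨_, ⟨i, rfl⟩, hvi⟩ := this
        exact ⟨i, (hmemrange i v).mpr hvi, hv⟩
      · rintro ⟨i, _, hv⟩; exact hv
    have hcb := card_biUnion (s := (univ : Finset (Fin k)))
      (t := fun i => FS (C i) ∩ T)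
      (fun i _ j _ hij => disjoint_of_subset_left inter_subset_left
        (disjoint_of_subset_right inter_subset_left (hFdisj i j hij)))
    rw [← hcb, ← hT]
  -- split into cycles meeting the blob and the rest
  set S : Finset (Fin k) := univ.filter (fun i => (FS (C i) ∩ B0 r).Nonempty) with hS
  have hsplit0 : ∑ i ∈ S, (FS (C i) ∩ B0 r).card = r * r - r + 1 := by
    have := hsum (B0 r)
    rw [← sum_filter_add_sum_filter_not univ (fun i => (FS (C i) ∩ B0 r).Nonempty)] at this
    have hz : ∑ i ∈ univ.filter (fun i => ¬(FS (C i) ∩ B0 r).Nonempty),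
        (FS (C i) ∩ B0 r).card = 0 := by
      apply sum_eq_zero
      intro i hi
      rw [mem_filter, not_nonempty_iff_eq_empty] at hi
      rw [hi.2, card_empty]
    rw [hz, add_zero] at this
    rw [hS, this, card_B0 hr]
  -- |S| ≥ r
  have hScard : r ≤ S.card := by
    have hle : r * r - r + 1 ≤ S.card * r := by
      rw [← hsplit0]
      calc ∑ i ∈ S, (FS (C i) ∩ B0 r).card ≤ ∑ _i ∈ S, r :=
        sum_le_sum (fun i _ => cyc1 hr (C i))
        _ = S.card * r := by rw [sum_const, smul_eq_mul]
    by_contra hlt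
    push_neg at hlt
    have h1 : S.card * r ≤ (r - 1) * r := Nat.mul_le_mul_right r (by omega)
    have h2 : (r - 1) * r + r = r * r := by
      rw [Nat.mul_comm (r - 1) r]; exact hrr
    omega
  -- left vertices covered by S-cycles
  have hSlefts : ∑ i ∈ S, (FS (C i) ∩ Lefts r).card ≤ r * r - r + 1 := by
    rw [← hsplit0]
    apply sum_le_sum
    intro i hi
    rw [hS, mem_filter] at hi
    exact cyc2 hr (C i) hi.2
  -- left vertices covered by non-S cycles
  have hLsum : ∑ i, (FS (C i) ∩ Lefts r).card = r * r := by
    rw [hsum (Lefts r), card_Lefts]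
  have hnotS : ∑ i ∈ univ.filter (fun i => ¬(FS (C i) ∩ B0 r).Nonempty),
      (FS (C i) ∩ Lefts r).card ≤ (univ.filter (fun i => ¬(FS (C i) ∩ B0 r).Nonempty)).card := by
    calc ∑ i ∈ univ.filter (fun i => ¬(FS (C i) ∩ B0 r).Nonempty), (FS (C i) ∩ Lefts r).card
        ≤ ∑ _i ∈ univ.filter (fun i => ¬(FS (C i) ∩ B0 r).Nonempty), 1 := by
          apply sum_le_sum
          intro i hi
          rw [mem_filter, not_nonempty_iff_eq_empty] at hi
          exact cyc3 hr (C i) hi.2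
      _ = _ := by rw [sum_const, smul_eq_mul, mul_one]
  have htot : ∑ i ∈ S, (FS (C i) ∩ Lefts r).card
      + ∑ i ∈ univ.filter (fun i => ¬(FS (C i) ∩ B0 r).Nonempty), (FS (C i) ∩ Lefts r).card
      = r * r := by
    rw [hS, sum_filter_add_sum_filter_not, hLsum]
  have hcards : S.card + (univ.filter (fun i => ¬(FS (C i) ∩ B0 r).Nonempty)).card = k := by
    rw [hS, card_filter_add_card_filter_not, card_univ, Fintype.card_fin]
  omega
end
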